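/- arXiv:1808.04220 — 8 statements merged into one kernel-verified Lean document; each statement's English description precedes it below -/
import Mathlib

section
/- Let V be a finite set, let V₀ ⊆ V, and let g be any function from subsets of V to ℚ satisfying g(W) = g(W ∩ V₀) for every W ⊆ V. Then (1/(|V|+1)) · Σ_{W ⊆ V} g(W)/C(|V|,|W|) = (1/(|V₀|+1)) · Σ_{W₀ ⊆ V₀} g(W₀)/C(|V₀|,|W₀|). (Taking g(W) = β̃_i(C[W]) for a simplicial complex C whose vertices all lie in V₀, this says that the τ-vector of C is independent of whether it is computed with respect to the ground set V or with respect to V₀.) -/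
open Finset

lemma tau_arith (n k : ℕ) (hk : k ≤ n) :
    ((n : ℚ) + 2)⁻¹ * ((((n+1).choose k : ℚ))⁻¹ + (((n+1).choose (k+1) : ℚ))⁻¹)
      = ((n : ℚ) + 1)⁻¹ * ((n.choose k : ℚ))⁻¹ := by
  have ha : (n.choose k : ℚ) ≠ 0 := by
    exact_mod_cast (Nat.choose_pos hk).ne'
  have hb : (((n+1).choose k : ℚ)) ≠ 0 := by
    exact_mod_cast (Nat.choose_pos (hk.trans (Nat.le_succ n))).ne'
  have hc : (((n+1).choose (k+1) : ℚ)) ≠ 0 := by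
    exact_mod_cast (Nat.choose_pos (Nat.succ_le_succ hk)).ne'
  have h1 : ((n : ℚ) + 1) * (n.choose k : ℚ) = ((n+1).choose (k+1) : ℚ) * ((k : ℚ) + 1) := by
    exact_mod_cast Nat.add_one_mul_choose_eq n k
  have h2 : ((n+1).choose (k+1) : ℚ) * ((k : ℚ) + 1)
      = ((n+1).choose k : ℚ) * ((n : ℚ) + 1 - (k : ℚ)) := by
    have := Nat.choose_succ_right_eq (n+1) k
    have hsub : ((n + 1 - k : ℕ) : ℚ) = (n : ℚ) + 1 - (k : ℚ) := by
      push_cast [Nat.cast_sub (hk.trans (Nat.le_succ n))]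
      ring
    calc ((n+1).choose (k+1) : ℚ) * ((k : ℚ) + 1)
          = (((n+1).choose (k+1) * (k+1) : ℕ) : ℚ) := by push_cast; ring
        _ = (((n+1).choose k * (n + 1 - k) : ℕ) : ℚ) := by rw [this]
        _ = ((n+1).choose k : ℚ) * ((n : ℚ) + 1 - (k : ℚ)) := by
              push_cast [Nat.cast_sub (hk.trans (Nat.le_succ n))]; ring
  have hn1 : ((n : ℚ) + 1) ≠ 0 := by positivity
  have hn2 : ((n : ℚ) + 2) ≠ 0 := by positivity
  field_simp
  ring_nf
  ring_nf at h1 h2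
  nlinarith [h1, h2, mul_pos (mul_pos (show (0:ℚ) < (n:ℚ)+1 by positivity)
    (show (0:ℚ) < ((n+1).choose k : ℚ) from lt_of_le_of_ne (by positivity) (Ne.symm hb)))
    (show (0:ℚ) < ((n+1).choose (k+1) : ℚ) from lt_of_le_of_ne (by positivity) (Ne.symm hc))]

lemma tau_step {α : Type*} [DecidableEq α] (B : Finset α) (a : α) (ha : a ∉ B)
    (g : Finset α → ℚ) (hg : ∀ W ⊆ insert a B, g W = g (W ∩ B)) :
    (((insert a B).card : ℚ) + 1)⁻¹ *
        ∑ W ∈ (insert a B).powerset, g W / ((insert a B).card.choose W.card : ℚ)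
      = ((B.card : ℚ) + 1)⁻¹ * ∑ W ∈ B.powerset, g W / (B.card.choose W.card : ℚ) := by
  rw [Finset.sum_powerset_insert ha, card_insert_of_notMem ha]
  rw [mul_add, mul_sum, mul_sum, ← Finset.sum_add_distrib, mul_sum]
  refine Finset.sum_congr rfl fun W hW => ?_
  rw [mem_powerset] at hW
  have hWa : a ∉ W := fun h => ha (hW h)
  have hgW : g (insert a W) = g W := by
    rw [hg (insert a W) (insert_subset_insert a hW)]
    congr 1
    rw [insert_inter_of_notMem ha, inter_eq_left.mpr hW]
  rw [hgW, card_insert_of_notMem hWa]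
  have hk : W.card ≤ B.card := card_le_card hW
  have := tau_arith B.card W.card hk
  push_cast at this ⊢
  have expand : ((B.card : ℚ) + 1 + 1)⁻¹ * (g W / ((B.card+1).choose W.card : ℚ))
      + ((B.card : ℚ) + 1 + 1)⁻¹ * (g W / ((B.card+1).choose (W.card+1) : ℚ))
      = g W * (((B.card : ℚ) + 2)⁻¹ *
        ((((B.card+1).choose W.card : ℚ))⁻¹ + (((B.card+1).choose (W.card+1) : ℚ))⁻¹)) := by
    ring
  rw [expand, this]
  ring

lemma tau_union {α : Type*} [DecidableEq α] (V₀ : Finset α) (s : Finset α)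
    (hdis : Disjoint s V₀) (g : Finset α → ℚ)
    (hg : ∀ W ⊆ V₀ ∪ s, g W = g (W ∩ V₀)) :
    (((V₀ ∪ s).card : ℚ) + 1)⁻¹ *
        ∑ W ∈ (V₀ ∪ s).powerset, g W / ((V₀ ∪ s).card.choose W.card : ℚ)
      = ((V₀.card : ℚ) + 1)⁻¹ * ∑ W₀ ∈ V₀.powerset, g W₀ / (V₀.card.choose W₀.card : ℚ) := by
  induction s using Finset.induction_on with
  | empty => simp
  | @insert a s has ih =>
    have hdis' : Disjoint s V₀ := (Finset.disjoint_insert_left.mp hdis).2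
    have haV₀ : a ∉ V₀ := (Finset.disjoint_insert_left.mp hdis).1
    have haB : a ∉ V₀ ∪ s := by simp [haV₀, has]
    have hins : V₀ ∪ insert a s = insert a (V₀ ∪ s) := by
      ext x; simp [or_comm, or_left_comm, or_assoc]
    have hg' : ∀ W ⊆ insert a (V₀ ∪ s), g W = g (W ∩ (V₀ ∪ s)) := by
      intro W hW
      have h1 : W ⊆ V₀ ∪ insert a s := by rwa [hins]
      have h2 : W ∩ (V₀ ∪ s) ⊆ V₀ ∪ insert a s := by
        refine (inter_subset_right).trans ?_
        exact union_subset_union_right (subset_insert a s)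
      rw [hg W h1, hg _ h2]
      congr 1
      rw [inter_assoc]
      congr 1
      exact (Finset.inter_eq_right.mpr Finset.subset_union_left).symm
    have hgs : ∀ W ⊆ V₀ ∪ s, g W = g (W ∩ V₀) := fun W hW =>
      hg W (hW.trans (union_subset_union_right (subset_insert a s)))
    rw [hins, tau_step (V₀ ∪ s) a haB g hg', ih hdis' hgs]

/-- marginalization identity underlying the independence of the
τ-vector from the ground set. -/
theorem tau_ground_set_independent {α : Type*} [DecidableEq α]
    (V V₀ : Finset α) (hsub : V₀ ⊆ V)
    (g : Finset α → ℚ) (hg : ∀ W ⊆ V, g W = g (W ∩ V₀)) :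
    ((V.card : ℚ) + 1)⁻¹ * ∑ W ∈ V.powerset, g W / (V.card.choose W.card : ℚ)
      = ((V₀.card : ℚ) + 1)⁻¹ *
          ∑ W₀ ∈ V₀.powerset, g W₀ / (V₀.card.choose W₀.card : ℚ) := by
  have hV : V = V₀ ∪ (V \ V₀) := by
    rw [Finset.union_sdiff_of_subset hsub]
  rw [hV]
  exact tau_union V₀ (V \ V₀) (Finset.sdiff_disjoint) g (by rwa [← hV])
end

section
/- Let G be a finite simple graph on n vertices with vertex ordering v₁,…,v_n and in-degree sequence (δ₁,…,δ_n). Then τ₀(G) ≤ 1/(n+1) + Σ_{i=1}^{n} 1/((δ_i+1)(δ_i+2)) − 1, with equality if and only if the ordering v₁,…,v_n is a perfect elimination ordering of G. -/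
open Finset

/-- `τ₀` of a finite simple graph. -/
noncomputable def tau0 {V : Type*} [Fintype V] (G : SimpleGraph V) : ℚ :=
  ((Fintype.card V : ℚ) + 1)⁻¹ *
    ∑ W : Finset V,
      (if W.Nonempty then (Nat.card (G.induce (↑W : Set V)).ConnectedComponent : ℚ) - 1 else 0) /
        ((Fintype.card V).choose W.card : ℚ)

lemma hockey (t m : ℕ) : ∑ r ∈ range (m+1), (t+r).choose t = (t+m+1).choose (t+1) := by
  have h := Nat.sum_Icc_choose (t+m) t
  rw [show Icc t (t+m) = Ico t (t+m+1) by rw [Finset.Ico_add_one_right_eq_Icc], Finset.sum_Ico_eq_sum_range, show t+m+1-t = m+1 by omega] at h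
  simpa using h

lemma Tsum (t m : ℕ) :
    ∑ r ∈ range (m+1), (m+1-r) * (t+r).choose t = (t+m+2).choose (t+2) := by
  induction m with
  | zero => simp
  | succ m ih =>
    have step : ∑ r ∈ range (m+2), (m+2-r) * (t+r).choose t
        = (∑ r ∈ range (m+2), (m+1-r) * (t+r).choose t)
          + ∑ r ∈ range (m+2), (t+r).choose t := by
      rw [← Finset.sum_add_distrib]
      refine Finset.sum_congr rfl fun r hr => ?_
      have : r ≤ m + 1 := by simpa [Nat.lt_succ_iff] using hr
      have h2 : m + 2 - r = (m + 1 - r) + 1 := by omega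
      rw [h2, add_mul, one_mul]
    have last : ∑ r ∈ range (m+2), (m+1-r) * (t+r).choose t
        = ∑ r ∈ range (m+1), (m+1-r) * (t+r).choose t := by
      rw [Finset.sum_range_succ]
      simp
    rw [step, last, ih, hockey t (m+1)]
    have h3 : t + (m+1) + 1 = t + m + 2 := by omega
    rw [h3, show t + (m+1) + 2 = (t+m+2) + 1 by omega,
      show (t:ℕ) + 2 = (t+1) + 1 from rfl, Nat.choose_succ_succ (t+m+2) (t+1), Nat.succ_eq_add_one]
    omega

lemma termid (j k t : ℕ) :
    (((j+k).choose j : ℚ)) / (((j+k+t+1).choose (j+1) : ℚ))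
      = ((j:ℚ)+1) * ((k+t).choose t : ℚ) * (Nat.factorial (j+k) : ℚ)
          * (Nat.factorial t : ℚ) / (Nat.factorial (j+k+t+1) : ℚ) := by
  rw [Nat.cast_choose ℚ (by omega : j ≤ j + k),
      Nat.cast_choose ℚ (by omega : j+1 ≤ j + k + t + 1),
      Nat.cast_choose ℚ (by omega : t ≤ k + t),
      show j + k - j = k by omega, show j + k + t + 1 - (j+1) = k + t by omega,
      show k + t - t = k by omega,
      show Nat.factorial (j+1) = (j+1) * Nat.factorial j from rfl]
  have h1 : (Nat.factorial j : ℚ) ≠ 0 := by positivity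
  have h2 : (Nat.factorial k : ℚ) ≠ 0 := by positivity
  have h3 : (Nat.factorial t : ℚ) ≠ 0 := by positivity
  have h4 : (Nat.factorial (j+k) : ℚ) ≠ 0 := by positivity
  have h5 : (Nat.factorial (j+k+t+1) : ℚ) ≠ 0 := by positivity
  have h6 : (Nat.factorial (k+t) : ℚ) ≠ 0 := by positivity
  field_simp
  push_cast
  ring

lemma key_sum (m t : ℕ) :
    ∑ j ∈ range (m+1), ((m.choose j : ℚ)) / (((m+t+1).choose (j+1) : ℚ))
      = ((m:ℚ)+t+2) / (((t:ℚ)+1)*((t:ℚ)+2)) := by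
  have step : ∀ j ∈ range (m+1),
      ((m.choose j : ℚ)) / (((m+t+1).choose (j+1) : ℚ))
        = (((j:ℚ)+1) * ((m-j+t).choose t : ℚ))
            * ((Nat.factorial m : ℚ) * (Nat.factorial t : ℚ) / (Nat.factorial (m+t+1) : ℚ)) := by
    intro j hj
    have hjm : j ≤ m := by simpa [Nat.lt_succ_iff] using hj
    have hk : m = j + (m - j) := by omega
    calc ((m.choose j : ℚ)) / (((m+t+1).choose (j+1) : ℚ))
        = (((j+(m-j)).choose j : ℚ)) / (((j+(m-j)+t+1).choose (j+1) : ℚ)) := by rw [← hk]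
      _ = ((j:ℚ)+1) * (((m-j)+t).choose t : ℚ) * (Nat.factorial (j+(m-j)) : ℚ)
            * (Nat.factorial t : ℚ) / (Nat.factorial (j+(m-j)+t+1) : ℚ) := termid j (m-j) t
      _ = (((j:ℚ)+1) * ((m-j+t).choose t : ℚ))
            * ((Nat.factorial m : ℚ) * (Nat.factorial t : ℚ) / (Nat.factorial (m+t+1) : ℚ)) := by
          rw [← hk]; ring
  rw [Finset.sum_congr rfl step, ← Finset.sum_mul]
  have hnat : ∑ j ∈ range (m+1), (j+1) * ((m-j+t).choose t) = (t+m+2).choose (t+2) := by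
    rw [← Tsum t m, ← Finset.sum_range_reflect (fun r => (m+1-r) * (t+r).choose t) (m+1)]
    refine Finset.sum_congr rfl fun j hj => ?_
    have hjm : j ≤ m := by simpa [Nat.lt_succ_iff] using hj
    have e1 : m+1-(m+1-1-j) = j+1 := by omega
    have e2 : t+(m+1-1-j) = m-j+t := by omega
    rw [e1, e2]
  have hre : ∑ j ∈ range (m+1), (((j:ℚ)+1) * ((m-j+t).choose t : ℚ))
      = ((m+t+2).choose (t+2) : ℚ) := by
    rw [show m + t + 2 = t + m + 2 by omega, ← hnat]
    push_cast
    rfl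
  rw [hre, Nat.cast_choose ℚ (by omega : t + 2 ≤ m + t + 2),
    show m + t + 2 - (t+2) = m by omega,
    show Nat.factorial (m+t+2) = (m+t+2) * Nat.factorial (m+t+1) from rfl,
    show Nat.factorial (t+2) = (t+2) * ((t+1) * Nat.factorial t) from rfl]
  have h1 : (Nat.factorial m : ℚ) ≠ 0 := by positivity
  have h3 : (Nat.factorial t : ℚ) ≠ 0 := by positivity
  have h5 : (Nat.factorial (m+t+1) : ℚ) ≠ 0 := by positivity
  field_simp
  push_cast
  ring

lemma sum_over_subsets {n : ℕ} (v : Fin n) (T : Finset (Fin n)) (hv : v ∉ T) :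
    ∑ W : Finset (Fin n), (if v ∈ W ∧ Disjoint W T then ((n.choose W.card : ℚ))⁻¹ else 0)
      = ((n:ℚ)+1) / (((T.card:ℚ)+1)*((T.card:ℚ)+2)) := by
  classical
  set t := T.card with ht
  have htn : t + 1 ≤ n := by
    have : T ⊆ Finset.univ.erase v := fun x hx => by
      refine Finset.mem_erase.2 ⟨?_, Finset.mem_univ x⟩
      rintro rfl; exact hv hx
    have h2 := Finset.card_le_card this
    rw [Finset.card_erase_of_mem (Finset.mem_univ v), Finset.card_univ, Fintype.card_fin] at h2
    have h3 : 0 < n := v.pos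
    omega
  set m := n - 1 - t with hm
  have hn : n = m + t + 1 := by omega
  set R : Finset (Fin n) := (Finset.univ.erase v) \ T with hR
  have hRcard : R.card = m := by
    rw [hR, Finset.card_sdiff_of_subset (fun x hx => by
      refine Finset.mem_erase.2 ⟨?_, Finset.mem_univ x⟩
      rintro rfl; exact hv hx)]
    simp [Finset.card_erase_of_mem, Finset.card_univ]
    omega
  have hbij : ∑ W : Finset (Fin n), (if v ∈ W ∧ Disjoint W T then ((n.choose W.card : ℚ))⁻¹ else 0)
      = ∑ U ∈ R.powerset, ((n.choose (U.card + 1) : ℚ))⁻¹ := by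
    rw [← Finset.sum_filter]
    refine Finset.sum_nbij' (fun W => W.erase v) (fun U => insert v U) ?_ ?_ ?_ ?_ ?_
    · intro W hW
      simp only [Finset.mem_filter, Finset.mem_univ, true_and] at hW
      rw [Finset.mem_powerset]
      intro x hx
      rw [Finset.mem_erase] at hx
      refine Finset.mem_sdiff.2 ⟨Finset.mem_erase.2 ⟨hx.1, Finset.mem_univ x⟩, ?_⟩
      exact fun hxT => (Finset.disjoint_left.1 hW.2) hx.2 hxT
    · intro U hU
      rw [Finset.mem_powerset] at hU
      have hvU : v ∉ U := fun h => by
        have := hU h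
        rw [hR, Finset.mem_sdiff, Finset.mem_erase] at this
        exact this.1.1 rfl
      refine Finset.mem_filter.2 ⟨Finset.mem_univ _, Finset.mem_insert_self _ _, ?_⟩
      rw [Finset.disjoint_left]
      intro x hx hxT
      rcases Finset.mem_insert.1 hx with rfl | hxU
      · exact hv hxT
      · have := hU hxU
        rw [hR, Finset.mem_sdiff] at this
        exact this.2 hxT
    · intro W hW
      simp only [Finset.mem_filter, Finset.mem_univ, true_and] at hW
      exact Finset.insert_erase hW.1
    · intro U hU
      rw [Finset.mem_powerset] at hU
      have hvU : v ∉ U := fun h => by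
        have := hU h
        rw [hR, Finset.mem_sdiff, Finset.mem_erase] at this
        exact this.1.1 rfl
      exact Finset.erase_insert hvU
    · intro W hW
      simp only [Finset.mem_filter, Finset.mem_univ, true_and] at hW
      rw [Finset.card_erase_of_mem hW.1]
      have h1 : W.card ≠ 0 := fun h => by
        rw [Finset.card_eq_zero] at h; subst h; simpa using hW.1
      rw [show W.card - 1 + 1 = W.card by omega]
  rw [hbij, Finset.sum_powerset_apply_card (fun c => ((n.choose (c + 1) : ℚ))⁻¹), hRcard]
  have : ∑ j ∈ range (m+1), m.choose j • ((n.choose (j + 1) : ℚ))⁻¹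
      = ∑ j ∈ range (m+1), ((m.choose j : ℚ)) / (((m+t+1).choose (j+1) : ℚ)) := by
    refine Finset.sum_congr rfl fun j hj => ?_
    rw [← hn, nsmul_eq_mul, div_eq_mul_inv]
  rw [this, key_sum m t]
  rw [hn]
  push_cast
  ring

lemma walk_cons_of_ne {V : Type*} {H : SimpleGraph V} {x y : V} (w : H.Walk x y) (hxy : x ≠ y) :
    ∃ (z : V) (h : H.Adj x z) (r : H.Walk z y), w = SimpleGraph.Walk.cons h r ∧
      r.length + 1 = w.length := by
  cases w with
  | nil => exact absurd rfl hxy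
  | cons h r => exact ⟨_, h, r, rfl, by simp⟩

lemma peo_walk {n : ℕ} {G : SimpleGraph (Fin n)}
    (hPEO : ∀ i : Fin n, G.IsClique {j : Fin n | j < i ∧ G.Adj j i})
    {W : Set (Fin n)} :
    ∀ (L : ℕ) (v u : W) (p : (G.induce W).Walk v u), p.length ≤ L → (u : Fin n) < (v : Fin n) →
      ∃ x : W, (G.induce W).Adj x v ∧ (x : Fin n) < (v : Fin n) := by
  intro L
  induction L with
  | zero =>
    intro v u p hlen hlt
    have : (v : Fin n) = u := congrArg _ (SimpleGraph.Walk.eq_of_length_eq_zero (Nat.le_zero.1 hlen))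
    omega
  | succ L ih =>
    intro v u p hlen hlt
    have hne : v ≠ u := fun h => by subst h; exact absurd hlt (lt_irrefl _)
    set q := p.bypass with hqdef
    have hq : q.IsPath := p.bypass_isPath
    have hqlen : q.length ≤ p.length := p.length_bypass_le
    have hsupne : (v : Fin n) ∈ q.support.map Subtype.val :=
      List.mem_map_of_mem q.start_mem_support
    set F : Finset (Fin n) := (q.support.map Subtype.val).toFinset with hF
    have hFne : F.Nonempty := ⟨v, List.mem_toFinset.2 hsupne⟩
    set m : Fin n := F.max' hFne with hmdef
    have hmem_le : ∀ x : W, x ∈ q.support → (x : Fin n) ≤ m := fun x hx =>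
      F.le_max' _ (List.mem_toFinset.2 (List.mem_map_of_mem hx))
    have hm_mem : ∃ z : W, z ∈ q.support ∧ (z : Fin n) = m := by
      have h2 := List.mem_toFinset.mp (F.max'_mem hFne)
      rw [List.mem_map] at h2
      obtain ⟨z, hz1, hz2⟩ := h2
      exact ⟨z, hz1, hz2⟩
    have hvm : (v : Fin n) ≤ m := hmem_le v q.start_mem_support
    rcases eq_or_lt_of_le hvm with hvm' | hvm'
    · -- m = v : take first edge of q
      obtain ⟨b, hvb, r, hpr, -⟩ := walk_cons_of_ne q hne
      have hbr : b ∈ r.support := r.start_mem_support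
      have hvr : v ∉ r.support := by
        rw [hpr, SimpleGraph.Walk.cons_isPath_iff] at hq
        exact hq.2
      have hbv : b ≠ v := fun h => hvr (h ▸ hbr)
      have hble : (b : Fin n) ≤ m := hmem_le b (by rw [hpr]; simp [hbr])
      have : (b : Fin n) < (v : Fin n) := by
        rcases lt_or_eq_of_le (hvm' ▸ hble) with h | h
        · exact h
        · exact absurd (Subtype.ext h) hbv
      exact ⟨b, hvb.symm, this⟩
    · -- v < m : surgery at m
      obtain ⟨z, hzsup, hzval⟩ := hm_mem
      have hzv : z ≠ v := fun h => by rw [h] at hzval; omega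
      have hzu : z ≠ u := fun h => by
        rw [h] at hzval
        have : (u : Fin n) < m := hlt.trans hvm'
        omega
      set q1 := q.takeUntil z hzsup with hq1def
      set q2 := q.dropUntil z hzsup with hq2def
      have hq1p : q1.IsPath := hq.takeUntil hzsup
      have hq2p : q2.IsPath := hq.dropUntil hzsup
      have hlen12 : q1.length + q2.length = q.length := by
        rw [← SimpleGraph.Walk.length_append, q.take_spec hzsup]
      obtain ⟨b, hzb, r2, he2, hl2⟩ := walk_cons_of_ne q2 hzu
      obtain ⟨a, hza, r1, he1, hl1⟩ := walk_cons_of_ne q1.reverse hzv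
      -- facts about a
      have hq1rp : q1.reverse.IsPath := hq1p.reverse
      rw [he1, SimpleGraph.Walk.cons_isPath_iff] at hq1rp
      have haz : a ≠ z := fun h => hq1rp.2 (h ▸ r1.start_mem_support)
      have haq : a ∈ q.support := by
        apply q.support_takeUntil_subset hzsup
        have : a ∈ q1.reverse.support := by
          rw [he1]; right; exact r1.start_mem_support
        rwa [SimpleGraph.Walk.support_reverse, List.mem_reverse] at this
      have haval : (a : Fin n) < m := by
        have h1 := hmem_le a haq
        have h2 : (a : Fin n) ≠ m := fun h => haz (Subtype.ext (h.trans hzval.symm))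
        omega
      -- facts about b
      have hq2p' := hq2p
      rw [he2, SimpleGraph.Walk.cons_isPath_iff] at hq2p'
      have hbz : b ≠ z := fun h => hq2p'.2 (h ▸ r2.start_mem_support)
      have hbq : b ∈ q.support := by
        apply q.support_dropUntil_subset hzsup
        show b ∈ q2.support
        rw [he2]; right; exact r2.start_mem_support
      have hbval : (b : Fin n) < m := by
        have h1 := hmem_le b hbq
        have h2 : (b : Fin n) ≠ m := fun h => hbz (Subtype.ext (h.trans hzval.symm))
        omega
      have hza' : G.Adj (z : Fin n) (a : Fin n) := hza
      have hzb' : G.Adj (z : Fin n) (b : Fin n) := hzb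
      have haS : (a : Fin n) ∈ {j : Fin n | j < m ∧ G.Adj j m} :=
        ⟨haval, by rw [← hzval]; exact hza'.symm⟩
      have hbS : (b : Fin n) ∈ {j : Fin n | j < m ∧ G.Adj j m} :=
        ⟨hbval, by rw [← hzval]; exact hzb'.symm⟩
      have hlenq1 : r1.length + 1 = q1.length := by
        rwa [SimpleGraph.Walk.length_reverse] at hl1
      by_cases hab : a = b
      · subst hab
        refine ih v u (r1.reverse.append r2) ?_ hlt
        rw [SimpleGraph.Walk.length_append, SimpleGraph.Walk.length_reverse]
        omega
      · have hGab : G.Adj (a : Fin n) (b : Fin n) :=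
          hPEO m haS hbS (fun h => hab (Subtype.ext h))
        have hHab : (G.induce W).Adj a b := hGab
        refine ih v u (r1.reverse.append (SimpleGraph.Walk.cons hHab r2)) ?_ hlt
        rw [SimpleGraph.Walk.length_append, SimpleGraph.Walk.length_reverse,
          SimpleGraph.Walk.length_cons]
        omega

open Classical in
noncomputable def minSet {n : ℕ} (G : SimpleGraph (Fin n)) (W : Finset (Fin n)) :
    Finset (Fin n) :=
  W.filter (fun v => ∃ hv : v ∈ (↑W : Set (Fin n)), ∀ (u : Fin n) (hu : u ∈ (↑W : Set (Fin n))),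
    (G.induce (↑W : Set (Fin n))).Reachable ⟨v, hv⟩ ⟨u, hu⟩ → v ≤ u)

open Classical in
noncomputable def candSet {n : ℕ} (G : SimpleGraph (Fin n)) (W : Finset (Fin n)) :
    Finset (Fin n) :=
  W.filter (fun v => (∃ u ∈ W, u < v) ∧ ∀ u ∈ W, u < v → ¬ G.Adj u v)

lemma mem_minSet {n : ℕ} {G : SimpleGraph (Fin n)} {W : Finset (Fin n)} {v : Fin n} :
    v ∈ minSet G W ↔ v ∈ W ∧ ∃ hv : v ∈ (↑W : Set (Fin n)),
      ∀ (u : Fin n) (hu : u ∈ (↑W : Set (Fin n))),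
        (G.induce (↑W : Set (Fin n))).Reachable ⟨v, hv⟩ ⟨u, hu⟩ → v ≤ u := by
  classical
  unfold minSet
  exact Finset.mem_filter

lemma mem_candSet {n : ℕ} {G : SimpleGraph (Fin n)} {W : Finset (Fin n)} {v : Fin n} :
    v ∈ candSet G W ↔ v ∈ W ∧ (∃ u ∈ W, u < v) ∧ ∀ u ∈ W, u < v → ¬ G.Adj u v := by
  classical
  unfold candSet
  exact Finset.mem_filter

lemma card_components {n : ℕ} (G : SimpleGraph (Fin n)) (W : Finset (Fin n)) :
    Nat.card (G.induce (↑W : Set (Fin n))).ConnectedComponent = (minSet G W).card := by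
  classical
  rw [← Nat.card_eq_finsetCard]
  refine (Nat.card_eq_of_bijective
    (fun x : {y // y ∈ minSet G W} =>
      (G.induce (↑W : Set (Fin n))).connectedComponentMk
        ⟨x.1, Finset.mem_coe.2 (mem_minSet.1 x.2).1⟩) ⟨?_, ?_⟩).symm
  · -- injective
    rintro ⟨x, hx⟩ ⟨y, hy⟩ hxy
    rw [mem_minSet] at hx hy
    obtain ⟨hxW, hvx, hxmin⟩ := hx
    obtain ⟨hyW, hvy, hymin⟩ := hy
    have hreach := (SimpleGraph.ConnectedComponent.eq).1 hxy
    have h1 : x ≤ y := hxmin y (Finset.mem_coe.2 hyW) hreach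
    have h2 : y ≤ x := hymin x (Finset.mem_coe.2 hxW) hreach.symm
    exact Subtype.ext (le_antisymm h1 h2)
  · -- surjective
    intro c
    obtain ⟨z, hz⟩ := c.exists_rep
    set S : Finset (Fin n) := W.filter (fun u => ∃ hu : u ∈ (↑W : Set (Fin n)),
      (G.induce (↑W : Set (Fin n))).Reachable z ⟨u, hu⟩) with hS
    have hzS : (z : Fin n) ∈ S := by
      refine Finset.mem_filter.2 ⟨Finset.mem_coe.1 z.2, z.2, ?_⟩
      exact SimpleGraph.Reachable.refl _
    have hSne : S.Nonempty := ⟨z, hzS⟩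
    set a := S.min' hSne with ha
    have haS : a ∈ S := S.min'_mem hSne
    rw [hS, Finset.mem_filter] at haS
    obtain ⟨haW, hac, hreach⟩ := haS
    have hamin : a ∈ minSet G W := by
      rw [mem_minSet]
      refine ⟨haW, hac, fun u hu hr => ?_⟩
      refine S.min'_le u ?_
      exact Finset.mem_filter.2 ⟨Finset.mem_coe.1 hu, hu, hreach.trans hr⟩
    refine ⟨⟨a, hamin⟩, ?_⟩
    rw [← hz]
    exact SimpleGraph.ConnectedComponent.sound hreach.symm

lemma min'_mem_minSet {n : ℕ} (G : SimpleGraph (Fin n)) {W : Finset (Fin n)}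
    (hW : W.Nonempty) : W.min' hW ∈ minSet G W := by
  rw [mem_minSet]
  refine ⟨W.min'_mem hW, Finset.mem_coe.2 (W.min'_mem hW), fun u hu _ => ?_⟩
  exact W.min'_le u (Finset.mem_coe.1 hu)

lemma min'_not_mem_candSet {n : ℕ} (G : SimpleGraph (Fin n)) {W : Finset (Fin n)}
    (hW : W.Nonempty) : W.min' hW ∉ candSet G W := by
  rw [mem_candSet]
  rintro ⟨-, ⟨u, hu, hlt⟩, -⟩
  exact absurd (W.min'_le u hu) (not_le.2 hlt)

lemma minSet_erase_subset {n : ℕ} (G : SimpleGraph (Fin n)) {W : Finset (Fin n)}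
    (hW : W.Nonempty) : (minSet G W).erase (W.min' hW) ⊆ candSet G W := by
  intro v hv
  obtain ⟨hvne, hvmin⟩ := Finset.mem_erase.1 hv
  rw [mem_minSet] at hvmin
  obtain ⟨hvW, hvc, hmin⟩ := hvmin
  rw [mem_candSet]
  refine ⟨hvW, ⟨W.min' hW, W.min'_mem hW, lt_of_le_of_ne (W.min'_le v hvW) (Ne.symm hvne)⟩,
    fun u hu hlt hadj => ?_⟩
  have hreach : (G.induce (↑W : Set (Fin n))).Reachable ⟨v, hvc⟩ ⟨u, Finset.mem_coe.2 hu⟩ :=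
    SimpleGraph.Adj.reachable (by exact hadj.symm)
  exact absurd (hmin u (Finset.mem_coe.2 hu) hreach) (not_le.2 hlt)

lemma candSet_subset_minSet {n : ℕ} {G : SimpleGraph (Fin n)}
    (hPEO : ∀ i : Fin n, G.IsClique {j : Fin n | j < i ∧ G.Adj j i}) (W : Finset (Fin n)) :
    candSet G W ⊆ minSet G W := by
  intro v hv
  rw [mem_candSet] at hv
  obtain ⟨hvW, -, hnoadj⟩ := hv
  rw [mem_minSet]
  refine ⟨hvW, Finset.mem_coe.2 hvW, fun u hu hr => ?_⟩
  by_contra hle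
  have hlt : u < v := lt_of_not_ge hle
  obtain ⟨p⟩ := hr
  obtain ⟨x, hxadj, hxlt⟩ := peo_walk hPEO p.length ⟨v, Finset.mem_coe.2 hvW⟩ ⟨u, hu⟩ p le_rfl hlt
  have hxW : (x : Fin n) ∈ W := Finset.mem_coe.1 x.2
  exact hnoadj x hxW hxlt (by exact hxadj)

lemma bad_aux {n : ℕ} {G : SimpleGraph (Fin n)} {i u w : Fin n}
    (hau : G.Adj u i) (hw : w < i) (haw : G.Adj w i)
    (huw : u < w) (hnadj : ¬ G.Adj u w) :
    ∃ W : Finset (Fin n), W.Nonempty ∧ w ∈ candSet G W ∧ w ∉ minSet G W := by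
  refine ⟨{u, w, i}, ⟨u, by simp⟩, ?_, ?_⟩
  · rw [mem_candSet]
    refine ⟨by simp, ⟨u, by simp, huw⟩, ?_⟩
    intro x hx hxw hadj
    simp only [Finset.mem_insert, Finset.mem_singleton] at hx
    rcases hx with rfl | rfl | rfl
    · exact hnadj hadj
    · exact absurd hxw (lt_irrefl _)
    · exact absurd (hxw.trans hw) (lt_irrefl _)
  · rw [mem_minSet]
    rintro ⟨-, hvc, hmin⟩
    have hw' : w ∈ ({u,w,i} : Finset (Fin n)) := by simp
    have hi' : i ∈ ({u,w,i} : Finset (Fin n)) := by simp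
    have hu' : u ∈ ({u,w,i} : Finset (Fin n)) := by simp
    have h1 : (G.induce (↑({u,w,i} : Finset (Fin n)) : Set (Fin n))).Adj
        ⟨w, hvc⟩ ⟨i, Finset.mem_coe.2 hi'⟩ := haw
    have h2 : (G.induce (↑({u,w,i} : Finset (Fin n)) : Set (Fin n))).Adj
        ⟨i, Finset.mem_coe.2 hi'⟩ ⟨u, Finset.mem_coe.2 hu'⟩ := hau.symm
    have hr := (h1.reachable).trans h2.reachable
    exact absurd (hmin u (Finset.mem_coe.2 hu') hr) (not_le.2 huw)

lemma card_min_le_card_cand {n : ℕ} (G : SimpleGraph (Fin n)) {W : Finset (Fin n)}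
    (hW : W.Nonempty) : (minSet G W).card ≤ (candSet G W).card + 1 := by
  have h2 := Finset.card_le_card (minSet_erase_subset G hW)
  rw [Finset.card_erase_of_mem (min'_mem_minSet G hW)] at h2
  omega

lemma card_min_le_card_cand_strict {n : ℕ} (G : SimpleGraph (Fin n)) {W : Finset (Fin n)}
    (hW : W.Nonempty) {w : Fin n} (hc : w ∈ candSet G W) (hm : w ∉ minSet G W) :
    (minSet G W).card ≤ (candSet G W).card := by
  have h1 : (minSet G W).erase (W.min' hW) ⊆ (candSet G W).erase w := by
    intro x hx
    refine Finset.mem_erase.2 ⟨fun hxw => hm (hxw ▸ (Finset.mem_erase.1 hx).2 : w ∈ minSet G W),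
      minSet_erase_subset G hW hx⟩
  have h2 := Finset.card_le_card h1
  rw [Finset.card_erase_of_mem (min'_mem_minSet G hW), Finset.card_erase_of_mem hc] at h2
  have h3 : 1 ≤ (candSet G W).card := Finset.card_pos.2 ⟨w, hc⟩
  have h4 : 1 ≤ (minSet G W).card := Finset.card_pos.2 ⟨_, min'_mem_minSet G hW⟩
  omega

lemma card_cand_of_peo {n : ℕ} {G : SimpleGraph (Fin n)}
    (hPEO : ∀ i : Fin n, G.IsClique {j : Fin n | j < i ∧ G.Adj j i}) {W : Finset (Fin n)}
    (hW : W.Nonempty) : (candSet G W).card + 1 = (minSet G W).card := by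
  have heq : candSet G W = (minSet G W).erase (W.min' hW) := by
    apply Finset.Subset.antisymm
    · intro x hx
      refine Finset.mem_erase.2 ⟨fun hxm => ?_, candSet_subset_minSet hPEO W hx⟩
      exact min'_not_mem_candSet G hW (hxm ▸ hx)
    · exact minSet_erase_subset G hW
  rw [heq, Finset.card_erase_of_mem (min'_mem_minSet G hW)]
  have h4 : 1 ≤ (minSet G W).card := Finset.card_pos.2 ⟨_, min'_mem_minSet G hW⟩
  omega

noncomputable def b0 {n : ℕ} (G : SimpleGraph (Fin n)) (W : Finset (Fin n)) : ℚ :=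
  if W.Nonempty then (Nat.card (G.induce (↑W : Set (Fin n))).ConnectedComponent : ℚ) - 1 else 0

lemma candSet_empty {n : ℕ} (G : SimpleGraph (Fin n)) : candSet G ∅ = ∅ := by
  classical
  unfold candSet
  simp

lemma b0_le_cand {n : ℕ} (G : SimpleGraph (Fin n)) (W : Finset (Fin n)) :
    b0 G W ≤ ((candSet G W).card : ℚ) := by
  by_cases hW : W.Nonempty
  · rw [b0, if_pos hW, card_components]
    have h := card_min_le_card_cand G hW
    have h' : ((minSet G W).card : ℚ) ≤ ((candSet G W).card : ℚ) + 1 := by exact_mod_cast h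
    linarith
  · rw [b0, if_neg hW]
    positivity

lemma b0_eq_cand_of_peo {n : ℕ} {G : SimpleGraph (Fin n)}
    (hPEO : ∀ i : Fin n, G.IsClique {j : Fin n | j < i ∧ G.Adj j i}) (W : Finset (Fin n)) :
    b0 G W = ((candSet G W).card : ℚ) := by
  by_cases hW : W.Nonempty
  · rw [b0, if_pos hW, card_components]
    have h := card_cand_of_peo hPEO hW
    have h' : ((candSet G W).card : ℚ) + 1 = ((minSet G W).card : ℚ) := by exact_mod_cast h
    linarith
  · rw [b0, if_neg hW]
    rw [Finset.not_nonempty_iff_eq_empty] at hW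
    subst hW
    rw [candSet_empty]
    simp

lemma b0_lt_cand_of_bad {n : ℕ} {G : SimpleGraph (Fin n)} {W : Finset (Fin n)}
    (hW : W.Nonempty) {w : Fin n} (hc : w ∈ candSet G W) (hm : w ∉ minSet G W) :
    b0 G W < ((candSet G W).card : ℚ) := by
  rw [b0, if_pos hW, card_components]
  have h := card_min_le_card_cand_strict G hW hc hm
  have h' : ((minSet G W).card : ℚ) ≤ ((candSet G W).card : ℚ) := by exact_mod_cast h
  linarith

open Classical in
noncomputable def Aset {n : ℕ} (G : SimpleGraph (Fin n)) (v : Fin n) : Finset (Fin n) :=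
  Finset.univ.filter (fun u => u < v ∧ G.Adj u v)

lemma tele0 (k : ℕ) : ∑ i ∈ range k, (1:ℚ)/(((i:ℚ)+1)*((i:ℚ)+2)) = (k:ℚ)/((k:ℚ)+1) := by
  induction k with
  | zero => simp
  | succ k ih =>
    rw [Finset.sum_range_succ, ih]
    have h1 : ((k:ℚ)+1) ≠ 0 := by positivity
    have h2 : ((k:ℚ)+2) ≠ 0 := by positivity
    push_cast
    field_simp
    ring

lemma telescope (n : ℕ) :
    ∑ v : Fin n, ((n:ℚ)+1)/((((v:ℕ):ℚ)+1)*(((v:ℕ):ℚ)+2)) = (n:ℚ) := by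
  rw [Fin.sum_univ_eq_sum_range (fun i => ((n:ℚ)+1)/(((i:ℚ)+1)*((i:ℚ)+2)))]
  have : ∀ i ∈ range n, ((n:ℚ)+1)/(((i:ℚ)+1)*((i:ℚ)+2))
      = ((n:ℚ)+1) * ((1:ℚ)/(((i:ℚ)+1)*((i:ℚ)+2))) := by
    intro i _; ring
  rw [Finset.sum_congr rfl this, ← Finset.mul_sum, tele0]
  have h1 : ((n:ℚ)+1) ≠ 0 := by positivity
  field_simp

lemma sum_cand_eq {n : ℕ} (G : SimpleGraph (Fin n)) :
    ∑ W : Finset (Fin n), ((candSet G W).card : ℚ) / ((n.choose W.card : ℚ))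
      = (∑ v : Fin n, ((n:ℚ)+1) / ((((Aset G v).card : ℚ)+1) * (((Aset G v).card : ℚ)+2)))
        - (n:ℚ) := by
  classical
  have step1 : ∀ W : Finset (Fin n), ((candSet G W).card : ℚ) / ((n.choose W.card : ℚ))
      = ∑ v : Fin n, (if v ∈ candSet G W then ((n.choose W.card : ℚ))⁻¹ else 0) := by
    intro W
    rw [Finset.sum_ite_mem, Finset.univ_inter, Finset.sum_const, nsmul_eq_mul, div_eq_mul_inv]
  rw [Finset.sum_congr rfl (fun W _ => step1 W), Finset.sum_comm]
  have step3 : ∀ v : Fin n,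
      ∑ W : Finset (Fin n), (if v ∈ candSet G W then ((n.choose W.card : ℚ))⁻¹ else 0)
      = ((n:ℚ)+1) / ((((Aset G v).card : ℚ)+1) * (((Aset G v).card : ℚ)+2))
        - ((n:ℚ)+1) / ((((v:ℕ):ℚ)+1) * (((v:ℕ):ℚ)+2)) := by
    intro v
    set E : Finset (Fin n) := Finset.univ.filter (fun u => u < v) with hE
    have hdisjA : ∀ W : Finset (Fin n), Disjoint W (Aset G v) ↔
        ∀ u ∈ W, u < v → ¬ G.Adj u v := by
      intro W
      rw [Finset.disjoint_left]
      constructor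
      · intro h u hu hlt hadj
        exact h hu (by rw [Aset, Finset.mem_filter]; exact ⟨Finset.mem_univ _, hlt, hadj⟩)
      · intro h u hu hmem
        rw [Aset, Finset.mem_filter] at hmem
        exact h u hu hmem.2.1 hmem.2.2
    have hdisjE : ∀ W : Finset (Fin n), Disjoint W E ↔ ∀ u ∈ W, ¬ u < v := by
      intro W
      rw [Finset.disjoint_left]
      constructor
      · intro h u hu hlt
        exact h hu (by rw [hE, Finset.mem_filter]; exact ⟨Finset.mem_univ _, hlt⟩)
      · intro h u hu hmem
        rw [hE, Finset.mem_filter] at hmem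
        exact h u hu hmem.2
    have key : ∀ W : Finset (Fin n),
        (if v ∈ candSet G W then ((n.choose W.card : ℚ))⁻¹ else 0)
        = (if v ∈ W ∧ Disjoint W (Aset G v) then ((n.choose W.card : ℚ))⁻¹ else 0)
          - (if v ∈ W ∧ Disjoint W E then ((n.choose W.card : ℚ))⁻¹ else 0) := by
      intro W
      by_cases h2 : v ∈ W ∧ Disjoint W E
      · have h1 : v ∈ W ∧ Disjoint W (Aset G v) := by
          refine ⟨h2.1, (hdisjA W).2 fun u hu hlt _ => ?_⟩
          exact ((hdisjE W).1 h2.2) u hu hlt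
        have hnc : v ∉ candSet G W := by
          rw [mem_candSet]
          rintro ⟨-, ⟨u, hu, hlt⟩, -⟩
          exact ((hdisjE W).1 h2.2) u hu hlt
        rw [if_pos h1, if_pos h2, if_neg hnc]
        ring
      · by_cases h1 : v ∈ W ∧ Disjoint W (Aset G v)
        · have hc : v ∈ candSet G W := by
            rw [mem_candSet]
            refine ⟨h1.1, ?_, (hdisjA W).1 h1.2⟩
            by_contra hne
            push_neg at hne
            exact h2 ⟨h1.1, (hdisjE W).2 fun u hu hlt => absurd (hne u hu) (not_le.2 hlt)⟩
          rw [if_pos hc, if_pos h1, if_neg h2]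
          ring
        · have hnc : v ∉ candSet G W := by
            rw [mem_candSet]
            rintro ⟨hvW, -, hno⟩
            exact h1 ⟨hvW, (hdisjA W).2 hno⟩
          rw [if_neg hnc, if_neg h1, if_neg h2]
          ring
    rw [Finset.sum_congr rfl (fun W _ => key W), Finset.sum_sub_distrib]
    have hvA : v ∉ Aset G v := by
      rw [Aset, Finset.mem_filter]
      rintro ⟨-, hlt, -⟩
      exact absurd hlt (lt_irrefl _)
    have hvE : v ∉ E := by
      rw [hE, Finset.mem_filter]
      rintro ⟨-, hlt⟩
      exact absurd hlt (lt_irrefl _)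
    rw [sum_over_subsets v (Aset G v) hvA, sum_over_subsets v E hvE]
    have hEcard : E.card = (v : ℕ) := by
      have : E = Finset.Iio v := by
        ext x
        rw [hE, Finset.mem_filter, Finset.mem_Iio]
        simp
      rw [this, Fin.card_Iio]
    rw [hEcard]
  rw [Finset.sum_congr rfl (fun v _ => step3 v), Finset.sum_sub_distrib, telescope]


/-- For a graph `G` on `n` vertices with ordering `v₁,…,vₙ` (here `Fin n` with its
natural ordering) and in-degree sequence `δ`,
`τ₀(G) ≤ 1/(n+1) + Σᵢ 1/((δᵢ+1)(δᵢ+2)) − 1`, with equality iff the ordering is a perfect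
elimination ordering (for every `i` the earlier neighbors of `vᵢ` form a clique). -/
theorem tau0_le_peo_bound {n : ℕ} (G : SimpleGraph (Fin n)) (δ : Fin n → ℕ)
    (hδ : ∀ i, δ i = Nat.card {j : Fin n // j < i ∧ G.Adj j i}) :
    tau0 G ≤ 1 / ((n : ℚ) + 1)
        + (∑ i : Fin n, 1 / (((δ i : ℚ) + 1) * ((δ i : ℚ) + 2))) - 1 ∧
      (tau0 G = 1 / ((n : ℚ) + 1)
          + (∑ i : Fin n, 1 / (((δ i : ℚ) + 1) * ((δ i : ℚ) + 2))) - 1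
        ↔ ∀ i : Fin n, G.IsClique {j : Fin n | j < i ∧ G.Adj j i}) := by
  classical
  have htau : tau0 G = ((n:ℚ)+1)⁻¹ * ∑ W : Finset (Fin n), b0 G W / ((n.choose W.card : ℚ)) := by
    rw [tau0]
    simp only [Fintype.card_fin, b0]
  have hAcard : ∀ v : Fin n, (Aset G v).card = δ v := by
    intro v
    rw [hδ, Nat.card_eq_fintype_card, Fintype.card_subtype]
    unfold Aset
    congr 1
  have hC : ∀ W : Finset (Fin n), (0:ℚ) < ((n.choose W.card : ℚ)) := by
    intro W
    have : W.card ≤ n := by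
      have := Finset.card_le_univ W
      rwa [Fintype.card_fin] at this
    exact_mod_cast Nat.choose_pos this
  have hsumle : ∑ W : Finset (Fin n), b0 G W / ((n.choose W.card:ℚ))
      ≤ ∑ W : Finset (Fin n), ((candSet G W).card : ℚ) / ((n.choose W.card:ℚ)) := by
    refine Finset.sum_le_sum fun W _ => ?_
    have := b0_le_cand G W
    gcongr
  have hcand : ∑ W : Finset (Fin n), ((candSet G W).card : ℚ) / ((n.choose W.card:ℚ))
      = (∑ i : Fin n, ((n:ℚ)+1) / (((δ i:ℚ)+1)*((δ i:ℚ)+2))) - n := by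
    rw [sum_cand_eq G]
    congr 1
    refine Finset.sum_congr rfl fun v _ => ?_
    rw [hAcard v]
  have hne : ((n:ℚ)+1) ≠ 0 := by positivity
  have halg : ((n:ℚ)+1)⁻¹ * ((∑ i : Fin n, ((n:ℚ)+1)/(((δ i:ℚ)+1)*((δ i:ℚ)+2))) - n)
      = 1/((n:ℚ)+1) + (∑ i : Fin n, 1/(((δ i:ℚ)+1)*((δ i:ℚ)+2))) - 1 := by
    have hper : ∀ i ∈ (Finset.univ : Finset (Fin n)),
        ((n:ℚ)+1)/(((δ i:ℚ)+1)*((δ i:ℚ)+2)) = ((n:ℚ)+1) * (1/(((δ i:ℚ)+1)*((δ i:ℚ)+2))) :=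
      fun i _ => by ring
    rw [Finset.sum_congr rfl hper, ← Finset.mul_sum]
    field_simp
    ring
  constructor
  · rw [htau, ← halg, ← hcand]
    have h0 : (0:ℚ) ≤ ((n:ℚ)+1)⁻¹ := by positivity
    exact mul_le_mul_of_nonneg_left hsumle h0
  · constructor
    · intro heq
      intro i
      by_contra hbad
      rw [SimpleGraph.isClique_iff, Set.Pairwise] at hbad
      push_neg at hbad
      obtain ⟨x, hx, y, hy, hxy, hnadj⟩ := hbad
      have hbadW : ∃ W : Finset (Fin n), W.Nonempty ∧
          ∃ w, w ∈ candSet G W ∧ w ∉ minSet G W := by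
        rcases lt_or_gt_of_ne hxy with hlt | hlt
        · obtain ⟨W, h1, h2, h3⟩ := bad_aux hx.2 hy.1 hy.2 hlt hnadj
          exact ⟨W, h1, _, h2, h3⟩
        · obtain ⟨W, h1, h2, h3⟩ := bad_aux hy.2 hx.1 hx.2 hlt (fun h => hnadj h.symm)
          exact ⟨W, h1, _, h2, h3⟩
      obtain ⟨W0, hW0ne, w, hwc, hwm⟩ := hbadW
      have hstrict : ∑ W : Finset (Fin n), b0 G W / ((n.choose W.card:ℚ))
          < ∑ W : Finset (Fin n), ((candSet G W).card : ℚ) / ((n.choose W.card:ℚ)) := by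
        refine Finset.sum_lt_sum (fun W _ => ?_) ⟨W0, Finset.mem_univ _, ?_⟩
        · have := b0_le_cand G W
          gcongr
        · have h1 := b0_lt_cand_of_bad hW0ne hwc hwm
          have h2 := hC W0
          rw [div_eq_mul_inv, div_eq_mul_inv]
          exact mul_lt_mul_of_pos_right h1 (inv_pos.2 h2)
      have heq2 : ((n:ℚ)+1)⁻¹ * ∑ W : Finset (Fin n), b0 G W / ((n.choose W.card:ℚ))
          = ((n:ℚ)+1)⁻¹ * ∑ W : Finset (Fin n), ((candSet G W).card : ℚ) / ((n.choose W.card:ℚ)) := by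
        rw [← htau, heq, ← halg, ← hcand]
      have h3 := mul_left_cancel₀ (inv_ne_zero hne) heq2
      exact absurd h3 (ne_of_lt hstrict)
    · intro hPEO
      have hsum : ∑ W : Finset (Fin n), b0 G W / ((n.choose W.card:ℚ))
          = ∑ W : Finset (Fin n), ((candSet G W).card : ℚ) / ((n.choose W.card:ℚ)) :=
        Finset.sum_congr rfl fun W _ => by rw [b0_eq_cand_of_peo hPEO W]
      rw [htau, hsum, hcand, halg]
end

section
/- For all natural numbers n, a, b with a ≤ b, the following identity holds in ℚ: Σ_{k=0}^{n} C(n,k)/C(n+b, k+a) = (n+b+1)/((b+1)·C(b,a)). -/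
open Finset

lemma key_choose (a b : ℕ) :
    (b+1) * b.choose a * ((b+1).choose (a+1) + (b+1).choose a)
      = (b+2) * (b+1).choose a * (b+1).choose (a+1) := by
  have h3 : (b+1).choose (a+1) + (b+1).choose a = (b+2).choose (a+1) := by
    rw [add_comm]
    exact (Nat.choose_succ_succ (b+1) a).symm
  have h4 := Nat.add_one_mul_choose_eq b a
  have h5 := Nat.add_one_mul_choose_eq (b+1) a
  rw [h3]
  nlinarith [h4, h5]

/-- For natural numbers `n`, `a ≤ b`:
`Σ_{k=0}^{n} C(n,k)/C(n+b, k+a) = (n+b+1)/((b+1)·C(b,a))` in `ℚ`. -/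
theorem sum_choose_div_choose (n a b : ℕ) (hab : a ≤ b) :
    ∑ k ∈ Finset.range (n + 1), (n.choose k : ℚ) / ((n + b).choose (k + a) : ℚ)
      = ((n : ℚ) + b + 1) / (((b : ℚ) + 1) * (b.choose a : ℚ)) := by
  induction n generalizing a b with
  | zero =>
    have hz : (b.choose a : ℚ) ≠ 0 := by
      exact_mod_cast (Nat.choose_pos hab).ne'
    have hb : ((b : ℚ) + 1) ≠ 0 := by positivity
    simp only [Finset.sum_range_one, Nat.choose_self, Nat.zero_add, zero_add,
      Nat.choose_zero_right, Nat.cast_one, Nat.cast_zero]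
    field_simp
  | succ n ih =>
    have h1 := ih a (b+1) (hab.trans (Nat.le_succ b))
    have h2 := ih (a+1) (b+1) (Nat.succ_le_succ hab)
    have e : n + 1 + b = n + b + 1 := by omega
    simp only [show n + (b+1) = n + b + 1 from by omega] at h1 h2
    rw [e]
    rw [Finset.sum_range_succ']
    have split : ∀ k, ((n+1).choose (k+1) : ℚ) / ((n + b + 1).choose (k+1+a) : ℚ)
        = (n.choose k : ℚ) / ((n + b + 1).choose (k + (a+1)) : ℚ)
          + (n.choose (k+1) : ℚ) / ((n + b + 1).choose (k+1+a) : ℚ) := by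
      intro k
      have ed : k + 1 + a = k + (a+1) := by omega
      rw [Nat.choose_succ_succ, ed]
      push_cast
      rw [add_div]
    simp only [split]
    rw [Finset.sum_add_distrib]
    have hA : (∑ k ∈ Finset.range (n+1), (n.choose (k+1) : ℚ) / ((n + b + 1).choose (k+1+a) : ℚ))
        + ((n+1).choose 0 : ℚ) / ((n + b + 1).choose (0+a) : ℚ)
        = ∑ k ∈ Finset.range (n+1), (n.choose k : ℚ) / ((n + b + 1).choose (k + a) : ℚ) := by
      rw [Finset.sum_range_succ]
      have hz : (n.choose (n+1) : ℚ) = 0 := by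
        simp [Nat.choose_eq_zero_of_lt]
      rw [hz, zero_div, add_zero]
      rw [Finset.sum_range_succ' (fun k => (n.choose k : ℚ) / ((n + b + 1).choose (k + a) : ℚ))]
      simp
    rw [add_assoc, hA, h1, h2]
    have hz1 : ((b+1).choose a : ℚ) ≠ 0 := by
      exact_mod_cast (Nat.choose_pos (hab.trans (Nat.le_succ b))).ne'
    have hz2 : ((b+1).choose (a+1) : ℚ) ≠ 0 := by
      exact_mod_cast (Nat.choose_pos (Nat.succ_le_succ hab)).ne'
    have hz3 : (b.choose a : ℚ) ≠ 0 := by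
      exact_mod_cast (Nat.choose_pos hab).ne'
    have hb1 : ((b : ℚ) + 1) ≠ 0 := by positivity
    have hb2 : ((b : ℚ) + 1 + 1) ≠ 0 := by positivity
    have key : ((b:ℚ)+1) * b.choose a * ((b+1).choose (a+1) + (b+1).choose a)
        = ((b:ℚ)+2) * (b+1).choose a * (b+1).choose (a+1) := by
      exact_mod_cast congrArg (Nat.cast : ℕ → ℚ) (key_choose a b)
    push_cast
    field_simp
    linear_combination ((n:ℚ)+b+2) * key
end

section
/- Let d ≥ 1 and let f₀, k, j be integers with d+1 ≤ k ≤ f₀−1 and d ≤ j ≤ k−1, and let G be the Billera–Lee graph with parameters (f₀, k, j, d). Then τ₀(G) = 1/(f₀+1) − 1/(k+1) + 1/((j+1)(j+2)) + (f₀−k−1)/((d+1)(d+2)). -/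
open Finset

/-- The Billera–Lee graph with parameters `(f₀, k, j, d)`, on the vertex set `Fin f₀`
(zero-indexed version of `{1,…,f₀}`): all pairs inside the first `k` vertices are edges;
vertex `k` (the `(k+1)`-st) is joined to the first `j` vertices; every vertex beyond that is
joined to the first `d` vertices. -/
def billeraLeeGraph (f₀ k j d : ℕ) : SimpleGraph (Fin f₀) :=
  SimpleGraph.fromRel (fun u v =>
    ((u : ℕ) < k ∧ (v : ℕ) < k) ∨
    ((u : ℕ) = k ∧ (v : ℕ) < j) ∨
    (k + 1 ≤ (u : ℕ) ∧ (v : ℕ) < d))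

lemma choose_helper (n m q : ℕ) : n.choose m * (n-m).choose q = n.choose q * (n-q).choose m := by
  rcases le_or_gt (q+m) n with h | h
  · have h1 := Nat.choose_mul (n := n) (show q ≤ q+m by omega)
    have h2 := Nat.choose_mul (n := n) (show m ≤ q+m by omega)
    have h3 : (q+m).choose q = (q+m).choose m := by
      rw [← Nat.choose_symm (show q ≤ q+m by omega)]
      congr 1
      omega
    have h4 : q + m - q = m := by omega
    have h5 : q + m - m = q := by omega
    rw [h4] at h1
    rw [h5] at h2
    rw [← h2, ← h1, h3]
  · rcases le_or_gt m n with hm | hm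
    · have e1 : (n-m).choose q = 0 := Nat.choose_eq_zero_of_lt (by omega)
      rcases le_or_gt q n with hq | hq
      · have e2 : (n-q).choose m = 0 := Nat.choose_eq_zero_of_lt (by omega)
        simp [e1, e2]
      · have e2 : n.choose q = 0 := Nat.choose_eq_zero_of_lt hq
        simp [e1, e2]
    · have e1 : n.choose m = 0 := Nat.choose_eq_zero_of_lt (by omega)
      have e2 : (n-q).choose m = 0 := Nat.choose_eq_zero_of_lt (by omega)
      simp [e1, e2]

lemma sum_choose_sub (n q a : ℕ) (h : a + q = n) :
    ∑ m ∈ range (a+1), (n-m).choose q = (n+1).choose (q+1) := by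
  rw [← Nat.sum_Icc_choose]
  apply Finset.sum_nbij' (fun m => n - m) (fun r => n - r)
  · intro m hm; simp only [mem_range] at hm; simp only [mem_Icc]; omega
  · intro r hr; simp only [mem_Icc] at hr; simp only [mem_range]; omega
  · intro m hm; simp only [mem_range] at hm; omega
  · intro r hr; simp only [mem_Icc] at hr; omega
  · intro m hm; rfl

lemma sumL1 {n : ℕ} (S : Finset (Fin n)) :
    ∑ W : Finset (Fin n), (if Disjoint W S then (1:ℚ) else 0) / (n.choose W.card : ℚ)
      = (n+1) / (S.card + 1) := by
  have hq : S.card ≤ n := by simpa using Finset.card_le_card (Finset.subset_univ S)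
  set q := S.card with hqdef
  have step1 : ∑ W : Finset (Fin n), (if Disjoint W S then (1:ℚ) else 0) / (n.choose W.card : ℚ)
      = ∑ W ∈ Sᶜ.powerset, 1 / (n.choose W.card : ℚ) := by
    simp only [div_eq_mul_inv, ite_mul, one_mul, zero_mul]
    rw [← Finset.sum_filter]
    apply Finset.sum_congr _ (fun _ _ => rfl)
    ext W
    simp only [mem_filter, mem_univ, true_and, mem_powerset]
    exact (le_compl_iff_disjoint_right).symm
  rw [step1, Finset.sum_powerset_apply_card (fun m => 1 / (n.choose m : ℚ))]
  have hcard : Sᶜ.card = n - q := by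
    rw [Finset.card_compl]
    simp [hqdef]
  rw [hcard]
  have h2 : (0:ℚ) < (n.choose q : ℚ) := by exact_mod_cast Nat.choose_pos hq
  have key : ∀ m ∈ range (n - q + 1),
      (n - q).choose m • (1 / (n.choose m : ℚ)) = ((n-m).choose q : ℚ) / (n.choose q : ℚ) := by
    intro m hm
    simp only [mem_range] at hm
    have hmn : m ≤ n := by omega
    have h1 : (0:ℚ) < (n.choose m : ℚ) := by exact_mod_cast Nat.choose_pos hmn
    rw [nsmul_eq_mul, mul_one_div, div_eq_div_iff h1.ne' h2.ne']
    exact_mod_cast congrArg Nat.cast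
      (by rw [Nat.mul_comm ((n-q).choose m), Nat.mul_comm ((n-m).choose q)]
          exact (choose_helper n m q).symm :
        (n-q).choose m * n.choose q = (n-m).choose q * n.choose m)
  rw [Finset.sum_congr rfl key, ← Finset.sum_div, ← Nat.cast_sum]
  rw [sum_choose_sub n q (n-q) (by omega)]
  have hmul := Nat.add_one_mul_choose_eq n q
  rw [div_eq_div_iff h2.ne' (by positivity : ((q:ℚ)+1) ≠ 0)]
  have : ((n+1).choose (q+1) : ℚ) * (q+1) = (n+1) * (n.choose q) := by exact_mod_cast hmul.symm
  push_cast at this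
  linarith [this]

lemma sumL2 {n : ℕ} (S : Finset (Fin n)) (x : Fin n) (hx : x ∉ S) :
    ∑ W : Finset (Fin n), (if x ∈ W ∧ Disjoint W S then (1:ℚ) else 0) / (n.choose W.card : ℚ)
      = (n+1) / ((S.card + 1) * (S.card + 2)) := by
  have key : ∀ W : Finset (Fin n),
      (if x ∈ W ∧ Disjoint W S then (1:ℚ) else 0)
        = (if Disjoint W S then (1:ℚ) else 0) - (if Disjoint W (insert x S) then (1:ℚ) else 0) := by
    intro W
    have h3 : Disjoint W (insert x S) ↔ x ∉ W ∧ Disjoint W S := Finset.disjoint_insert_right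
    by_cases h1 : Disjoint W S <;> by_cases h2 : x ∈ W <;> simp [h1, h2, h3]
  simp only [key, sub_div]
  rw [Finset.sum_sub_distrib, sumL1, sumL1, Finset.card_insert_of_notMem hx]
  have h1 : ((S.card:ℚ)+1) ≠ 0 := by positivity
  have h2 : ((S.card:ℚ)+2) ≠ 0 := by positivity
  push_cast
  field_simp
  ring

lemma natCard_cc {V β : Type*} (G : SimpleGraph V) (f : V → β)
    (h1 : ∀ v w, G.Adj v w → f v = f w) (h2 : ∀ v w, f v = f w → G.Reachable v w) :
    Nat.card G.ConnectedComponent = Nat.card (Set.range f) := by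
  have hwalk : ∀ (v w : V) (p : G.Walk v w), p.IsPath → f v = f w := by
    intro v w p hp
    clear hp
    induction p with
    | nil => rfl
    | cons h p ih => exact (h1 _ _ h).trans ih
  refine Nat.card_congr (Equiv.ofBijective
    (fun c => (⟨c.lift f hwalk, ?_⟩ : Set.range f)) ⟨?_, ?_⟩)
  · obtain ⟨v, rfl⟩ := c.exists_rep
    exact ⟨v, rfl⟩
  · intro c d h
    obtain ⟨v, rfl⟩ := c.exists_rep
    obtain ⟨w, rfl⟩ := d.exists_rep
    rw [Subtype.mk_eq_mk] at h
    exact SimpleGraph.ConnectedComponent.sound (h2 v w h)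
  · rintro ⟨b, v, rfl⟩
    exact ⟨G.connectedComponentMk v, rfl⟩

lemma card_comps (f₀ k j d : ℕ) (hd : 1 ≤ d) (hk₁ : d + 1 ≤ k) (hkf : k < f₀)
    (hj₁ : d ≤ j) (hj₂ : j + 1 ≤ k) (W : Finset (Fin f₀)) :
    Nat.card ((billeraLeeGraph f₀ k j d).induce (↑W : Set (Fin f₀))).ConnectedComponent
      = (if ∃ a ∈ W, (a:ℕ) < k then 1 else 0)
        + (if (⟨k, hkf⟩ : Fin f₀) ∈ W ∧ ¬ ∃ a ∈ W, (a:ℕ) < j then 1 else 0)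
        + (if ¬ ∃ a ∈ W, (a:ℕ) < d then (W.filter fun v : Fin f₀ => k < (v:ℕ)).card else 0) := by
  classical
  have hGadj : ∀ u v : Fin f₀, (billeraLeeGraph f₀ k j d).Adj u v ↔ u ≠ v ∧
      (((((u:ℕ) < k ∧ (v:ℕ) < k) ∨ ((u:ℕ) = k ∧ (v:ℕ) < j) ∨ (k+1 ≤ (u:ℕ) ∧ (v:ℕ) < d)) ∨
       (((v:ℕ) < k ∧ (u:ℕ) < k) ∨ ((v:ℕ) = k ∧ (u:ℕ) < j) ∨ (k+1 ≤ (v:ℕ) ∧ (u:ℕ) < d)))) :=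
    fun u v => SimpleGraph.fromRel_adj _ u v
  have hIadj : ∀ u v : (↑W : Set (Fin f₀)),
      ((billeraLeeGraph f₀ k j d).induce (↑W : Set (Fin f₀))).Adj u v ↔ (↑u : Fin f₀) ≠ ↑v ∧
      (((((u:Fin f₀):ℕ) < k ∧ ((v:Fin f₀):ℕ) < k) ∨ (((u:Fin f₀):ℕ) = k ∧ ((v:Fin f₀):ℕ) < j) ∨
          (k+1 ≤ ((u:Fin f₀):ℕ) ∧ ((v:Fin f₀):ℕ) < d)) ∨
       ((((v:Fin f₀):ℕ) < k ∧ ((u:Fin f₀):ℕ) < k) ∨ (((v:Fin f₀):ℕ) = k ∧ ((u:Fin f₀):ℕ) < j) ∨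
          (k+1 ≤ ((v:Fin f₀):ℕ) ∧ ((u:Fin f₀):ℕ) < d))) := by
    intro u v
    rw [SimpleGraph.comap_adj]
    simp only [Function.Embedding.coe_subtype]
    exact hGadj ↑u ↑v
  have hfk : (W.filter fun v : Fin f₀ => (v:ℕ) = k).card
      = if (⟨k, hkf⟩ : Fin f₀) ∈ W then 1 else 0 := by
    by_cases hkv : (⟨k, hkf⟩ : Fin f₀) ∈ W
    · rw [if_pos hkv, Finset.card_eq_one]
      refine ⟨⟨k, hkf⟩, ?_⟩
      ext v
      simp only [Finset.mem_filter, Finset.mem_singleton]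
      constructor
      · rintro ⟨hv, hvk⟩
        exact Fin.ext hvk
      · rintro rfl
        exact ⟨hkv, rfl⟩
    · rw [if_neg hkv, Finset.card_eq_zero]
      rw [Finset.filter_eq_empty_iff]
      intro v hv hvk
      exact hkv (by rwa [show (⟨k, hkf⟩ : Fin f₀) = v from (Fin.ext hvk.symm)])
  by_cases hA : ∃ a ∈ W, (a:ℕ) < k
  · -- main case
    obtain ⟨m, hmW, hmk⟩ := hA
    set core : Fin f₀ → Prop := fun v =>
      (v:ℕ) < k ∨ ((v:ℕ) = k ∧ ∃ a ∈ W, (a:ℕ) < j) ∨ (k < (v:ℕ) ∧ ∃ a ∈ W, (a:ℕ) < d)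
      with hcore
    set cf : Fin f₀ → Fin f₀ := fun v => if core v then m else v with hcf
    set f : (↑W : Set (Fin f₀)) → Fin f₀ := fun u => cf ↑u with hf
    have hmemW : ∀ u : (↑W : Set (Fin f₀)), (↑u : Fin f₀) ∈ W := fun u => u.2
    have h1 : ∀ u v, ((billeraLeeGraph f₀ k j d).induce (↑W : Set (Fin f₀))).Adj u v →
        f u = f v := by
      intro u v h
      rw [hIadj] at h
      have hcu : core ↑u ∧ core ↑v := by
        obtain ⟨-, h⟩ := h
        rcases h with (⟨h1, h2⟩ | ⟨h1, h2⟩ | ⟨h1, h2⟩) | (⟨h1, h2⟩ | ⟨h1, h2⟩ | ⟨h1, h2⟩)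
        · exact ⟨Or.inl h1, Or.inl h2⟩
        · exact ⟨Or.inr (Or.inl ⟨h1, ↑v, hmemW v, h2⟩), Or.inl (by omega)⟩
        · exact ⟨Or.inr (Or.inr ⟨by omega, ↑v, hmemW v, h2⟩), Or.inl (by omega)⟩
        · exact ⟨Or.inl h2, Or.inl h1⟩
        · exact ⟨Or.inl (by omega), Or.inr (Or.inl ⟨h1, ↑u, hmemW u, h2⟩)⟩
        · exact ⟨Or.inl (by omega), Or.inr (Or.inr ⟨by omega, ↑u, hmemW u, h2⟩)⟩
      simp only [hf, hcf, if_pos hcu.1, if_pos hcu.2]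
    have hmm : (m : Fin f₀) ∈ (↑W : Set (Fin f₀)) := hmW
    have reachA : ∀ u : (↑W : Set (Fin f₀)), (↑u : ℕ) < k →
        ((billeraLeeGraph f₀ k j d).induce (↑W : Set (Fin f₀))).Reachable u ⟨m, hmm⟩ := by
      intro u hu
      by_cases he : u = ⟨m, hmm⟩
      · rw [he]
      · apply SimpleGraph.Adj.reachable
        rw [hIadj]
        exact ⟨fun hh => he (Subtype.ext hh), Or.inl (Or.inl ⟨hu, hmk⟩)⟩
    have reach_m : ∀ u : (↑W : Set (Fin f₀)), core ↑u →
        ((billeraLeeGraph f₀ k j d).induce (↑W : Set (Fin f₀))).Reachable u ⟨m, hmm⟩ := by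
      intro u hc
      rcases hc with hu | ⟨hu, a, haW, haj⟩ | ⟨hu, a, haW, had⟩
      · exact reachA u hu
      · have haW' : a ∈ (↑W : Set (Fin f₀)) := haW
        have hadj : ((billeraLeeGraph f₀ k j d).induce (↑W : Set (Fin f₀))).Adj u ⟨a, haW'⟩ := by
          rw [hIadj]
          refine ⟨fun hh => ?_, Or.inl (Or.inr (Or.inl ⟨hu, show (a:ℕ) < j from haj⟩))⟩
          have h3 : ((u : Fin f₀) : ℕ) = (a : ℕ) := congrArg Fin.val hh
          omega
        exact hadj.reachable.trans (reachA ⟨a, haW'⟩ (show (a:ℕ) < k by omega))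
      · have haW' : a ∈ (↑W : Set (Fin f₀)) := haW
        have hadj : ((billeraLeeGraph f₀ k j d).induce (↑W : Set (Fin f₀))).Adj u ⟨a, haW'⟩ := by
          rw [hIadj]
          refine ⟨fun hh => ?_, Or.inl (Or.inr (Or.inr ⟨by omega, show (a:ℕ) < d from had⟩))⟩
          have h3 : ((u : Fin f₀) : ℕ) = (a : ℕ) := congrArg Fin.val hh
          omega
        exact hadj.reachable.trans (reachA ⟨a, haW'⟩ (show (a:ℕ) < k by omega))
    have h2 : ∀ u v, f u = f v →
        ((billeraLeeGraph f₀ k j d).induce (↑W : Set (Fin f₀))).Reachable u v := by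
      intro u v heq
      by_cases cu : core ↑u <;> by_cases cv : core ↑v
      · exact (reach_m u cu).trans (reach_m v cv).symm
      · exfalso
        simp only [hf, hcf, if_pos cu, if_neg cv] at heq
        exact cv (heq ▸ (Or.inl hmk))
      · exfalso
        simp only [hf, hcf, if_neg cu, if_pos cv] at heq
        exact cu (heq.symm ▸ (Or.inl hmk))
      · simp only [hf, hcf, if_neg cu, if_neg cv] at heq
        rw [Subtype.ext heq]
    rw [natCard_cc _ f h1 h2]
    have hrange : Set.range f = ↑(W.image cf) := by
      rw [Finset.coe_image]
      exact (Set.image_eq_range cf (↑W : Set (Fin f₀))).symm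
    rw [hrange, Nat.card_coe_set_eq, Set.ncard_coe_finset]
    have himg : W.image cf = insert m (W.filter fun v => ¬ core v) := by
      ext x
      simp only [Finset.mem_image, Finset.mem_insert, Finset.mem_filter]
      constructor
      · rintro ⟨v, hv, rfl⟩
        by_cases hc : core v
        · left; simp [hcf, hc]
        · right; exact ⟨by simpa [hcf, hc] using hv, by simpa [hcf, hc]⟩
      · rintro (rfl | ⟨hx, hc⟩)
        · exact ⟨x, hmW, by simp [hcf]⟩
        · exact ⟨x, hx, by simp [hcf, hc]⟩
    rw [himg, Finset.card_insert_of_notMem (by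
      simp only [Finset.mem_filter, not_and, not_not]
      exact fun _ => Or.inl hmk)]
    have hnc : (W.filter fun v => ¬ core v)
        = (W.filter fun v : Fin f₀ => (v:ℕ) = k ∧ ¬ ∃ a ∈ W, (a:ℕ) < j)
          ∪ (W.filter fun v : Fin f₀ => k < (v:ℕ) ∧ ¬ ∃ a ∈ W, (a:ℕ) < d) := by
      rw [← Finset.filter_or]
      apply Finset.filter_congr
      intro v hv
      constructor
      · intro hncv
        rcases Nat.lt_trichotomy (v:ℕ) k with h | h | h
        · exact absurd (Or.inl h) hncv
        · exact Or.inl ⟨h, fun hPj => hncv (Or.inr (Or.inl ⟨h, hPj⟩))⟩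
        · exact Or.inr ⟨h, fun hPd => hncv (Or.inr (Or.inr ⟨h, hPd⟩))⟩
      · rintro (⟨h1, h2⟩ | ⟨h1, h2⟩) (c1 | ⟨c1, c2⟩ | ⟨c1, c2⟩) <;> first | omega | exact h2 c2
    rw [hnc, Finset.card_union_of_disjoint (by
      rw [Finset.disjoint_left]
      intro a ha hb
      rw [Finset.mem_filter] at ha hb
      omega)]
    have hc1 : (W.filter fun v : Fin f₀ => (v:ℕ) = k ∧ ¬ ∃ a ∈ W, (a:ℕ) < j).card
        = if ((⟨k, hkf⟩ : Fin f₀) ∈ W ∧ ¬ ∃ a ∈ W, (a:ℕ) < j) then 1 else 0 := by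
      by_cases hPj : ∃ a ∈ W, (a:ℕ) < j
      · simp [hPj]
      · simp only [hPj, not_false_iff, and_true]
        exact hfk
    have hc2 : (W.filter fun v : Fin f₀ => k < (v:ℕ) ∧ ¬ ∃ a ∈ W, (a:ℕ) < d).card
        = if ¬ ∃ a ∈ W, (a:ℕ) < d then (W.filter fun v : Fin f₀ => k < (v:ℕ)).card else 0 := by
      by_cases hPd : ∃ a ∈ W, (a:ℕ) < d
      · simp [hPd]
      · simp only [hPd, not_false_iff, and_true, if_pos]
    rw [hc1, hc2, if_pos (⟨m, hmW, hmk⟩ : ∃ a ∈ W, (a:ℕ) < k)]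
    omega
  · -- edgeless case
    have noadj : ∀ u v : (↑W : Set (Fin f₀)),
        ¬ ((billeraLeeGraph f₀ k j d).induce (↑W : Set (Fin f₀))).Adj u v := by
      intro u v h
      rw [hIadj] at h
      obtain ⟨-, h⟩ := h
      apply hA
      rcases h with (⟨h1, h2⟩ | ⟨h1, h2⟩ | ⟨h1, h2⟩) | (⟨h1, h2⟩ | ⟨h1, h2⟩ | ⟨h1, h2⟩)
      exacts [⟨↑v, v.2, by omega⟩, ⟨↑v, v.2, by omega⟩, ⟨↑v, v.2, by omega⟩,
        ⟨↑u, u.2, by omega⟩, ⟨↑u, u.2, by omega⟩, ⟨↑u, u.2, by omega⟩]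
    rw [natCard_cc _ (fun u : (↑W : Set (Fin f₀)) => (↑u : Fin f₀))
      (fun u v h => absurd h (noadj u v))
      (fun u v h => by rw [Subtype.ext h])]
    rw [Subtype.range_coe, Nat.card_coe_set_eq, Set.ncard_coe_finset]
    have hPj : ¬ ∃ a ∈ W, (a:ℕ) < j := fun ⟨a, ha, h⟩ => hA ⟨a, ha, by omega⟩
    have hPd : ¬ ∃ a ∈ W, (a:ℕ) < d := fun ⟨a, ha, h⟩ => hA ⟨a, ha, by omega⟩
    rw [if_neg hA, if_pos hPd]
    simp only [hPj, not_false_iff, and_true]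
    rw [← hfk]
    have hsplit := Finset.card_filter_add_card_filter_not
      (s := W) (p := fun v : Fin f₀ => (v:ℕ) = k)
    have hcongr : (W.filter fun v : Fin f₀ => ¬ (v:ℕ) = k) = W.filter fun v : Fin f₀ => k < (v:ℕ) := by
      apply Finset.filter_congr
      intro v hv
      have : ¬ ((v:ℕ) < k) := fun h => hA ⟨v, hv, h⟩
      constructor
      · intro h; omega
      · intro h; omega
    rw [hcongr] at hsplit
    omega
/-- `τ₀` of the Billera–Lee graph with parameters `(f₀, k, j, d)` equals
`1/(f₀+1) − 1/(k+1) + 1/((j+1)(j+2)) + (f₀−k−1)/((d+1)(d+2))`. -/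
theorem tau0_billeraLee (f₀ k j d : ℕ) (hd : 1 ≤ d)
    (hk₁ : d + 1 ≤ k) (hk₂ : k + 1 ≤ f₀) (hj₁ : d ≤ j) (hj₂ : j + 1 ≤ k) :
    tau0 (billeraLeeGraph f₀ k j d)
      = 1 / ((f₀ : ℚ) + 1) - 1 / ((k : ℚ) + 1)
        + 1 / (((j : ℚ) + 1) * ((j : ℚ) + 2))
        + ((f₀ : ℚ) - (k : ℚ) - 1) / (((d : ℚ) + 1) * ((d : ℚ) + 2)) := by
  classical
  have hkf : k < f₀ := by omega
  have hjf : j < f₀ := by omega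
  have hdf : d < f₀ := by omega
  set Bj : Finset (Fin f₀) := univ.filter (fun v : Fin f₀ => (v:ℕ) < j) with hBj
  set Bd : Finset (Fin f₀) := univ.filter (fun v : Fin f₀ => (v:ℕ) < d) with hBd
  set Bk : Finset (Fin f₀) := univ.filter (fun v : Fin f₀ => (v:ℕ) < k) with hBk
  set Tail : Finset (Fin f₀) := univ.filter (fun v : Fin f₀ => k < (v:ℕ)) with hTail
  set kv : Fin f₀ := ⟨k, hkf⟩ with hkv
  have cardB : ∀ (c : ℕ) (hc : c < f₀),
      (univ.filter (fun v : Fin f₀ => (v:ℕ) < c)).card = c := by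
    intro c hc
    have : univ.filter (fun v : Fin f₀ => (v:ℕ) < c) = Finset.Iio (⟨c, hc⟩ : Fin f₀) := by
      ext v
      simp [Finset.mem_Iio, Fin.lt_def]
    rw [this, Fin.card_Iio]
  have hBjcard : Bj.card = j := cardB j hjf
  have hBdcard : Bd.card = d := cardB d hdf
  have hBkcard : Bk.card = k := cardB k hkf
  have hTailcard : Tail.card = f₀ - 1 - k := by
    have : Tail = Finset.Ioi kv := by
      ext v
      simp [hTail, Finset.mem_Ioi, Fin.lt_def, hkv]
    rw [this, Fin.card_Ioi]
  have hdisj : ∀ (W : Finset (Fin f₀)) (c : ℕ),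
      Disjoint W (univ.filter (fun v : Fin f₀ => (v:ℕ) < c)) ↔ ¬ ∃ a ∈ W, (a:ℕ) < c := by
    intro W c
    rw [Finset.disjoint_left]
    constructor
    · intro h hex
      obtain ⟨a, haW, hac⟩ := hex
      exact (h haW) (by simp [hac])
    · intro h a haW ha
      simp only [Finset.mem_filter, Finset.mem_univ, true_and] at ha
      exact h ⟨a, haW, ha⟩
  have hnum : ∀ W : Finset (Fin f₀),
      (if W.Nonempty then
          (Nat.card ((billeraLeeGraph f₀ k j d).induce (↑W : Set (Fin f₀))).ConnectedComponent : ℚ)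
            - 1
        else 0)
      = (if kv ∈ W ∧ Disjoint W Bj then (1:ℚ) else 0)
        + (∑ v ∈ Tail, if v ∈ W ∧ Disjoint W Bd then (1:ℚ) else 0)
        - (if Disjoint W Bk then (1:ℚ) else 0)
        + (if W = ∅ then (1:ℚ) else 0) := by
    intro W
    by_cases hW : W = ∅
    · subst hW
      simp
    · have hWne : W.Nonempty := Finset.nonempty_iff_ne_empty.mpr hW
      rw [if_pos hWne, if_neg hW, card_comps f₀ k j d hd hk₁ hkf hj₁ hj₂ W]
      have hsum : (∑ v ∈ Tail, if v ∈ W ∧ Disjoint W Bd then (1:ℚ) else 0)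
          = if Disjoint W Bd then ((W.filter fun v : Fin f₀ => k < (v:ℕ)).card : ℚ) else 0 := by
        by_cases hQ : Disjoint W Bd
        · rw [if_pos hQ]
          simp only [hQ, and_true]
          rw [Finset.sum_boole]
          congr 1
          rw [hTail]
          apply Finset.card_bij (fun a _ => a)
          · intro a ha
            simp only [Finset.mem_filter, Finset.mem_univ, true_and] at ha ⊢
            exact ⟨ha.2, ha.1⟩
          · intro a _ b _ h
            exact h
          · intro b hb
            simp only [Finset.mem_filter, Finset.mem_univ, true_and] at hb ⊢
            exact ⟨b, ⟨hb.2, hb.1⟩, rfl⟩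
        · rw [if_neg hQ]
          simp [hQ]
      rw [hsum]
      have e1 : Disjoint W Bj ↔ ¬ ∃ a ∈ W, (a:ℕ) < j := hdisj W j
      have e2 : Disjoint W Bd ↔ ¬ ∃ a ∈ W, (a:ℕ) < d := hdisj W d
      have e3 : Disjoint W Bk ↔ ¬ ∃ a ∈ W, (a:ℕ) < k := hdisj W k
      by_cases hPA : ∃ a ∈ W, (a:ℕ) < k <;>
        by_cases hPj : ∃ a ∈ W, (a:ℕ) < j <;>
          by_cases hPd : ∃ a ∈ W, (a:ℕ) < d <;>
            simp [hPA, hPj, hPd, e1, e2, e3, hkv] <;> push_cast <;> ring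
  unfold tau0
  simp only [Fintype.card_fin]
  rw [Finset.sum_congr rfl (fun W _ => by rw [hnum W])]
  simp only [add_div, sub_div]
  rw [Finset.sum_add_distrib, Finset.sum_sub_distrib, Finset.sum_add_distrib]
  have hS1 : ∑ W : Finset (Fin f₀), (if kv ∈ W ∧ Disjoint W Bj then (1:ℚ) else 0)
        / (f₀.choose W.card : ℚ) = (f₀+1) / ((j+1) * (j+2)) := by
    rw [sumL2 Bj kv (by simp [hBj, hkv]; omega), hBjcard]
  have hS3 : ∑ W : Finset (Fin f₀), (if Disjoint W Bk then (1:ℚ) else 0)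
        / (f₀.choose W.card : ℚ) = (f₀+1) / (k+1) := by
    rw [sumL1 Bk, hBkcard]
  have hS2 : ∑ W : Finset (Fin f₀),
        (∑ v ∈ Tail, if v ∈ W ∧ Disjoint W Bd then (1:ℚ) else 0) / (f₀.choose W.card : ℚ)
      = ((f₀:ℚ) - k - 1) * ((f₀+1) / ((d+1) * (d+2))) := by
    have : ∀ W : Finset (Fin f₀),
        (∑ v ∈ Tail, if v ∈ W ∧ Disjoint W Bd then (1:ℚ) else 0) / (f₀.choose W.card : ℚ)
        = ∑ v ∈ Tail, (if v ∈ W ∧ Disjoint W Bd then (1:ℚ) else 0) / (f₀.choose W.card : ℚ) := by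
      intro W
      rw [Finset.sum_div]
    rw [Finset.sum_congr rfl (fun W _ => this W), Finset.sum_comm]
    have hv : ∀ v ∈ Tail, ∑ W : Finset (Fin f₀),
        (if v ∈ W ∧ Disjoint W Bd then (1:ℚ) else 0) / (f₀.choose W.card : ℚ)
        = (f₀+1) / ((d+1) * (d+2)) := by
      intro v hv
      simp only [hTail, Finset.mem_filter, Finset.mem_univ, true_and] at hv
      rw [sumL2 Bd v (by simp [hBd]; omega), hBdcard]
    rw [Finset.sum_congr rfl hv, Finset.sum_const, hTailcard, nsmul_eq_mul]
    congr 1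
    have h1 : f₀ - 1 - k = f₀ - (k+1) := by omega
    rw [h1, Nat.cast_sub (by omega)]
    push_cast
    ring
  have hS4 : ∑ W : Finset (Fin f₀), (if W = ∅ then (1:ℚ) else 0)
        / (f₀.choose W.card : ℚ) = 1 := by
    rw [Finset.sum_eq_single (∅ : Finset (Fin f₀))]
    · simp
    · intro b _ hb
      simp [hb]
    · intro h
      exact absurd (Finset.mem_univ _) h
  rw [hS1, hS2, hS3, hS4]
  have n1 : ((f₀:ℚ)+1) ≠ 0 := by positivity
  have n2 : ((k:ℚ)+1) ≠ 0 := by positivity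
  have n3 : ((j:ℚ)+1) ≠ 0 := by positivity
  have n4 : ((j:ℚ)+2) ≠ 0 := by positivity
  have n5 : ((d:ℚ)+1) ≠ 0 := by positivity
  have n6 : ((d:ℚ)+2) ≠ 0 := by positivity
  field_simp
  ring
end

section
/- Every strongly connected pure d-dimensional simplicial complex on a finite vertex set V with |V| = n admits an enumeration v₁,…,v_n of V whose in-degree sequence (δ₁,…,δ_n) with respect to the graph of the complex satisfies δ_i = i−1 for 1 ≤ i ≤ d+1 and δ_i ≥ d for d+2 ≤ i ≤ n (a d-dimensional in-degree sequence). -/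
open Finset

/-- The graph (1-skeleton) of a pure simplicial complex given by its family `F` of facets:
two distinct vertices are adjacent iff they lie in a common facet. -/
def complexGraph {V : Type*} (F : Finset (Finset V)) : SimpleGraph V :=
  SimpleGraph.fromRel (fun u v => ∃ S ∈ F, u ∈ S ∧ v ∈ S)

/-- The dual (adjacency) graph of a pure `d`-dimensional complex with facet family `F`:
two facets are adjacent iff their intersection has `d` elements. -/
def dualGraph {V : Type*} [DecidableEq V] (F : Finset (Finset V)) (d : ℕ) :
    SimpleGraph {S // S ∈ F} :=
  SimpleGraph.fromRel (fun S T => ((S : Finset V) ∩ (T : Finset V)).card = d)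

lemma adj_of_mem_facet {V : Type*} {F : Finset (Finset V)} {u v : V} (h : u ≠ v)
    {S : Finset V} (hS : S ∈ F) (hu : u ∈ S) (hv : v ∈ S) :
    (complexGraph F).Adj u v := by
  simp only [complexGraph, SimpleGraph.fromRel_adj]
  exact ⟨h, Or.inl ⟨S, hS, hu, hv⟩⟩

lemma walk_step {V : Type*} [DecidableEq V] {F : Finset (Finset V)} {d : ℕ}
    (hfacet : ∀ S ∈ F, S.card = d + 1) (A : Finset V) :
    ∀ {S T : {S // S ∈ F}}, (dualGraph F d).Walk S T →
      (S : Finset V) ⊆ A → ¬ (T : Finset V) ⊆ A →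
      ∃ B ∈ F, ∃ w, w ∉ A ∧ w ∈ B ∧ B ⊆ insert w A := by
  intro S T p
  induction p with
  | nil => exact fun h1 h2 => absurd h1 h2
  | @cons S U T h p ih =>
    intro hS hT
    by_cases hU : (U : Finset V) ⊆ A
    · exact ih hU hT
    · have hadj : ((S : Finset V) ∩ (U : Finset V)).card = d := by
        have h' := h
        simp only [dualGraph, SimpleGraph.fromRel_adj] at h'
        rcases h'.2 with h'' | h''
        · exact h''
        · rwa [Finset.inter_comm]
      have hsub : (S : Finset V) ∩ (U : Finset V) ⊆ (U : Finset V) :=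
        Finset.inter_subset_right
      have hcard : (((U : Finset V)) \ ((S : Finset V) ∩ (U : Finset V))).card = 1 := by
        rw [Finset.card_sdiff_of_subset hsub, hfacet _ U.2, hadj]
        omega
      obtain ⟨w, hw⟩ := Finset.card_eq_one.mp hcard
      have hwU : w ∈ (U : Finset V) := by
        have : w ∈ ((U : Finset V)) \ ((S : Finset V) ∩ (U : Finset V)) := by
          rw [hw]; exact Finset.mem_singleton_self w
        exact (Finset.mem_sdiff.mp this).1
      have hUsub : (U : Finset V) ⊆ insert w A := by
        intro x hx
        by_cases hxS : x ∈ (S : Finset V) ∩ (U : Finset V)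
        · exact Finset.mem_insert_of_mem (hS (Finset.mem_of_mem_inter_left hxS))
        · have hx' : x ∈ ((U : Finset V)) \ ((S : Finset V) ∩ (U : Finset V)) :=
            Finset.mem_sdiff.mpr ⟨hx, hxS⟩
          rw [hw, Finset.mem_singleton] at hx'
          rw [hx']
          exact Finset.mem_insert_self w A
      have hwA : w ∉ A := by
        intro hwA
        apply hU
        intro x hx
        rcases Finset.mem_insert.mp (hUsub hx) with rfl | hxA
        · exact hwA
        · exact hxA
      exact ⟨U, U.2, w, hwA, hwU, hUsub⟩

lemma extend_list {V : Type*} [Fintype V] [DecidableEq V] {d : ℕ} {F : Finset (Finset V)}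
    (hfacet : ∀ S ∈ F, S.card = d + 1)
    (hcover : ∀ v : V, ∃ S ∈ F, v ∈ S)
    (hsc : (dualGraph F d).Connected) :
    ∀ (k : ℕ) (L : List V) (T : Finset (Finset V)),
      T ⊆ F → T.Nonempty → L.Nodup → L.toFinset = T.sup id →
      L.length + k = Fintype.card V →
      ∃ L' : List V, L <+: L' ∧ L'.Nodup ∧ L'.length = Fintype.card V ∧
        ∀ i (h : i < L'.length), L.length ≤ i →
          ∃ B ∈ F, L'[i] ∈ B ∧ B ⊆ insert L'[i] (L'.take i).toFinset := by
  intro k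
  induction k with
  | zero =>
    intro L T hTF hTne hnd hA hlen
    exact ⟨L, List.prefix_refl L, hnd, by omega, fun i h hi => absurd hi (by omega)⟩
  | succ k ih =>
    intro L T hTF hTne hnd hA hlen
    have hltcard : L.length < Fintype.card V := by omega
    have hnotall : L.toFinset ≠ Finset.univ := by
      intro hmm
      have h1 : L.toFinset.card = L.length := List.toFinset_card_of_nodup hnd
      rw [hmm, Finset.card_univ] at h1
      omega
    obtain ⟨v, hv⟩ : ∃ v, v ∉ L.toFinset := by
      by_contra hc
      push_neg at hc
      exact hnotall (Finset.eq_univ_of_forall hc)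
    obtain ⟨Sv, hSvF, hvSv⟩ := hcover v
    obtain ⟨S0, hS0T⟩ := hTne
    have hS0A : (S0 : Finset V) ⊆ L.toFinset := by
      rw [hA]
      exact Finset.le_sup (f := id) hS0T
    have hSvA : ¬ (Sv : Finset V) ⊆ L.toFinset := fun hc => hv (hc hvSv)
    have hreach := (hsc.preconnected ⟨S0, hTF hS0T⟩ ⟨Sv, hSvF⟩).some
    obtain ⟨B, hBF, w, hwA, hwB, hBsub⟩ := walk_step hfacet L.toFinset hreach hS0A hSvA
    have hwL : w ∉ L := fun hc => hwA (List.mem_toFinset.mpr hc)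
    have hnd' : (L ++ [w]).Nodup := by
      simp [List.nodup_append, hnd, hwL]
      intro a ha h
      exact hwL (h ▸ ha)
    have hA' : (L ++ [w]).toFinset = (insert B T).sup id := by
      rw [Finset.sup_insert]
      simp only [List.toFinset_append, List.toFinset_cons, List.toFinset_nil,
        insert_empty_eq, id_eq, ← hA]
      apply Finset.Subset.antisymm
      · intro x hx
        rcases Finset.mem_union.mp hx with hx | hx
        · exact Finset.mem_union_right _ hx
        · rw [Finset.mem_singleton] at hx
          rw [hx]
          exact Finset.mem_union_left _ hwB
      · intro x hx
        rcases Finset.mem_union.mp hx with hx | hx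
        · rcases Finset.mem_insert.mp (hBsub hx) with rfl | hx'
          · exact Finset.mem_union_right _ (Finset.mem_singleton_self x)
          · exact Finset.mem_union_left _ hx'
        · exact Finset.mem_union_left _ hx
    have hlen' : (L ++ [w]).length + k = Fintype.card V := by
      simp only [List.length_append, List.length_singleton]
      omega
    obtain ⟨L', hpre, hnd'', hlen'', hprop⟩ :=
      ih (L ++ [w]) (insert B T) (Finset.insert_subset hBF hTF)
        ⟨B, Finset.mem_insert_self B T⟩ hnd' hA' hlen'
    refine ⟨L', (List.prefix_append L [w]).trans hpre, hnd'', hlen'', ?_⟩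
    intro i h hi
    by_cases hcase : L.length + 1 ≤ i
    · exact hprop i h (by simp only [List.length_append, List.length_singleton]; omega)
    · have hieq : i = L.length := by omega
      subst hieq
      have hlenw : L.length < (L ++ [w]).length := by simp
      have hget : L'[L.length] = w := by
        rw [← hpre.getElem hlenw]
        simp
      have htake : L'.take L.length = L := by
        have h1 : L <+: L' := (List.prefix_append L [w]).trans hpre
        rw [← List.prefix_iff_eq_take.mp h1]
      refine ⟨B, hBF, ?_, ?_⟩
      · rw [hget]; exact hwB
      · rw [hget, htake]
        exact hBsub
  
/-- Every strongly connected pure `d`-dimensional simplicial complex on a finite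
vertex set `V` with `|V| = n` admits an enumeration `v₁,…,vₙ` of `V` (here an equivalence
`e : Fin n ≃ V`, zero-indexed) whose in-degree sequence `δ` with respect to the graph of the
complex satisfies `δᵢ = i − 1` for `1 ≤ i ≤ d+1` and `δᵢ ≥ d` for `d+2 ≤ i ≤ n`. -/
theorem exists_ddimensional_indegree_sequence {V : Type*} [Fintype V] [DecidableEq V]
    (d : ℕ) (hd : 1 ≤ d) (F : Finset (Finset V)) (hne : F.Nonempty)
    (hfacet : ∀ S ∈ F, S.card = d + 1)
    (hcover : ∀ v : V, ∃ S ∈ F, v ∈ S)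
    (hsc : (dualGraph F d).Connected) :
    ∃ e : Fin (Fintype.card V) ≃ V,
      (∀ i : Fin (Fintype.card V), (i : ℕ) ≤ d →
        Nat.card {j : Fin (Fintype.card V) //
          j < i ∧ (complexGraph F).Adj (e j) (e i)} = (i : ℕ)) ∧
      (∀ i : Fin (Fintype.card V), d + 1 ≤ (i : ℕ) →
        d ≤ Nat.card {j : Fin (Fintype.card V) //
          j < i ∧ (complexGraph F).Adj (e j) (e i)}) := by
  classical
  obtain ⟨S0, hS0F⟩ := hne
  have hlen0 : S0.toList.length = d + 1 := by
    rw [Finset.length_toList, hfacet S0 hS0F]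
  have hcardV : d + 1 ≤ Fintype.card V := by
    rw [← hfacet S0 hS0F, ← Finset.card_univ]
    exact Finset.card_le_card (Finset.subset_univ S0)
  have hA0 : S0.toList.toFinset = ({S0} : Finset (Finset V)).sup id := by
    simp
  obtain ⟨L, hpre, hnd, hlen, hprop⟩ :=
    extend_list hfacet hcover hsc (Fintype.card V - (d + 1)) S0.toList {S0}
      (Finset.singleton_subset_iff.mpr hS0F) ⟨S0, Finset.mem_singleton_self S0⟩
      S0.nodup_toList hA0 (by omega)
  -- the equivalence
  set n := Fintype.card V with hn
  have hidx : ∀ i : Fin n, (i : ℕ) < L.length := fun i => by rw [hlen]; exact i.isLt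
  set f : Fin n → V := fun i => L[(i : ℕ)]'(hidx i) with hf
  have hinj : Function.Injective f := by
    intro i j hij
    have h3 := List.nodup_iff_injective_getElem.mp hnd
      (show (fun k : Fin L.length => L[k.1]) ⟨i, hidx i⟩ = (fun k : Fin L.length => L[k.1]) ⟨j, hidx j⟩ from hij)
    exact Fin.ext (by simpa using h3)
  have hbij : Function.Bijective f :=
    (Fintype.bijective_iff_injective_and_card f).mpr ⟨hinj, by simp [hn]⟩
  set e : Fin n ≃ V := Equiv.ofBijective f hbij with he
  have happ : ∀ i : Fin n, e i = L[(i : ℕ)]'(hidx i) := fun i => rfl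
  -- first d+1 entries lie in S0
  have hfirst : ∀ m (hm : m ≤ d) (h : m < L.length), L[m] ∈ S0 := by
    intro m hm h
    have hm' : m < S0.toList.length := by omega
    rw [← hpre.getElem hm']
    exact Finset.mem_toList.mp (List.getElem_mem hm')
  refine ⟨e, ?_, ?_⟩
  · -- exact count for i ≤ d
    intro i hi
    rw [Nat.card_eq_fintype_card, Fintype.card_subtype]
    have hset : Finset.univ.filter
        (fun j : Fin n => j < i ∧ (complexGraph F).Adj (e j) (e i)) = Finset.Iio i := by
      ext j
      simp only [Finset.mem_filter, Finset.mem_univ, true_and, Finset.mem_Iio]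
      constructor
      · exact fun h => h.1
      · intro hj
        refine ⟨hj, ?_⟩
        have hji : (j : ℕ) < (i : ℕ) := hj
        refine adj_of_mem_facet ?_ hS0F ?_ ?_
        · intro hc
          exact absurd (hinj hc) (ne_of_lt hj)
        · rw [happ j]; exact hfirst _ (by omega) _
        · rw [happ i]; exact hfirst _ hi _
    rw [hset, Fin.card_Iio]
  · -- lower bound for i ≥ d+1
    intro i hi
    obtain ⟨B, hBF, hmemB, hBsub⟩ := hprop (i : ℕ) (hidx i) (by omega)
    rw [Nat.card_eq_fintype_card, Fintype.card_subtype]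
    have hcardB : (B.erase (e i)).card = d := by
      rw [Finset.card_erase_of_mem (by rw [happ i]; exact hmemB), hfacet B hBF]
      omega
    rw [← hcardB]
    apply Finset.card_le_card_of_injOn (fun v => e.symm v)
    · intro x hx
      obtain ⟨hxne, hxB⟩ := Finset.mem_erase.mp hx
      have hxtake : x ∈ (L.take (i : ℕ)).toFinset := by
        rcases Finset.mem_insert.mp (hBsub hxB) with h | h
        · exact absurd (h.trans (happ i).symm) hxne
        · exact h
      obtain ⟨m, hm, hmx⟩ := List.mem_iff_getElem.mp (List.mem_toFinset.mp hxtake)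
      have hmi : m < (i : ℕ) := by
        have := hm
        rw [List.length_take] at this
        omega
      have hmL : m < L.length := by
        have := hm
        rw [List.length_take] at this
        omega
      have hmn : m < n := by omega
      have hxm : x = e ⟨m, hmn⟩ := by
        rw [happ ⟨m, hmn⟩]
        rw [← hmx]
        simp
      have hsymm : e.symm x = ⟨m, hmn⟩ := by
        rw [hxm, Equiv.symm_apply_apply]
      simp only [Finset.mem_coe, Finset.mem_filter, Finset.mem_univ, true_and]
      constructor
      · rw [hsymm]
        exact hmi
      · rw [Equiv.apply_symm_apply]
        refine adj_of_mem_facet hxne hBF hxB ?_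
        rw [happ i]; exact hmemB
    · intro x _ y _ hxy
      exact e.symm.injective hxy
end

section
/- Let d ≥ 1, and let G₁ and G₂ be finite simple graphs on vertex sets V₁ and V₂ with |V₁| = n₁, |V₂| = n₂, such that D := V₁ ∩ V₂ has exactly d+1 elements and D is a clique in both G₁ and G₂. Let G be the graph on V₁ ∪ V₂ whose edge set is the union of the edge sets of G₁ and G₂. Then τ₀(G) = τ₀(G₁) + τ₀(G₂) + 1/(d+2) − 1/(n₁+1) − 1/(n₂+1) + 1/(n₁+n₂−d), where the last summand equals 1/(n+1) for n = n₁+n₂−d−1 the number of vertices of G. (This is the i = 0 case of the connected-sum formula for the τ-vector: the graph of a simplicial connected sum M₁ # M₂ of d-manifolds, d ≥ 2, is exactly such a union of the graphs of M₁ and M₂ glued along the (d+1)-clique on the removed facet.) -/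
open Finset

set_option linter.unusedSectionVars false
set_option maxHeartbeats 1000000

namespace Tau0Aux

open SimpleGraph Nat

variable {α : Type*} [Fintype α] [DecidableEq α]

def induceIso {β γ : Type*} (G : SimpleGraph β) (H : SimpleGraph γ) (s : Set β) (t : Set γ)
    (e : s ≃ t) (he : ∀ a b : s, G.Adj a b ↔ H.Adj (e a) (e b)) :
    G.induce s ≃g H.induce t where
  toEquiv := e
  map_rel_iff' := by intro a b; simpa using (he a b).symm

lemma cc_card_congr {β γ : Type*} {G : SimpleGraph β} {H : SimpleGraph γ} (e : G ≃g H) :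
    Nat.card G.ConnectedComponent = Nat.card H.ConnectedComponent :=
  Nat.card_congr e.connectedComponentEquiv


noncomputable def cnt (G : SimpleGraph α) (s : Finset α) : ℕ :=
  Nat.card (G.induce (↑s : Set α)).ConnectedComponent

lemma clique_reach (G : SimpleGraph α) (A : Finset α) {C : Finset α}
    (hcl : G.IsClique (↑C : Set α)) {d d' : α}
    (hd : d ∈ C) (hd' : d' ∈ C) (hdA : d ∈ (↑A : Set α)) (hd'A : d' ∈ (↑A : Set α)) :
    (G.induce (↑A : Set α)).Reachable ⟨d, hdA⟩ ⟨d', hd'A⟩ := by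
  rcases eq_or_ne d d' with rfl | hne
  · exact SimpleGraph.Reachable.refl _
  · exact SimpleGraph.Adj.reachable
      (by simpa using hcl (by exact_mod_cast hd) (by exact_mod_cast hd') hne)

lemma reach_left (G : SimpleGraph α) (A B : Finset α) (s : Finset α) (hs : A ∪ B = s)
    (hedge : ∀ u v : α, u ∈ s → v ∈ s → G.Adj u v → (u ∈ A ∧ v ∈ A) ∨ (u ∈ B ∧ v ∈ B))
    (hcl : G.IsClique (↑(A ∩ B) : Set α)) :
    ∀ (u v : (↑s : Set α)), (G.induce (↑s : Set α)).Walk u v → ∀ hv : (v : α) ∈ (↑A : Set α),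
      (∀ hu : (u : α) ∈ (↑A : Set α), (G.induce (↑A : Set α)).Reachable ⟨↑u, hu⟩ ⟨↑v, hv⟩) ∧
      ((u : α) ∉ A → ∃ d : (↑A : Set α), (d : α) ∈ B ∧
        (G.induce (↑A : Set α)).Reachable d ⟨↑v, hv⟩) := by
  intro u v w
  induction w with
  | nil =>
    intro hv
    constructor
    · intro hu
      exact SimpleGraph.Reachable.refl _
    · intro hu
      exact absurd (by exact_mod_cast hv) hu
  | @cons x y z hadj p ih =>
    intro hv
    have hxy : G.Adj ↑x ↑y := hadj
    have hxs : (x : α) ∈ s := by exact_mod_cast x.2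
    have hys : (y : α) ∈ s := by exact_mod_cast y.2
    have hcase := hedge ↑x ↑y hxs hys hxy
    constructor
    · intro hu
      have hxA : (x : α) ∈ A := by exact_mod_cast hu
      by_cases hyA : (y : α) ∈ A
      · have : (G.induce (↑A : Set α)).Adj ⟨↑x, hu⟩ ⟨↑y, by exact_mod_cast hyA⟩ := by
          simpa using hxy
        exact this.reachable.trans ((ih hv).1 (by exact_mod_cast hyA))
      · have hxB : (x : α) ∈ B := by
          rcases hcase with ⟨hx, hy⟩ | ⟨hx, hy⟩
          · exact absurd hy hyA
          · exact hx
        obtain ⟨d, hdB, hdr⟩ := (ih hv).2 hyA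
        have hdA : (d : α) ∈ A := by exact_mod_cast d.2
        have : (G.induce (↑A : Set α)).Reachable ⟨↑x, hu⟩ d := by
          have := clique_reach G A hcl (Finset.mem_inter.2 ⟨hxA, hxB⟩)
            (Finset.mem_inter.2 ⟨hdA, hdB⟩) hu d.2
          simpa using this
        exact this.trans hdr
    · intro hu
      have hxB : (x : α) ∈ B := by
        have hxs2 : (x : α) ∈ A ∪ B := by rw [hs]; exact hxs
        have := Finset.mem_union.1 hxs2
        tauto
      by_cases hyA : (y : α) ∈ A
      · have hyB : (y : α) ∈ B := by
          rcases hcase with ⟨hx, hy⟩ | ⟨hx, hy⟩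
          · exact absurd hx hu
          · exact hy
        exact ⟨⟨↑y, by exact_mod_cast hyA⟩, hyB, (ih hv).1 (by exact_mod_cast hyA)⟩
      · exact (ih hv).2 hyA

lemma cnt_union_inter_nonempty (G : SimpleGraph α) (A B : Finset α)
    (hedge : ∀ u v : α, u ∈ A ∪ B → v ∈ A ∪ B → G.Adj u v →
      (u ∈ A ∧ v ∈ A) ∨ (u ∈ B ∧ v ∈ B))
    (hcl : G.IsClique (↑(A ∩ B) : Set α)) (hne : (A ∩ B).Nonempty) :
    cnt G (A ∪ B) + 1 = cnt G A + cnt G B := by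
  classical
  obtain ⟨d0, hd0⟩ := hne
  have hd0A : d0 ∈ (↑A : Set α) := by exact_mod_cast (Finset.mem_inter.1 hd0).1
  have hd0B : d0 ∈ (↑B : Set α) := by exact_mod_cast (Finset.mem_inter.1 hd0).2
  set GA := G.induce (↑A : Set α) with hGA
  set GB := G.induce (↑B : Set α) with hGB
  set Gs := G.induce (↑(A ∪ B) : Set α) with hGs
  have hclB : G.IsClique (↑(B ∩ A) : Set α) := by rwa [Finset.inter_comm]
  have hedge' : ∀ u v : α, u ∈ A ∪ B → v ∈ A ∪ B → G.Adj u v →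
      (u ∈ B ∧ v ∈ B) ∨ (u ∈ A ∧ v ∈ A) := fun u v hu hv h => (hedge u v hu hv h).symm
  have HA := reach_left G A B (A ∪ B) rfl hedge hcl
  have HB := reach_left G B A (A ∪ B) (Finset.union_comm B A) hedge' hclB
  have memB : ∀ v : (↑(A ∪ B) : Set α), (v : α) ∉ A → (v : α) ∈ (↑B : Set α) := by
    intro v hv
    have : (v : α) ∈ A ∪ B := by exact_mod_cast v.2
    have := Finset.mem_union.1 this
    simp only [Finset.mem_coe]; tauto
  set cA0 : GA.ConnectedComponent := GA.connectedComponentMk ⟨d0, hd0A⟩ with hcA0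
  set cB0 : GB.ConnectedComponent := GB.connectedComponentMk ⟨d0, hd0B⟩ with hcB0
  -- key reachability facts
  have reachBd0 : ∀ {u v : (↑(A ∪ B) : Set α)}, Gs.Walk u v → ∀ hv : (v : α) ∈ (↑B : Set α),
      (u : α) ∈ A → GB.Reachable ⟨↑v, hv⟩ ⟨d0, hd0B⟩ := by
    intro u v w hv huA
    by_cases huB : (u : α) ∈ B
    · have h1 := (HB _ _ w hv).1 (by exact_mod_cast huB)
      have h2 : GB.Reachable ⟨↑u, by exact_mod_cast huB⟩ ⟨d0, hd0B⟩ :=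
        clique_reach G B hclB (Finset.mem_inter.2 ⟨huB, huA⟩)
          (Finset.mem_inter.2 ⟨(Finset.mem_inter.1 hd0).2, (Finset.mem_inter.1 hd0).1⟩)
          (by exact_mod_cast huB) hd0B
      exact h1.symm.trans h2
    · obtain ⟨e, heA, her⟩ := (HB _ _ w hv).2 huB
      have heB : (e : α) ∈ B := by exact_mod_cast e.2
      have h2 : GB.Reachable e ⟨d0, hd0B⟩ := by
        have := clique_reach G B hclB (Finset.mem_inter.2 ⟨heB, heA⟩)
          (Finset.mem_inter.2 ⟨(Finset.mem_inter.1 hd0).2, (Finset.mem_inter.1 hd0).1⟩)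
          e.2 hd0B
        simpa using this
      exact her.symm.trans h2
  have reachAd0 : ∀ {u v : (↑(A ∪ B) : Set α)}, Gs.Walk u v → ∀ hv : (v : α) ∈ (↑A : Set α),
      (u : α) ∈ B → GA.Reachable ⟨↑v, hv⟩ ⟨d0, hd0A⟩ := by
    intro u v w hv huB
    by_cases huA : (u : α) ∈ A
    · have h1 := (HA _ _ w hv).1 (by exact_mod_cast huA)
      have h2 : GA.Reachable ⟨↑u, by exact_mod_cast huA⟩ ⟨d0, hd0A⟩ :=
        clique_reach G A hcl (Finset.mem_inter.2 ⟨huA, huB⟩) hd0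
          (by exact_mod_cast huA) hd0A
      exact h1.symm.trans h2
    · obtain ⟨e, heB, her⟩ := (HA _ _ w hv).2 huA
      have heA : (e : α) ∈ A := by exact_mod_cast e.2
      have h2 : GA.Reachable e ⟨d0, hd0A⟩ := by
        have := clique_reach G A hcl (Finset.mem_inter.2 ⟨heA, heB⟩) hd0 e.2 hd0A
        simpa using this
      exact her.symm.trans h2
  -- the vertex-level function
  set f : (↑(A ∪ B) : Set α) →
      ({x : GA.ConnectedComponent // x ≠ cA0} ⊕ GB.ConnectedComponent) :=
    fun v => if hv : (v : α) ∈ A then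
        (if hr : GA.Reachable ⟨↑v, by exact_mod_cast hv⟩ ⟨d0, hd0A⟩ then Sum.inr cB0
         else Sum.inl ⟨GA.connectedComponentMk ⟨↑v, by exact_mod_cast hv⟩,
            fun hc => hr (SimpleGraph.ConnectedComponent.exact hc)⟩)
      else Sum.inr (GB.connectedComponentMk ⟨↑v, memB v hv⟩) with hf
  have hwd : ∀ u v : (↑(A ∪ B) : Set α), Gs.Reachable u v → f u = f v := by
    intro u v hr
    obtain ⟨w⟩ := hr
    by_cases hu : (u : α) ∈ A <;> by_cases hv : (v : α) ∈ A
    · -- both in A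
      have hreach := (HA _ _ w (by exact_mod_cast hv)).1 (by exact_mod_cast hu)
      by_cases hru : GA.Reachable ⟨↑u, by exact_mod_cast hu⟩ ⟨d0, hd0A⟩
      · have hrv : GA.Reachable ⟨↑v, by exact_mod_cast hv⟩ ⟨d0, hd0A⟩ :=
          hreach.symm.trans hru
        simp only [hf, dif_pos hu, dif_pos hv, dif_pos hru, dif_pos hrv]
      · have hrv : ¬ GA.Reachable ⟨↑v, by exact_mod_cast hv⟩ ⟨d0, hd0A⟩ :=
          fun h => hru (hreach.trans h)
        simp only [hf, dif_pos hu, dif_pos hv, dif_neg hru, dif_neg hrv]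
        exact congrArg Sum.inl (Subtype.ext (SimpleGraph.ConnectedComponent.sound hreach))
    · -- u ∈ A, v ∉ A
      have hvB := memB v hv
      have hru : GA.Reachable ⟨↑u, by exact_mod_cast hu⟩ ⟨d0, hd0A⟩ := by
        have := reachAd0 w.reverse (by exact_mod_cast hu) (by exact_mod_cast hvB)
        exact this
      have hBv : GB.Reachable ⟨↑v, hvB⟩ ⟨d0, hd0B⟩ := reachBd0 w hvB hu
      simp only [hf, dif_pos hu, dif_neg hv, dif_pos hru]
      exact congrArg Sum.inr (SimpleGraph.ConnectedComponent.sound hBv).symm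
    · -- u ∉ A, v ∈ A
      have huB := memB u hu
      have hrv : GA.Reachable ⟨↑v, by exact_mod_cast hv⟩ ⟨d0, hd0A⟩ :=
        reachAd0 w (by exact_mod_cast hv) (by exact_mod_cast huB)
      have hBu : GB.Reachable ⟨↑u, huB⟩ ⟨d0, hd0B⟩ := reachBd0 w.reverse huB hv
      simp only [hf, dif_neg hu, dif_pos hv, dif_pos hrv]
      exact congrArg Sum.inr (SimpleGraph.ConnectedComponent.sound hBu)
    · -- both ∉ A
      have huB := memB u hu
      have hvB := memB v hv
      have hreach := (HB _ _ w hvB).1 huB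
      simp only [hf, dif_neg hu, dif_neg hv]
      exact congrArg Sum.inr (SimpleGraph.ConnectedComponent.sound hreach)
  set F : Gs.ConnectedComponent →
      ({x : GA.ConnectedComponent // x ≠ cA0} ⊕ GB.ConnectedComponent) :=
    SimpleGraph.ConnectedComponent.lift f (fun v w p _ => hwd v w ⟨p⟩) with hF
  have hAsub : (↑A : Set α) ⊆ (↑(A ∪ B) : Set α) := by
    exact_mod_cast Finset.coe_subset.2 Finset.subset_union_left
  have hBsub : (↑B : Set α) ⊆ (↑(A ∪ B) : Set α) := by
    exact_mod_cast Finset.coe_subset.2 Finset.subset_union_right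
  set homA : GA →g Gs := (G.induceHomOfLE hAsub).toHom with hhomA
  set homB : GB →g Gs := (G.induceHomOfLE hBsub).toHom with hhomB
  set g : ({x : GA.ConnectedComponent // x ≠ cA0} ⊕ GB.ConnectedComponent) →
      Gs.ConnectedComponent :=
    Sum.elim (fun x => (x : GA.ConnectedComponent ).map homA) (fun y => y.map homB) with hg
  have hgF : ∀ c, g (F c) = c := by
    apply SimpleGraph.ConnectedComponent.ind
    intro v
    show g (f v) = Gs.connectedComponentMk v
    by_cases hv : (v : α) ∈ A
    · by_cases hr : GA.Reachable ⟨↑v, by exact_mod_cast hv⟩ ⟨d0, hd0A⟩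
      · simp only [hf, dif_pos hv, dif_pos hr, hg, Sum.elim_inr, hcB0,
          SimpleGraph.ConnectedComponent.map_mk]
        apply SimpleGraph.ConnectedComponent.sound
        have := SimpleGraph.Reachable.map homA hr
        have h2 : Gs.Reachable v (homA ⟨d0, hd0A⟩) := by
          have hveq : homA ⟨↑v, by exact_mod_cast hv⟩ = v := Subtype.ext rfl
          rwa [hveq] at this
        have h3 : homB ⟨d0, hd0B⟩ = homA ⟨d0, hd0A⟩ := Subtype.ext rfl
        rw [h3]
        exact h2.symm
      · simp only [hf, dif_pos hv, dif_neg hr, hg, Sum.elim_inl,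
          SimpleGraph.ConnectedComponent.map_mk]
        exact congrArg Gs.connectedComponentMk (Subtype.ext rfl)
    · simp only [hf, dif_neg hv, hg, Sum.elim_inr, SimpleGraph.ConnectedComponent.map_mk]
      exact congrArg Gs.connectedComponentMk (Subtype.ext rfl)
  have hFg : ∀ x, F (g x) = x := by
    rintro (⟨xc, hne⟩ | yc)
    · revert hne
      refine SimpleGraph.ConnectedComponent.ind (fun a => ?_) xc
      intro hne
      show F (SimpleGraph.ConnectedComponent.map homA (GA.connectedComponentMk a)) = _
      rw [SimpleGraph.ConnectedComponent.map_mk]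
      show f (homA a) = _
      have haA : ((homA a : (↑(A ∪ B) : Set α)) : α) ∈ A := by exact_mod_cast a.2
      have hsub : (⟨↑(homA a), by exact_mod_cast haA⟩ : (↑A : Set α)) = a := Subtype.ext rfl
      by_cases hr : GA.Reachable ⟨↑(homA a), by exact_mod_cast haA⟩ ⟨d0, hd0A⟩
      · exfalso
        apply hne
        exact SimpleGraph.ConnectedComponent.sound (hsub ▸ hr : GA.Reachable a ⟨d0, hd0A⟩)
      · simp only [hf, dif_pos haA, dif_neg hr]
        exact congrArg Sum.inl (Subtype.ext (congrArg GA.connectedComponentMk hsub))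
    · refine SimpleGraph.ConnectedComponent.ind (fun b => ?_) yc
      show F (SimpleGraph.ConnectedComponent.map homB (GB.connectedComponentMk b)) = _
      rw [SimpleGraph.ConnectedComponent.map_mk]
      show f (homB b) = _
      have hbB : (b : α) ∈ B := by exact_mod_cast b.2
      by_cases hb : ((homB b : (↑(A ∪ B) : Set α)) : α) ∈ A
      · have hbAB : (b : α) ∈ A ∩ B := Finset.mem_inter.2 ⟨hb, hbB⟩
        have hr : GA.Reachable ⟨↑(homB b), by exact_mod_cast hb⟩ ⟨d0, hd0A⟩ :=
          clique_reach G A hcl hbAB hd0 (by exact_mod_cast hb) hd0A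
        simp only [hf, dif_pos hb, dif_pos hr]
        refine congrArg Sum.inr ?_
        apply SimpleGraph.ConnectedComponent.sound
        have := clique_reach G B hclB
          (Finset.mem_inter.2 ⟨(Finset.mem_inter.1 hd0).2, (Finset.mem_inter.1 hd0).1⟩)
          (Finset.mem_inter.2 ⟨hbB, hb⟩) hd0B b.2
        simpa using this
      · simp only [hf, dif_neg hb]
        exact congrArg Sum.inr (congrArg GB.connectedComponentMk (Subtype.ext rfl))
  have e : Gs.ConnectedComponent ≃
      ({x : GA.ConnectedComponent // x ≠ cA0} ⊕ GB.ConnectedComponent) :=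
    ⟨F, g, hgF, hFg⟩
  have h1 : cnt G (A ∪ B) =
      Nat.card {x : GA.ConnectedComponent // x ≠ cA0} + Nat.card GB.ConnectedComponent := by
    rw [cnt, Nat.card_congr e, Nat.card_sum]
  have h2 : cnt G A = 1 + Nat.card {x : GA.ConnectedComponent // x ≠ cA0} := by
    have e2 : GA.ConnectedComponent ≃
        ({x : GA.ConnectedComponent // x = cA0} ⊕ {x : GA.ConnectedComponent // x ≠ cA0}) :=
      (Equiv.sumCompl (· = cA0)).symm
    have e3 : {x : GA.ConnectedComponent // x = cA0} ≃ PUnit.{1} :=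
      ⟨fun _ => PUnit.unit, fun _ => ⟨cA0, rfl⟩, by rintro ⟨x, rfl⟩; rfl, fun _ => rfl⟩
    rw [cnt, Nat.card_congr e2, Nat.card_sum, Nat.card_congr e3]
    simp
  have h3 : cnt G B = Nat.card GB.ConnectedComponent := rfl
  omega



lemma cnt_union_disjoint (G : SimpleGraph α) (A B : Finset α)
    (hedge : ∀ u v : α, u ∈ A ∪ B → v ∈ A ∪ B → G.Adj u v →
      (u ∈ A ∧ v ∈ A) ∨ (u ∈ B ∧ v ∈ B))
    (hdisj : A ∩ B = ∅) :
    cnt G (A ∪ B) = cnt G A + cnt G B := by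
  classical
  set GA := G.induce (↑A : Set α) with hGA
  set GB := G.induce (↑B : Set α) with hGB
  set Gs := G.induce (↑(A ∪ B) : Set α) with hGs
  have hcl : G.IsClique (↑(A ∩ B) : Set α) := by simp [hdisj]
  have hclB : G.IsClique (↑(B ∩ A) : Set α) := by rwa [Finset.inter_comm]
  have hedge' : ∀ u v : α, u ∈ A ∪ B → v ∈ A ∪ B → G.Adj u v →
      (u ∈ B ∧ v ∈ B) ∨ (u ∈ A ∧ v ∈ A) := fun u v hu hv h => (hedge u v hu hv h).symm
  have HA := reach_left G A B (A ∪ B) rfl hedge hcl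
  have HB := reach_left G B A (A ∪ B) (Finset.union_comm B A) hedge' hclB
  have memB : ∀ v : (↑(A ∪ B) : Set α), (v : α) ∉ A → (v : α) ∈ (↑B : Set α) := by
    intro v hv
    have : (v : α) ∈ A ∪ B := by exact_mod_cast v.2
    have := Finset.mem_union.1 this
    simp only [Finset.mem_coe]; tauto
  set f : (↑(A ∪ B) : Set α) → (GA.ConnectedComponent ⊕ GB.ConnectedComponent) :=
    fun v => if hv : (v : α) ∈ A then
        Sum.inl (GA.connectedComponentMk ⟨↑v, by exact_mod_cast hv⟩)
      else Sum.inr (GB.connectedComponentMk ⟨↑v, memB v hv⟩) with hf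
  have hwd : ∀ u v : (↑(A ∪ B) : Set α), Gs.Reachable u v → f u = f v := by
    intro u v hr
    obtain ⟨w⟩ := hr
    by_cases hu : (u : α) ∈ A <;> by_cases hv : (v : α) ∈ A
    · have hreach := (HA _ _ w (by exact_mod_cast hv)).1 (by exact_mod_cast hu)
      simp only [hf, dif_pos hu, dif_pos hv]
      exact congrArg Sum.inl (SimpleGraph.ConnectedComponent.sound hreach)
    · exfalso
      obtain ⟨e, heB, _⟩ := (HA _ _ w.reverse (by exact_mod_cast hu)).2 hv
      have heA : (e : α) ∈ A := by exact_mod_cast e.2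
      have : (e : α) ∈ A ∩ B := Finset.mem_inter.2 ⟨heA, heB⟩
      rw [hdisj] at this
      exact absurd this (Finset.notMem_empty _)
    · exfalso
      obtain ⟨e, heB, _⟩ := (HA _ _ w (by exact_mod_cast hv)).2 hu
      have heA : (e : α) ∈ A := by exact_mod_cast e.2
      have : (e : α) ∈ A ∩ B := Finset.mem_inter.2 ⟨heA, heB⟩
      rw [hdisj] at this
      exact absurd this (Finset.notMem_empty _)
    · have hreach := (HB _ _ w (memB v hv)).1 (memB u hu)
      simp only [hf, dif_neg hu, dif_neg hv]
      exact congrArg Sum.inr (SimpleGraph.ConnectedComponent.sound hreach)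
  set F : Gs.ConnectedComponent → (GA.ConnectedComponent ⊕ GB.ConnectedComponent) :=
    SimpleGraph.ConnectedComponent.lift f (fun v w p _ => hwd v w ⟨p⟩) with hF
  have hAsub : (↑A : Set α) ⊆ (↑(A ∪ B) : Set α) := by
    exact_mod_cast Finset.coe_subset.2 Finset.subset_union_left
  have hBsub : (↑B : Set α) ⊆ (↑(A ∪ B) : Set α) := by
    exact_mod_cast Finset.coe_subset.2 Finset.subset_union_right
  set homA : GA →g Gs := (G.induceHomOfLE hAsub).toHom with hhomA
  set homB : GB →g Gs := (G.induceHomOfLE hBsub).toHom with hhomB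
  set g : (GA.ConnectedComponent ⊕ GB.ConnectedComponent) → Gs.ConnectedComponent :=
    Sum.elim (fun x => x.map homA) (fun y => y.map homB) with hg
  have hgF : ∀ c, g (F c) = c := by
    apply SimpleGraph.ConnectedComponent.ind
    intro v
    show g (f v) = Gs.connectedComponentMk v
    by_cases hv : (v : α) ∈ A
    · simp only [hf, dif_pos hv, hg, Sum.elim_inl, SimpleGraph.ConnectedComponent.map_mk]
      exact congrArg Gs.connectedComponentMk (Subtype.ext rfl)
    · simp only [hf, dif_neg hv, hg, Sum.elim_inr, SimpleGraph.ConnectedComponent.map_mk]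
      exact congrArg Gs.connectedComponentMk (Subtype.ext rfl)
  have hFg : ∀ x, F (g x) = x := by
    rintro (xc | yc)
    · refine SimpleGraph.ConnectedComponent.ind (fun a => ?_) xc
      show F (SimpleGraph.ConnectedComponent.map homA (GA.connectedComponentMk a)) = _
      rw [SimpleGraph.ConnectedComponent.map_mk]
      show f (homA a) = _
      have haA : ((homA a : (↑(A ∪ B) : Set α)) : α) ∈ A := by exact_mod_cast a.2
      simp only [hf, dif_pos haA]
      exact congrArg Sum.inl (congrArg GA.connectedComponentMk (Subtype.ext rfl))
    · refine SimpleGraph.ConnectedComponent.ind (fun b => ?_) yc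
      show F (SimpleGraph.ConnectedComponent.map homB (GB.connectedComponentMk b)) = _
      rw [SimpleGraph.ConnectedComponent.map_mk]
      show f (homB b) = _
      have hbB : (b : α) ∈ B := by exact_mod_cast b.2
      have hbA : ((homB b : (↑(A ∪ B) : Set α)) : α) ∉ A := by
        intro hcon
        have : (b : α) ∈ A ∩ B := Finset.mem_inter.2 ⟨hcon, hbB⟩
        rw [hdisj] at this
        exact absurd this (Finset.notMem_empty _)
      simp only [hf, dif_neg hbA]
      exact congrArg Sum.inr (congrArg GB.connectedComponentMk (Subtype.ext rfl))
  have e : Gs.ConnectedComponent ≃ (GA.ConnectedComponent ⊕ GB.ConnectedComponent) :=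
    ⟨F, g, hgF, hFg⟩
  show Nat.card Gs.ConnectedComponent = Nat.card GA.ConnectedComponent + Nat.card GB.ConnectedComponent
  rw [Nat.card_congr e, Nat.card_sum]



noncomputable def b0 (G : SimpleGraph α) (s : Finset α) : ℚ :=
  if s.Nonempty then (cnt G s : ℚ) - 1 else 0

lemma cnt_empty (G : SimpleGraph α) : cnt G ∅ = 0 := by
  have h1 : IsEmpty ((↑(∅ : Finset α) : Set α)) := by simp
  have : IsEmpty (G.induce (↑(∅ : Finset α) : Set α)).ConnectedComponent :=
    ⟨fun c => c.ind (fun v => (IsEmpty.false v).elim)⟩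
  simp [cnt, Nat.card_of_isEmpty]

lemma cnt_pos (G : SimpleGraph α) {s : Finset α} (hs : s.Nonempty) : 0 < cnt G s := by
  obtain ⟨a, ha⟩ := hs
  have : Nonempty (G.induce (↑s : Set α)).ConnectedComponent :=
    ⟨SimpleGraph.connectedComponentMk _ ⟨a, by exact_mod_cast ha⟩⟩
  exact Nat.card_pos

lemma b0_union (G : SimpleGraph α) (A B : Finset α)
    (hedge : ∀ u v : α, u ∈ A ∪ B → v ∈ A ∪ B → G.Adj u v →
      (u ∈ A ∧ v ∈ A) ∨ (u ∈ B ∧ v ∈ B))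
    (hcl : G.IsClique (↑(A ∩ B) : Set α)) :
    b0 G (A ∪ B) = b0 G A + b0 G B +
      (if A.Nonempty ∧ B.Nonempty ∧ A ∩ B = ∅ then 1 else 0) := by
  by_cases hAB : (A ∩ B).Nonempty
  · have hA : A.Nonempty := ⟨hAB.choose, (Finset.mem_inter.1 hAB.choose_spec).1⟩
    have hB : B.Nonempty := ⟨hAB.choose, (Finset.mem_inter.1 hAB.choose_spec).2⟩
    have hU : (A ∪ B).Nonempty := hA.mono Finset.subset_union_left
    have hcnt := cnt_union_inter_nonempty G A B hedge hcl hAB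
    have hne : ¬ (A.Nonempty ∧ B.Nonempty ∧ A ∩ B = ∅) := by
      rintro ⟨-, -, h⟩
      rw [h] at hAB
      exact Finset.not_nonempty_empty hAB
    rw [b0, b0, b0, if_pos hA, if_pos hB, if_pos hU, if_neg hne]
    have : (cnt G (A ∪ B) : ℚ) + 1 = cnt G A + cnt G B := by exact_mod_cast hcnt
    linarith
  · have hdisj : A ∩ B = ∅ := Finset.not_nonempty_iff_eq_empty.1 hAB
    have hcnt := cnt_union_disjoint G A B hedge hdisj
    by_cases hA : A.Nonempty <;> by_cases hB : B.Nonempty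
    · have hU : (A ∪ B).Nonempty := hA.mono Finset.subset_union_left
      rw [b0, b0, b0, if_pos hA, if_pos hB, if_pos hU, if_pos ⟨hA, hB, hdisj⟩]
      have : (cnt G (A ∪ B) : ℚ) = cnt G A + cnt G B := by exact_mod_cast hcnt
      linarith
    · have hBe : B = ∅ := Finset.not_nonempty_iff_eq_empty.1 hB
      subst hBe
      simp [b0, Finset.union_empty, hA, hB]
    · have hAe : A = ∅ := Finset.not_nonempty_iff_eq_empty.1 hA
      subst hAe
      simp [b0, Finset.empty_union, hB]
    · have hAe : A = ∅ := Finset.not_nonempty_iff_eq_empty.1 hA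
      have hBe : B = ∅ := Finset.not_nonempty_iff_eq_empty.1 hB
      subst hAe; subst hBe
      simp [b0]


lemma choose_inv_split (n a : ℕ) (h : a ≤ n) :
    (1 : ℚ) / (((n : ℚ) + 1) * (n.choose a : ℚ)) =
      1 / (((n : ℚ) + 2) * ((n + 1).choose a : ℚ)) +
      1 / (((n : ℚ) + 2) * ((n + 1).choose (a + 1) : ℚ)) := by
  obtain ⟨k, rfl⟩ := Nat.le.dest h
  have h1 : ((a + k).choose a : ℚ) = (a + k)! / (a ! * k !) := by
    rw [Nat.cast_choose ℚ (Nat.le_add_right a k), Nat.add_sub_cancel_left]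
  have h2 : ((a + k + 1).choose a : ℚ) = (a + k + 1)! / (a ! * (k + 1)!) := by
    have e : a + k + 1 - a = k + 1 := by omega
    rw [Nat.cast_choose ℚ (by omega), e]
  have h3 : ((a + k + 1).choose (a + 1) : ℚ) = (a + k + 1)! / ((a + 1)! * k !) := by
    have e : a + k + 1 - (a + 1) = k := by omega
    rw [Nat.cast_choose ℚ (by omega), e]
  have hfa : (a ! : ℚ) ≠ 0 := by exact_mod_cast (Nat.factorial_ne_zero a)
  have hfk : (k ! : ℚ) ≠ 0 := by exact_mod_cast (Nat.factorial_ne_zero k)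
  have hfak : ((a + k)! : ℚ) ≠ 0 := by exact_mod_cast (Nat.factorial_ne_zero (a + k))
  have hs1 : ((a + k + 1)! : ℚ) = ((a : ℚ) + k + 1) * (a + k)! := by
    rw [Nat.factorial_succ]; push_cast; ring
  have hs2 : ((a + 1)! : ℚ) = ((a : ℚ) + 1) * a ! := by
    rw [Nat.factorial_succ]; push_cast; ring
  have hs3 : ((k + 1)! : ℚ) = ((k : ℚ) + 1) * k ! := by
    rw [Nat.factorial_succ]; push_cast; ring
  rw [h1, h2, h3, hs1, hs2, hs3]
  have hne1 : ((a : ℚ) + k + 1) ≠ 0 := by positivity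
  have hne2 : ((a : ℚ) + 1) ≠ 0 := by positivity
  have hne3 : ((k : ℚ) + 1) ≠ 0 := by positivity
  have hne4 : ((a : ℚ) + k + 2) ≠ 0 := by positivity
  push_cast
  field_simp
  ring

lemma sum_choose_div (m : ℕ) : ∀ (n a : ℕ), a ≤ n →
    ∑ j ∈ Finset.range (m + 1), ((m.choose j : ℚ) / (((n + m).choose (a + j) : ℚ))) =
      (((n : ℚ) + m) + 1) / ((((n : ℚ)) + 1) * ((n.choose a : ℚ))) := by
  induction m with
  | zero =>
    intro n a h
    have hpos : (0 : ℚ) < (n.choose a : ℚ) := by exact_mod_cast Nat.choose_pos h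
    have h1 : (0:ℕ) + 1 = 1 := rfl
    rw [h1, Finset.sum_range_one]
    norm_num
    field_simp
  | succ m ih =>
    intro n a h
    have key : ∑ j ∈ Finset.range (m + 2), (((m + 1).choose j : ℚ) / (((n + (m + 1)).choose (a + j) : ℚ)))
        = ∑ j ∈ Finset.range (m + 1), ((m.choose j : ℚ) / (((n + 1 + m).choose (a + j) : ℚ)))
        + ∑ j ∈ Finset.range (m + 1), ((m.choose j : ℚ) / (((n + 1 + m).choose (a + 1 + j) : ℚ))) := by
      rw [Finset.sum_range_succ' (fun j => (((m + 1).choose j : ℚ) / (((n + (m + 1)).choose (a + j) : ℚ)))) (m + 1)]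
      have hterm : ∀ j, (((m + 1).choose (j + 1) : ℚ) / (((n + (m + 1)).choose (a + (j + 1)) : ℚ)))
          = ((m.choose j : ℚ) / (((n + 1 + m).choose (a + 1 + j) : ℚ)))
          + ((m.choose (j + 1) : ℚ) / (((n + 1 + m).choose (a + (j + 1)) : ℚ))) := by
        intro j
        rw [Nat.choose_succ_succ]
        have e1 : n + (m + 1) = n + 1 + m := by omega
        have e2 : a + (j + 1) = a + 1 + j := by omega
        rw [e1, e2]
        push_cast
        rw [_root_.add_div]
      rw [Finset.sum_congr rfl (fun j _ => hterm j)]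
      rw [Finset.sum_add_distrib]
      have last0 : (m.choose (m + 1) : ℚ) = 0 := by
        rw [Nat.choose_eq_zero_of_lt (by omega)]; norm_num
      have hre : ∑ j ∈ Finset.range (m + 1), ((m.choose (j + 1) : ℚ) / (((n + 1 + m).choose (a + (j + 1)) : ℚ)))
          + ((m + 1).choose 0 : ℚ) / (((n + (m + 1)).choose (a + 0) : ℚ))
          = ∑ j ∈ Finset.range (m + 2), ((m.choose j : ℚ) / (((n + 1 + m).choose (a + j) : ℚ))) := by
        rw [Finset.sum_range_succ' (fun j => ((m.choose j : ℚ) / (((n + 1 + m).choose (a + j) : ℚ)))) (m + 1)]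
        congr 1
        have e1 : n + (m + 1) = n + 1 + m := by omega
        rw [e1]
        simp
      have : ∑ j ∈ Finset.range (m + 2), ((m.choose j : ℚ) / (((n + 1 + m).choose (a + j) : ℚ)))
          = ∑ j ∈ Finset.range (m + 1), ((m.choose j : ℚ) / (((n + 1 + m).choose (a + j) : ℚ))) := by
        rw [Finset.sum_range_succ, last0]
        simp
      linarith [hre, this]
    rw [key, ih (n + 1) a (by omega), ih (n + 1) (a + 1) (by omega)]
    have hsplit := choose_inv_split n a h
    have hC : (0 : ℚ) < (n.choose a : ℚ) := by exact_mod_cast Nat.choose_pos h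
    have hC1 : (0 : ℚ) < ((n + 1).choose a : ℚ) := by
      exact_mod_cast Nat.choose_pos (by omega)
    have hC2 : (0 : ℚ) < ((n + 1).choose (a + 1) : ℚ) := by
      exact_mod_cast Nat.choose_pos (by omega)
    push_cast at hsplit ⊢
    have hn2 : ((n : ℚ) + 2) ≠ 0 := by positivity
    have hn1 : ((n : ℚ) + 1) ≠ 0 := by positivity
    field_simp at hsplit ⊢
    nlinarith [hsplit]



/-- Reindexing the sum over all subsets by intersection with `U`. -/
lemma sum_inter_div (U : Finset α) (g : Finset α → ℚ) :
    ∑ W : Finset α, g (W ∩ U) / (((Fintype.card α).choose W.card : ℚ)) =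
      ((Fintype.card α : ℚ) + 1) / ((U.card : ℚ) + 1) *
        ∑ A ∈ U.powerset, g A / ((U.card.choose A.card : ℚ)) := by
  classical
  set N := Fintype.card α with hN
  have step1 : ∑ W : Finset α, g (W ∩ U) / ((N.choose W.card : ℚ)) =
      ∑ p ∈ U.powerset ×ˢ Uᶜ.powerset, g p.1 / ((N.choose (p.1.card + p.2.card) : ℚ)) := by
    refine Finset.sum_bij' (fun W _ => (W ∩ U, W \ U)) (fun p _ => p.1 ∪ p.2) ?_ ?_ ?_ ?_ ?_
    · intro W _
      rw [Finset.mem_product]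
      constructor
      · exact Finset.mem_powerset.2 Finset.inter_subset_right
      · exact Finset.mem_powerset.2 (by intro x hx; simp only [Finset.mem_compl]
                                        exact (Finset.mem_sdiff.1 hx).2)
    · intro p _
      exact Finset.mem_univ _
    · intro W _
      simp only
      ext x
      simp only [Finset.mem_union, Finset.mem_inter, Finset.mem_sdiff]
      tauto
    · intro p hp
      rw [Finset.mem_product] at hp
      have h1 : p.1 ⊆ U := Finset.mem_powerset.1 hp.1
      have h2 : ∀ x ∈ p.2, x ∉ U := by
        intro x hx
        have := Finset.mem_powerset.1 hp.2 hx
        simpa using this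
      have e1 : (p.1 ∪ p.2) ∩ U = p.1 := by
        ext x
        simp only [Finset.mem_inter, Finset.mem_union]
        constructor
        · rintro ⟨hx | hx, hxU⟩
          · exact hx
          · exact absurd hxU (h2 x hx)
        · intro hx
          exact ⟨Or.inl hx, h1 hx⟩
      have e2 : (p.1 ∪ p.2) \ U = p.2 := by
        ext x
        simp only [Finset.mem_sdiff, Finset.mem_union]
        constructor
        · rintro ⟨hx | hx, hxU⟩
          · exact absurd (h1 hx) hxU
          · exact hx
        · intro hx
          exact ⟨Or.inr hx, h2 x hx⟩
      simp only [e1, e2]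
    · intro W _
      have hc : W.card = (W ∩ U).card + (W \ U).card :=
        (Finset.card_inter_add_card_sdiff W U).symm
      rw [hc]
  rw [step1, Finset.sum_product]
  have inner : ∀ A ∈ U.powerset,
      ∑ B ∈ Uᶜ.powerset, g A / ((N.choose (A.card + B.card) : ℚ)) =
        g A * (((N : ℚ) + 1) / (((U.card : ℚ) + 1) * ((U.card.choose A.card : ℚ)))) := by
    intro A hA
    have hAU : A ⊆ U := Finset.mem_powerset.1 hA
    have haU : A.card ≤ U.card := Finset.card_le_card hAU
    have hsum : ∑ B ∈ Uᶜ.powerset, g A / ((N.choose (A.card + B.card) : ℚ)) =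
        ∑ B ∈ Uᶜ.powerset, g A * (1 / ((N.choose (A.card + B.card) : ℚ))) := by
      refine Finset.sum_congr rfl fun B _ => ?_
      ring
    rw [hsum, ← Finset.mul_sum]
    congr 1
    have happ := Finset.sum_powerset_apply_card
      (fun mm => (1 : ℚ) / ((N.choose (A.card + mm) : ℚ))) (x := Uᶜ)
    rw [happ]
    have hcompl : U.card + Uᶜ.card = N := by
      rw [Finset.card_compl]
      have := Finset.card_le_univ U
      omega
    have hN' : N = U.card + Uᶜ.card := hcompl.symm
    calc ∑ mm ∈ Finset.range (Uᶜ.card + 1),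
          (Uᶜ.card.choose mm) • ((1 : ℚ) / ((N.choose (A.card + mm) : ℚ)))
        = ∑ mm ∈ Finset.range (Uᶜ.card + 1),
          ((Uᶜ.card.choose mm : ℚ) / (((U.card + Uᶜ.card).choose (A.card + mm) : ℚ))) := by
          refine Finset.sum_congr rfl fun mm _ => ?_
          rw [← hN', nsmul_eq_mul]
          ring
      _ = (((U.card : ℚ) + Uᶜ.card) + 1) / (((U.card : ℚ) + 1) * ((U.card.choose A.card : ℚ))) :=
          sum_choose_div Uᶜ.card U.card A.card haU
      _ = ((N : ℚ) + 1) / (((U.card : ℚ) + 1) * ((U.card.choose A.card : ℚ))) := by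
          rw [hN']
          push_cast
          ring_nf
  rw [Finset.sum_congr rfl inner, Finset.mul_sum]
  refine Finset.sum_congr rfl fun A hA => ?_
  have hC : ((U.card.choose A.card : ℚ)) ≠ 0 := by
    have : 0 < U.card.choose A.card :=
      Nat.choose_pos (Finset.card_le_card (Finset.mem_powerset.1 hA))
    exact_mod_cast this.ne'
  have hu : ((U.card : ℚ) + 1) ≠ 0 := by positivity
  field_simp








lemma tau0_eq (G : SimpleGraph α) :
    tau0 G = ((Fintype.card α : ℚ) + 1)⁻¹ *
      ∑ W : Finset α, b0 G W / (((Fintype.card α).choose W.card : ℚ)) := rfl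

lemma tau0_induce (G : SimpleGraph α) (V : Finset α) :
    tau0 (G.induce (↑V : Set α)) =
      ((V.card : ℚ) + 1)⁻¹ * ∑ A ∈ V.powerset, b0 G A / ((V.card.choose A.card : ℚ)) := by
  classical
  letI : DecidablePred (· ∈ (↑V : Set α)) := fun x => decidable_of_iff (x ∈ V) (by simp)
  have hcard : Fintype.card (↑V : Set α) = V.card := by
    rw [← Set.toFinset_card, Finset.toFinset_coe]
  rw [tau0]
  congr 1
  · rw [hcard]
  · -- reindex the sum
    simp only [hcard]
    refine Finset.sum_bij' (fun (W : Finset (↑V : Set α)) _ => W.map (Function.Embedding.subtype _))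
      (fun A _ => A.subtype (· ∈ (↑V : Set α))) ?_ ?_ ?_ ?_ ?_
    · intro W _
      refine Finset.mem_powerset.2 ?_
      intro x hx
      obtain ⟨b, _, rfl⟩ := Finset.mem_map.1 hx
      exact_mod_cast b.2
    · intro A _
      exact Finset.mem_univ _
    · intro W _
      ext x
      rw [Finset.mem_subtype, Finset.mem_map]
      constructor
      · rintro ⟨b, hb, heq⟩
        have hbx : b = x := Subtype.ext heq
        rwa [← hbx]
      · intro hx
        exact ⟨x, hx, rfl⟩
    · intro A hA
      refine Finset.subtype_map_of_mem ?_
      intro x hx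
      exact_mod_cast Finset.mem_powerset.1 hA hx
    · intro W _
      have hc : (W.map (Function.Embedding.subtype _)).card = W.card := Finset.card_map _
      have hne : (W.map (Function.Embedding.subtype (· ∈ (↑V : Set α)))).Nonempty ↔ W.Nonempty := by
        simp [Finset.map_nonempty]
      have hcnt : Nat.card ((G.induce (↑V : Set α)).induce
            (↑W : Set (↑V : Set α))).ConnectedComponent =
          cnt G (W.map (Function.Embedding.subtype _)) := by
        rw [cnt]
        refine Nat.card_congr (SimpleGraph.Iso.connectedComponentEquiv ?_)
        refine induceIso _ _ _ _ ?_ ?_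
        · refine ⟨fun x => ⟨x.1.1, ?_⟩, fun y => ⟨⟨y.1, ?_⟩, ?_⟩, ?_, ?_⟩
          · simp only [Finset.coe_map, Set.mem_image, Finset.mem_coe]
            exact ⟨x.1, x.2, rfl⟩
          · -- y.1 ∈ ↑V
            have hy := y.2
            simp only [Finset.coe_map, Set.mem_image, Finset.mem_coe] at hy
            obtain ⟨b, _, heq⟩ := hy
            exact heq ▸ b.2
          · -- membership in W
            have hy := y.2
            simp only [Finset.coe_map, Set.mem_image, Finset.mem_coe] at hy
            obtain ⟨b, hb, heq⟩ := hy
            have : b = ⟨y.1, by rw [← heq]; exact b.2⟩ := Subtype.ext (by rw [← heq]; rfl)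
            simp only [Finset.mem_coe]
            rw [← this]
            exact hb
          · intro x
            exact Subtype.ext (Subtype.ext rfl)
          · intro y
            exact Subtype.ext rfl
        · intro a b
          exact Iff.rfl
      simp only [b0, hcnt, hc, hne]

lemma cnt_congr (G H : SimpleGraph α) (s : Finset α)
    (h : ∀ u ∈ s, ∀ v ∈ s, (G.Adj u v ↔ H.Adj u v)) : cnt G s = cnt H s :=
  cc_card_congr (induceIso G H _ _ (Equiv.refl _)
    (fun a b => by simpa using h a (by exact_mod_cast a.2) b (by exact_mod_cast b.2)))

lemma b0_congr (G H : SimpleGraph α) (s : Finset α)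
    (h : ∀ u ∈ s, ∀ v ∈ s, (G.Adj u v ↔ H.Adj u v)) : b0 G s = b0 H s := by
  rw [b0, b0, cnt_congr G H s h]

lemma ind_eq (A B : Finset α) :
    (if A.Nonempty ∧ B.Nonempty ∧ A ∩ B = ∅ then (1 : ℚ) else 0)
      = (if A ∩ B = ∅ then (1 : ℚ) else 0) - (if A = ∅ then (1 : ℚ) else 0)
        - (if B = ∅ then (1 : ℚ) else 0) + (if A ∪ B = ∅ then (1 : ℚ) else 0) := by
  by_cases hA : A = ∅ <;> by_cases hB : B = ∅ <;> by_cases hAB : A ∩ B = ∅ <;>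
    simp_all [Finset.nonempty_iff_ne_empty, Finset.union_eq_empty]

lemma sum_iE (U : Finset α) :
    ∑ A ∈ U.powerset, (if A = ∅ then (1 : ℚ) else 0) / ((U.card.choose A.card : ℚ)) = 1 := by
  rw [Finset.sum_eq_single_of_mem ∅ (Finset.empty_mem_powerset U)]
  · simp
  · intro A _ hA
    simp [hA]

end Tau0Aux

open Tau0Aux in
/-- the `i = 0` case of the connected-sum formula: let `G₁`, `G₂` be graphs
supported on vertex sets `V₁`, `V₂` with `V₁ ∪ V₂` the whole vertex set,
`D = V₁ ∩ V₂` a `(d+1)`-element set that is a clique in both graphs, and let `G = G₁ ∪ G₂`.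
Then `τ₀(G) = τ₀(G₁) + τ₀(G₂) + 1/(d+2) − 1/(n₁+1) − 1/(n₂+1) + 1/(n₁+n₂−d)`,
where `τ₀(Gᵢ)` is computed with respect to the vertex set `Vᵢ`. -/
theorem tau0_connected_sum {α : Type*} [Fintype α] [DecidableEq α] (d : ℕ) (hd : 1 ≤ d)
    (V₁ V₂ : Finset α) (hunion : V₁ ∪ V₂ = Finset.univ)
    (hD : (V₁ ∩ V₂).card = d + 1)
    (G₁ G₂ : SimpleGraph α)
    (hG₁ : ∀ a b : α, G₁.Adj a b → a ∈ V₁ ∧ b ∈ V₁)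
    (hG₂ : ∀ a b : α, G₂.Adj a b → a ∈ V₂ ∧ b ∈ V₂)
    (hclique₁ : G₁.IsClique (↑(V₁ ∩ V₂) : Set α))
    (hclique₂ : G₂.IsClique (↑(V₁ ∩ V₂) : Set α)) :
    tau0 (G₁ ⊔ G₂)
      = tau0 (G₁.induce (↑V₁ : Set α)) + tau0 (G₂.induce (↑V₂ : Set α))
        + 1 / ((d : ℚ) + 2) - 1 / ((V₁.card : ℚ) + 1) - 1 / ((V₂.card : ℚ) + 1)
        + 1 / ((V₁.card : ℚ) + (V₂.card : ℚ) - (d : ℚ)) := by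
  classical
  set G : SimpleGraph α := G₁ ⊔ G₂ with hGdef
  set N : ℕ := Fintype.card α with hN
  -- adjacency of G agrees with G₁ within V₁ and with G₂ within V₂
  have hadj₁ : ∀ u ∈ V₁, ∀ v ∈ V₁, (G.Adj u v ↔ G₁.Adj u v) := by
    intro u hu v hv
    constructor
    · rintro (h | h)
      · exact h
      · refine hclique₁ ?_ ?_ h.ne
        · exact_mod_cast Finset.mem_inter.2 ⟨hu, (hG₂ u v h).1⟩
        · exact_mod_cast Finset.mem_inter.2 ⟨hv, (hG₂ u v h).2⟩
    · intro h
      exact Or.inl h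
  have hadj₂ : ∀ u ∈ V₂, ∀ v ∈ V₂, (G.Adj u v ↔ G₂.Adj u v) := by
    intro u hu v hv
    constructor
    · rintro (h | h)
      · refine hclique₂ ?_ ?_ h.ne
        · exact_mod_cast Finset.mem_inter.2 ⟨(hG₁ u v h).1, hu⟩
        · exact_mod_cast Finset.mem_inter.2 ⟨(hG₁ u v h).2, hv⟩
      · exact h
    · intro h
      exact Or.inr h
  have hclG : G.IsClique (↑(V₁ ∩ V₂) : Set α) := hclique₁.mono le_sup_left
  -- pointwise decomposition of b0
  have key : ∀ W : Finset α, b0 G W =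
      b0 G₁ (W ∩ V₁) + b0 G₂ (W ∩ V₂)
      + ((if W ∩ (V₁ ∩ V₂) = ∅ then (1 : ℚ) else 0)
        - (if W ∩ V₁ = ∅ then (1 : ℚ) else 0) - (if W ∩ V₂ = ∅ then (1 : ℚ) else 0)
        + (if W ∩ Finset.univ = ∅ then (1 : ℚ) else 0)) := by
    intro W
    have hWun : (W ∩ V₁) ∪ (W ∩ V₂) = W := by
      rw [← Finset.inter_union_distrib_left, hunion, Finset.inter_univ]
    have hWD : (W ∩ V₁) ∩ (W ∩ V₂) = W ∩ (V₁ ∩ V₂) := by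
      ext x
      simp only [Finset.mem_inter]
      tauto
    have hedgeW : ∀ u v : α, u ∈ (W ∩ V₁) ∪ (W ∩ V₂) → v ∈ (W ∩ V₁) ∪ (W ∩ V₂) →
        G.Adj u v → (u ∈ W ∩ V₁ ∧ v ∈ W ∩ V₁) ∨ (u ∈ W ∩ V₂ ∧ v ∈ W ∩ V₂) := by
      intro u v hu hv h
      rw [hWun] at hu hv
      rcases h with h | h
      · exact Or.inl ⟨Finset.mem_inter.2 ⟨hu, (hG₁ u v h).1⟩,
          Finset.mem_inter.2 ⟨hv, (hG₁ u v h).2⟩⟩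
      · exact Or.inr ⟨Finset.mem_inter.2 ⟨hu, (hG₂ u v h).1⟩,
          Finset.mem_inter.2 ⟨hv, (hG₂ u v h).2⟩⟩
    have hclW : G.IsClique (↑((W ∩ V₁) ∩ (W ∩ V₂)) : Set α) := by
      refine hclG.subset ?_
      rw [hWD]
      exact_mod_cast Finset.coe_subset.2 Finset.inter_subset_right
    have hb := b0_union G (W ∩ V₁) (W ∩ V₂) hedgeW hclW
    rw [hWun] at hb
    rw [hb]
    have h1 : b0 G (W ∩ V₁) = b0 G₁ (W ∩ V₁) :=
      b0_congr G G₁ _ (fun u hu v hv =>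
        hadj₁ u (Finset.mem_inter.1 hu).2 v (Finset.mem_inter.1 hv).2)
    have h2 : b0 G (W ∩ V₂) = b0 G₂ (W ∩ V₂) :=
      b0_congr G G₂ _ (fun u hu v hv =>
        hadj₂ u (Finset.mem_inter.1 hu).2 v (Finset.mem_inter.1 hv).2)
    have h3 := ind_eq (W ∩ V₁) (W ∩ V₂)
    rw [h1, h2, h3, hWD, hWun, Finset.inter_univ]
  -- rewrite tau0 of G and split the sum
  rw [tau0_eq G]
  have hsum : ∑ W : Finset α, b0 G W / ((N.choose W.card : ℚ)) =
      (∑ W : Finset α, b0 G₁ (W ∩ V₁) / ((N.choose W.card : ℚ)))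
      + (∑ W : Finset α, b0 G₂ (W ∩ V₂) / ((N.choose W.card : ℚ)))
      + (∑ W : Finset α, (if W ∩ (V₁ ∩ V₂) = ∅ then (1 : ℚ) else 0) / ((N.choose W.card : ℚ)))
      - (∑ W : Finset α, (if W ∩ V₁ = ∅ then (1 : ℚ) else 0) / ((N.choose W.card : ℚ)))
      - (∑ W : Finset α, (if W ∩ V₂ = ∅ then (1 : ℚ) else 0) / ((N.choose W.card : ℚ)))
      + (∑ W : Finset α, (if W ∩ Finset.univ = ∅ then (1 : ℚ) else 0) / ((N.choose W.card : ℚ))) := by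
    rw [← Finset.sum_add_distrib, ← Finset.sum_add_distrib, ← Finset.sum_sub_distrib,
      ← Finset.sum_sub_distrib, ← Finset.sum_add_distrib]
    refine Finset.sum_congr rfl fun W _ => ?_
    rw [key W]
    ring
  rw [hsum]
  -- apply the reindexing lemma to each of the six sums
  have e1 := sum_inter_div V₁ (fun A => b0 G₁ A)
  have e2 := sum_inter_div V₂ (fun A => b0 G₂ A)
  have e3 := sum_inter_div (V₁ ∩ V₂) (fun A => if A = ∅ then (1 : ℚ) else 0)
  have e4 := sum_inter_div V₁ (fun A => if A = ∅ then (1 : ℚ) else 0)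
  have e5 := sum_inter_div V₂ (fun A => if A = ∅ then (1 : ℚ) else 0)
  have e6 := sum_inter_div (Finset.univ : Finset α) (fun A => if A = ∅ then (1 : ℚ) else 0)
  rw [sum_iE] at e3 e4 e5 e6
  rw [e1, e2, e3, e4, e5, e6]
  rw [tau0_induce G₁ V₁, tau0_induce G₂ V₂]
  -- final arithmetic
  have hDcast : ((V₁ ∩ V₂).card : ℚ) = (d : ℚ) + 1 := by exact_mod_cast hD
  have hcards : (V₁.card : ℚ) + (V₂.card : ℚ) - (d : ℚ) = (N : ℚ) + 1 := by
    have h := Finset.card_union_add_card_inter V₁ V₂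
    rw [hunion, hD, Finset.card_univ] at h
    have h2 : (N : ℚ) + ((d : ℚ) + 1) = (V₁.card : ℚ) + (V₂.card : ℚ) := by exact_mod_cast h
    linarith
  rw [hDcast, hcards, Finset.card_univ, ← hN]
  have hN1 : ((N : ℚ) + 1) ≠ 0 := by positivity
  have hV1 : ((V₁.card : ℚ) + 1) ≠ 0 := by positivity
  have hV2 : ((V₂.card : ℚ) + 1) ≠ 0 := by positivity
  have hd2 : ((d : ℚ) + 1 + 1) ≠ 0 := by positivity
  have hd2' : ((d : ℚ) + 2) ≠ 0 := by positivity
  set S₁ := ∑ A ∈ V₁.powerset, b0 G₁ A / ((V₁.card.choose A.card : ℚ)) with hS₁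
  set S₂ := ∑ A ∈ V₂.powerset, b0 G₂ A / ((V₂.card.choose A.card : ℚ)) with hS₂
  field_simp
  ring
end

section
/- Let d ≥ 1 and n ≥ d+2, and let G be any graph obtained from the complete graph on d+2 vertices by successively adding n−d−2 new vertices, each joined by edges precisely to the d+1 vertices of some (d+1)-clique of the graph constructed so far. Then τ₀(G) = (n−2d−4)/((d+2)(d+3)) + 1/(n+1). (Such graphs are exactly the graphs of stacked d-spheres with n vertices, so a stacked d-sphere S satisfies τ₀(S) = τ_{d−1}(S) = (n−2d−4)/((d+2)(d+3)) + 1/(n+1).) -/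
open Finset

variable {V : Type*} {G : SimpleGraph V}

/-- Walk-invariance from adjacency-invariance. -/
lemma adj_invariant_walk {β : Sort*} (f : V → β)
    (h : ∀ a b : V, G.Adj a b → f a = f b) {a b : V} (p : G.Walk a b) : f a = f b := by
  induction p with
  | nil => rfl
  | cons h' _ ih => exact (h _ _ h').trans ih

/-- Lift an adjacency-invariant map to connected components. -/
noncomputable def ccLift {β : Sort*} (f : V → β)
    (h : ∀ a b : V, G.Adj a b → f a = f b) : G.ConnectedComponent → β :=
  SimpleGraph.ConnectedComponent.lift f (fun _ _ p _ => adj_invariant_walk f h p)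

@[simp] lemma ccLift_mk {β : Sort*} (f : V → β)
    (h : ∀ a b : V, G.Adj a b → f a = f b) (v : V) :
    ccLift f h (G.connectedComponentMk v) = f v := rfl

lemma ccCount_empty : Nat.card (G.induce (∅ : Set V)).ConnectedComponent = 0 := by
  have : IsEmpty ((∅ : Set V) : Type _) := by simp
  exact Nat.card_of_isEmpty

lemma ccCount_clique {s : Set V} (hne : s.Nonempty) (h : G.IsClique s) :
    Nat.card (G.induce s).ConnectedComponent = 1 := by
  rw [Nat.card_eq_one_iff_unique]
  constructor
  · constructor
    refine SimpleGraph.ConnectedComponent.ind₂ (fun a b => ?_)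
    rw [SimpleGraph.ConnectedComponent.eq]
    rcases eq_or_ne a b with rfl | hab
    · exact SimpleGraph.Reachable.refl _
    · refine SimpleGraph.Adj.reachable ?_
      have : G.Adj a b := h a.2 b.2 (fun hh => hab (Subtype.ext hh))
      exact this
  · obtain ⟨x, hx⟩ := hne
    exact ⟨(G.induce s).connectedComponentMk ⟨x, hx⟩⟩

section insertV
variable {s : Set V} {v : V}

/-- basic inclusion map on components -/
noncomputable def ccIncl (s : Set V) (v : V) :
    (G.induce s).ConnectedComponent → (G.induce (insert v s)).ConnectedComponent :=
  ccLift (fun x => (G.induce (insert v s)).connectedComponentMk ⟨x.1, Set.mem_insert_of_mem _ x.2⟩)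
    (by
      intro a b hab
      exact SimpleGraph.ConnectedComponent.connectedComponentMk_eq_of_adj hab)

lemma ccCount_insert_isolated [Finite V] (hv : v ∉ s) (h : ∀ w ∈ s, ¬ G.Adj v w) :
    Nat.card (G.induce (insert v s)).ConnectedComponent
      = Nat.card (G.induce s).ConnectedComponent + 1 := by
  classical
  have hvmem : v ∈ insert v s := Set.mem_insert _ _
  have hadj : ∀ a b : (insert v s : Set V), (G.induce (insert v s)).Adj a b →
      (if h : a.1 ∈ s then some ((G.induce s).connectedComponentMk ⟨a.1, h⟩) else none)
      = (if h : b.1 ∈ s then some ((G.induce s).connectedComponentMk ⟨b.1, h⟩) else none) := by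
    rintro ⟨a, ha⟩ ⟨b, hb⟩ hab
    have hab' : G.Adj a b := hab
    have has : a ∈ s := by
      rcases ha with rfl | ha
      · rcases hb with rfl | hb
        · exact absurd hab' (G.irrefl)
        · exact absurd hab' (h b hb)
      · exact ha
    have hbs : b ∈ s := by
      rcases hb with rfl | hb
      · exact absurd hab'.symm (h a has)
      · exact hb
    rw [dif_pos has, dif_pos hbs]
    exact congrArg some
      (SimpleGraph.ConnectedComponent.connectedComponentMk_eq_of_adj hab')
  let ρ : (G.induce (insert v s)).ConnectedComponent → Option (G.induce s).ConnectedComponent :=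
    ccLift _ hadj
  let ψ : Option (G.induce s).ConnectedComponent → (G.induce (insert v s)).ConnectedComponent :=
    fun o => o.elim ((G.induce (insert v s)).connectedComponentMk ⟨v, hvmem⟩) (ccIncl s v)
  have e : (G.induce (insert v s)).ConnectedComponent ≃
      Option (G.induce s).ConnectedComponent := by
    refine ⟨ρ, ψ, ?_, ?_⟩
    · refine SimpleGraph.ConnectedComponent.ind (fun x => ?_)
      by_cases hx : x.1 ∈ s
      · show ψ (ρ _) = _
        have : ρ ((G.induce (insert v s)).connectedComponentMk x)
            = some ((G.induce s).connectedComponentMk ⟨x.1, hx⟩) := by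
          simp only [ρ, ccLift_mk, dif_pos hx]
        rw [this]
        show ccIncl s v _ = _
        simp only [ccIncl, ccLift_mk]
      · have hxv : x.1 = v := by
          rcases x.2 with h' | h'
          · exact h'
          · exact absurd h' hx
        show ψ (ρ _) = _
        have : ρ ((G.induce (insert v s)).connectedComponentMk x) = none := by
          simp only [ρ, ccLift_mk, dif_neg hx]
        rw [this]
        show (G.induce (insert v s)).connectedComponentMk ⟨v, hvmem⟩ = _
        congr 1
        exact Subtype.ext hxv.symm
    · rintro (_ | c)
      · show ρ ((G.induce (insert v s)).connectedComponentMk ⟨v, hvmem⟩) = none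
        simp only [ρ, ccLift_mk, dif_neg hv]
      · refine SimpleGraph.ConnectedComponent.ind (fun x => ?_) c
        show ρ (ccIncl s v _) = _
        simp only [ccIncl, ccLift_mk, ρ, dif_pos x.2]
  rw [Nat.card_congr e, Finite.card_option]

lemma ccCount_insert_clique (hv : v ∉ s) {w₀ : V} (hw₀ : w₀ ∈ s) (hadj₀ : G.Adj v w₀)
    (hcl : G.IsClique {w ∈ s | G.Adj v w}) :
    Nat.card (G.induce (insert v s)).ConnectedComponent
      = Nat.card (G.induce s).ConnectedComponent := by
  classical
  have hvmem : v ∈ insert v s := Set.mem_insert _ _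
  have key : ∀ (a b : V) (ha : a ∈ s), G.Adj v a → ∀ (hb : b ∈ s), G.Adj v b →
      (G.induce s).connectedComponentMk ⟨a, ha⟩
        = (G.induce s).connectedComponentMk ⟨b, hb⟩ := by
    intro a b ha hva hb hvb
    rcases eq_or_ne a b with rfl | hab
    · rfl
    · refine SimpleGraph.ConnectedComponent.connectedComponentMk_eq_of_adj ?_
      have : G.Adj a b := hcl ⟨ha, hva⟩ ⟨hb, hvb⟩ hab
      exact this
  have hadj : ∀ a b : (insert v s : Set V), (G.induce (insert v s)).Adj a b →
      (if h : a.1 ∈ s then (G.induce s).connectedComponentMk ⟨a.1, h⟩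
        else (G.induce s).connectedComponentMk ⟨w₀, hw₀⟩)
      = (if h : b.1 ∈ s then (G.induce s).connectedComponentMk ⟨b.1, h⟩
        else (G.induce s).connectedComponentMk ⟨w₀, hw₀⟩) := by
    rintro ⟨a, ha⟩ ⟨b, hb⟩ hab
    have hab' : G.Adj a b := hab
    rcases ha with rfl | has
    · rw [dif_neg hv]
      rcases hb with rfl | hbs
      · exact absurd hab' (G.irrefl)
      · rw [dif_pos hbs]
        exact key w₀ b hw₀ hadj₀ hbs hab'
    · rw [dif_pos has]
      rcases hb with rfl | hbs
      · rw [dif_neg hv]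
        exact key a w₀ has hab'.symm hw₀ hadj₀
      · rw [dif_pos hbs]
        exact SimpleGraph.ConnectedComponent.connectedComponentMk_eq_of_adj hab'
  let ρ : (G.induce (insert v s)).ConnectedComponent → (G.induce s).ConnectedComponent :=
    ccLift _ hadj
  have e : (G.induce (insert v s)).ConnectedComponent ≃ (G.induce s).ConnectedComponent := by
    refine ⟨ρ, ccIncl s v, ?_, ?_⟩
    · refine SimpleGraph.ConnectedComponent.ind (fun x => ?_)
      by_cases hx : x.1 ∈ s
      · show ccIncl s v (ρ _) = _
        have : ρ ((G.induce (insert v s)).connectedComponentMk x)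
            = (G.induce s).connectedComponentMk ⟨x.1, hx⟩ := by
          simp only [ρ, ccLift_mk, dif_pos hx]
        rw [this]
        show (G.induce (insert v s)).connectedComponentMk _ = _
        rfl
      · have hxv : x.1 = v := by
          rcases x.2 with h' | h'
          · exact h'
          · exact absurd h' hx
        have : ρ ((G.induce (insert v s)).connectedComponentMk x)
            = (G.induce s).connectedComponentMk ⟨w₀, hw₀⟩ := by
          simp only [ρ, ccLift_mk, dif_neg hx]
        show ccIncl s v (ρ _) = _
        rw [this]
        show (G.induce (insert v s)).connectedComponentMk
            ⟨w₀, Set.mem_insert_of_mem _ hw₀⟩ = _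
        refine SimpleGraph.ConnectedComponent.connectedComponentMk_eq_of_adj ?_
        have : G.Adj w₀ x.1 := by rw [hxv]; exact hadj₀.symm
        exact this
    · refine SimpleGraph.ConnectedComponent.ind (fun x => ?_)
      show ρ (ccIncl s v _) = _
      simp only [ccIncl, ccLift_mk, ρ, dif_pos x.2]
  rw [Nat.card_congr e]

end insertV



lemma sum_powerset_card_eq {n : ℕ} (s : Finset (Fin n)) (g : ℕ → ℚ) :
    ∑ W ∈ s.powerset, g W.card = ∑ j ∈ range (s.card + 1), (s.card.choose j : ℚ) * g j := by
  rw [Finset.sum_powerset]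
  refine Finset.sum_congr rfl (fun j hj => ?_)
  rw [Finset.sum_congr rfl (g := fun W => g j)
      (fun W hW => by rw [(Finset.mem_powersetCard.1 hW).2]),
    Finset.sum_const, Finset.card_powersetCard, nsmul_eq_mul]

lemma choose_ratio {n a b j : ℕ} (hab : a + b = n) (hj : j ≤ b) :
    (b.choose j : ℚ) / (n.choose j) = ((n - j).choose a : ℚ) / (n.choose a) := by
  have haj : a + j ≤ n := by omega
  have h1 : n.choose (a + j) * (a + j).choose j = n.choose j * (n - j).choose a := by
    have := Nat.choose_mul (n := n) (k := a + j) (s := j) (by omega)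
    simpa using this
  have h2 : n.choose (a + j) * (a + j).choose a = n.choose a * b.choose j := by
    have := Nat.choose_mul (n := n) (k := a + j) (s := a) (by omega)
    have hna : n - a = b := by omega
    simpa [hna] using this
  have hsym : (a + j).choose j = (a + j).choose a := by
    rw [Nat.choose_symm_add, Nat.add_comm]
  have key : b.choose j * n.choose a = (n - j).choose a * n.choose j := by
    rw [hsym] at h1
    rw [h2] at h1
    rw [Nat.mul_comm (b.choose j), h1, Nat.mul_comm]
  have hnj : (0:ℚ) < n.choose j := by
    exact_mod_cast Nat.choose_pos (by omega)
  have hna : (0:ℚ) < n.choose a := by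
    exact_mod_cast Nat.choose_pos (by omega)
  rw [div_eq_div_iff hnj.ne' hna.ne']
  exact_mod_cast key

lemma sum_choose_ratio {n a b : ℕ} (hab : a + b = n) :
    ∑ j ∈ range (b + 1), (b.choose j : ℚ) / (n.choose j) = ((n : ℚ) + 1) / ((a : ℚ) + 1) := by
  have step1 : ∑ j ∈ range (b + 1), (b.choose j : ℚ) / (n.choose j)
      = ∑ j ∈ range (b + 1), ((n - j).choose a : ℚ) / (n.choose a) := by
    refine Finset.sum_congr rfl (fun j hj => ?_)
    exact choose_ratio hab (by simpa [Nat.lt_succ_iff] using hj)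
  rw [step1]
  have hsumN : ∑ j ∈ range (b + 1), (n - j).choose a = (n + 1).choose (a + 1) := by
    have hreflect := Finset.sum_range_reflect (fun i => (a + i).choose a) (b + 1)
    have h1 : ∑ j ∈ range (b + 1), (n - j).choose a
        = ∑ j ∈ range (b + 1), (a + (b - j)).choose a := by
      refine Finset.sum_congr rfl (fun j hj => ?_)
      have : j ≤ b := by simpa [Nat.lt_succ_iff] using hj
      congr 1
      omega
    rw [h1]
    have h2 : ∑ j ∈ range (b + 1), (a + (b - j)).choose a
        = ∑ j ∈ range (b + 1), (a + j).choose a := by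
      simpa using hreflect
    rw [h2]
    have h3 : ∑ i ∈ Icc a n, i.choose a = ∑ i ∈ range (n + 1 - a), (a + i).choose a := by
      rw [← Finset.Ico_add_one_right_eq_Icc, Finset.sum_Ico_eq_sum_range]
    have hrange : n + 1 - a = b + 1 := by omega
    rw [hrange] at h3
    rw [← h3, Nat.sum_Icc_choose]
  have : ∑ j ∈ range (b + 1), ((n - j).choose a : ℚ) / (n.choose a)
      = (((n + 1).choose (a + 1) : ℚ)) / (n.choose a) := by
    rw [← Finset.sum_div]
    congr 1
    exact_mod_cast congrArg (Nat.cast : ℕ → ℚ) hsumN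
  rw [this]
  have hkey : (n + 1) * n.choose a = (n + 1).choose (a + 1) * (a + 1) :=
    Nat.add_one_mul_choose_eq n a
  have hna : (0:ℚ) < n.choose a := by
    exact_mod_cast Nat.choose_pos (by omega)
  rw [div_eq_div_iff hna.ne' (by positivity)]
  have hkeyQ : ((n:ℚ)+1) * (n.choose a) = ((n+1).choose (a+1) : ℚ) * ((a:ℚ)+1) := by
    exact_mod_cast hkey
  linarith [hkeyQ]

lemma sum_inv_choose (n : ℕ) :
    ∑ W : Finset (Fin n), (1:ℚ) / (n.choose W.card) = (n:ℚ) + 1 := by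
  have h := sum_powerset_card_eq (univ : Finset (Fin n)) (fun m => (1:ℚ)/(n.choose m))
  rw [Finset.powerset_univ] at h
  rw [h, Finset.card_univ, Fintype.card_fin]
  have : ∀ j ∈ range (n + 1), (n.choose j : ℚ) * (1 / (n.choose j)) = 1 := by
    intro j hj
    have : (0:ℚ) < n.choose j := by
      exact_mod_cast Nat.choose_pos (by simpa [Nat.lt_succ_iff] using hj)
    field_simp
  rw [Finset.sum_congr rfl this, Finset.sum_const, Finset.card_range, nsmul_eq_mul, mul_one]
  push_cast; ring

lemma sum_hit {n : ℕ} (A : Finset (Fin n)) :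
    ∑ W : Finset (Fin n), (if (A ∩ W).Nonempty then (1:ℚ) else 0) / (n.choose W.card)
      = ((n:ℚ) + 1) - ((n:ℚ) + 1) / ((A.card : ℚ) + 1) := by
  classical
  have hsplit : ∀ W : Finset (Fin n),
      (if (A ∩ W).Nonempty then (1:ℚ) else 0) / (n.choose W.card)
        = 1 / (n.choose W.card) - (if A ∩ W = ∅ then (1:ℚ) / (n.choose W.card) else 0) := by
    intro W
    by_cases h : (A ∩ W).Nonempty
    · rw [if_pos h, if_neg (by simpa [← Finset.not_nonempty_iff_eq_empty] using h)]
      ring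
    · rw [if_neg h, if_pos (Finset.not_nonempty_iff_eq_empty.1 h)]
      simp
  rw [Finset.sum_congr rfl (fun W _ => hsplit W), Finset.sum_sub_distrib, sum_inv_choose]
  have hfilter : (univ.filter (fun W : Finset (Fin n) => A ∩ W = ∅)) = Aᶜ.powerset := by
    ext W
    simp only [Finset.mem_filter, Finset.mem_univ, true_and, Finset.mem_powerset]
    constructor
    · intro h x hxW
      rw [Finset.mem_compl]
      intro hxA
      have : x ∈ A ∩ W := Finset.mem_inter.2 ⟨hxA, hxW⟩
      rw [h] at this
      exact absurd this (Finset.notMem_empty x)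
    · intro h
      rw [Finset.eq_empty_iff_forall_notMem]
      intro x hx
      rcases Finset.mem_inter.1 hx with ⟨hxA, hxW⟩
      exact absurd hxA (Finset.mem_compl.1 (h hxW))
  have hAcard : A.card ≤ n := by
    simpa using Finset.card_le_univ A
  have h2 : ∑ W : Finset (Fin n), (if A ∩ W = ∅ then (1:ℚ) / (n.choose W.card) else 0)
      = ((n:ℚ) + 1) / ((A.card : ℚ) + 1) := by
    rw [← Finset.sum_filter, hfilter]
    have := sum_powerset_card_eq Aᶜ (fun m => (1:ℚ)/(n.choose m))
    rw [this]
    have hc : Aᶜ.card = n - A.card := by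
      rw [Finset.card_compl, Fintype.card_fin]
    rw [hc]
    have hterm : ∀ j ∈ range (n - A.card + 1),
        ((n - A.card).choose j : ℚ) * (1 / (n.choose j))
          = ((n - A.card).choose j : ℚ) / (n.choose j) := fun j _ => by ring
    rw [Finset.sum_congr rfl hterm, sum_choose_ratio (a := A.card) (b := n - A.card) (by omega)]
  rw [h2]

section stackedDefs

open Finset

variable {n : ℕ}

open scoped Classical in
/-- earlier neighbors of `t` -/
noncomputable def Sv (G : SimpleGraph (Fin n)) (t : Fin n) : Finset (Fin n) :=
  univ.filter (fun j => j < t ∧ G.Adj j t)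

/-- `t` together with its earlier neighbors -/
noncomputable def Kv (G : SimpleGraph (Fin n)) (t : Fin n) : Finset (Fin n) :=
  insert t (Sv G t)

lemma mem_Sv {G : SimpleGraph (Fin n)} {t j : Fin n} :
    j ∈ Sv G t ↔ j < t ∧ G.Adj j t := by
  classical
  simp [Sv]

lemma mem_Kv {G : SimpleGraph (Fin n)} {t j : Fin n} :
    j ∈ Kv G t ↔ j = t ∨ (j < t ∧ G.Adj j t) := by
  classical
  simp [Kv, mem_Sv]

lemma not_mem_Sv_self {G : SimpleGraph (Fin n)} {t : Fin n} : t ∉ Sv G t := by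
  rw [mem_Sv]
  rintro ⟨h, -⟩
  exact lt_irrefl _ h

lemma coe_Sv {G : SimpleGraph (Fin n)} {t : Fin n} :
    (↑(Sv G t) : Set (Fin n)) = {j : Fin n | j < t ∧ G.Adj j t} := by
  ext j
  simp [mem_Sv]

lemma card_filter_le_val (n k : ℕ) :
    (univ.filter (fun t : Fin n => k ≤ (t : ℕ))).card = n - k := by
  classical
  rw [Finset.card_filter]
  rw [Fin.sum_univ_eq_sum_range (fun i => if k ≤ i then 1 else 0)]
  rw [← Finset.card_filter]
  have h : (range n).filter (fun i => k ≤ i) = Ico k n := by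
    ext i
    simp only [Finset.mem_filter, Finset.mem_range, Finset.mem_Ico]
    tauto
  rw [h, Nat.card_Ico]

lemma card_filter_lt_val {n k : ℕ} (h : k ≤ n) :
    (univ.filter (fun t : Fin n => (t : ℕ) < k)).card = k := by
  classical
  have h1 : (univ.filter (fun t : Fin n => (t : ℕ) < k))
      = (univ.filter (fun t : Fin n => k ≤ (t : ℕ)))ᶜ := by
    ext t
    simp [not_le]
  rw [h1, Finset.card_compl, card_filter_le_val, Fintype.card_fin]
  omega

lemma card_filter_succ {n m : ℕ} (hm : m < n) (Q R : Fin n → Prop)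
    [DecidablePred Q] [DecidablePred R] :
    (univ.filter (fun t : Fin n => Q t ∧ (t : ℕ) < m + 1 ∧ R t)).card
      = (univ.filter (fun t : Fin n => Q t ∧ (t : ℕ) < m ∧ R t)).card
        + (if Q ⟨m, hm⟩ ∧ R ⟨m, hm⟩ then 1 else 0) := by
  classical
  set v : Fin n := ⟨m, hm⟩ with hv
  have hsplit : (univ.filter (fun t : Fin n => Q t ∧ (t : ℕ) < m + 1 ∧ R t))
      = (univ.filter (fun t : Fin n => Q t ∧ (t : ℕ) < m ∧ R t))
        ∪ (univ.filter (fun t : Fin n => t = v ∧ (Q t ∧ R t))) := by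
    rw [← Finset.filter_or]
    refine Finset.filter_congr (fun t _ => ?_)
    constructor
    · rintro ⟨hq, hlt, hr⟩
      rcases Nat.lt_succ_iff_lt_or_eq.1 hlt with h | h
      · exact Or.inl ⟨hq, h, hr⟩
      · exact Or.inr ⟨Fin.ext h, hq, hr⟩
    · rintro (⟨hq, hlt, hr⟩ | ⟨rfl, hq, hr⟩)
      · exact ⟨hq, by omega, hr⟩
      · exact ⟨hq, by simp [hv], hr⟩
  have hdisj : Disjoint (univ.filter (fun t : Fin n => Q t ∧ (t : ℕ) < m ∧ R t))
      (univ.filter (fun t : Fin n => t = v ∧ (Q t ∧ R t))) := by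
    rw [Finset.disjoint_left]
    intro t ht1 ht2
    rw [Finset.mem_filter] at ht1 ht2
    rcases ht1.2 with ⟨-, hlt, -⟩
    rcases ht2.2 with ⟨rfl, -⟩
    simp [hv] at hlt
  have hlast : (univ.filter (fun t : Fin n => t = v ∧ (Q t ∧ R t)))
      = if Q v ∧ R v then {v} else ∅ := by
    by_cases h : Q v ∧ R v
    · rw [if_pos h]
      ext t
      simp only [Finset.mem_filter, Finset.mem_univ, true_and, Finset.mem_singleton]
      constructor
      · rintro ⟨rfl, -⟩; rfl
      · rintro rfl; exact ⟨rfl, h⟩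
    · rw [if_neg h]
      ext t
      simp only [Finset.mem_filter, Finset.mem_univ, true_and, Finset.notMem_empty,
        iff_false]
      rintro ⟨rfl, hh⟩
      exact h hh
  rw [hsplit, Finset.card_union_of_disjoint hdisj, hlast]
  by_cases h : Q v ∧ R v
  · rw [if_pos h, if_pos h, Finset.card_singleton]
  · rw [if_neg h, if_neg h, Finset.card_empty]

end stackedDefs

section stackedCore

open Finset

variable {d n : ℕ} {G : SimpleGraph (Fin n)}

lemma Sv_base (hbase : ∀ u v : Fin n, (u : ℕ) < d + 2 → (v : ℕ) < d + 2 → (G.Adj u v ↔ u ≠ v))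
    {t : Fin n} (ht : (t : ℕ) = d + 1) :
    Sv G t = univ.filter (fun j : Fin n => (j : ℕ) < d + 1) := by
  classical
  ext j
  rw [mem_Sv, Finset.mem_filter]
  simp only [Finset.mem_univ, true_and]
  constructor
  · rintro ⟨hlt, -⟩
    have := Fin.lt_def.1 hlt
    omega
  · intro hj
    have hjt : j < t := by
      rw [Fin.lt_def, ht]
      exact hj
    refine ⟨hjt, (hbase j t (by omega) (by omega)).2 ?_⟩
    intro he
    rw [he] at hj
    omega

lemma Sv_card (hn : d + 2 ≤ n)
    (hbase : ∀ u v : Fin n, (u : ℕ) < d + 2 → (v : ℕ) < d + 2 → (G.Adj u v ↔ u ≠ v))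
    (hstack : ∀ i : Fin n, d + 2 ≤ (i : ℕ) →
      ({j : Fin n | j < i ∧ G.Adj j i}).ncard = d + 1 ∧
        G.IsClique {j : Fin n | j < i ∧ G.Adj j i})
    {t : Fin n} (ht : d + 1 ≤ (t : ℕ)) : (Sv G t).card = d + 1 := by
  rcases Nat.lt_or_ge (t : ℕ) (d + 2) with h | h
  · have ht' : (t : ℕ) = d + 1 := by omega
    rw [Sv_base hbase ht', card_filter_lt_val (by omega)]
  · have h1 := (hstack t h).1
    rw [← coe_Sv, Set.ncard_coe_finset] at h1
    exact h1

lemma Kv_card (hn : d + 2 ≤ n)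
    (hbase : ∀ u v : Fin n, (u : ℕ) < d + 2 → (v : ℕ) < d + 2 → (G.Adj u v ↔ u ≠ v))
    (hstack : ∀ i : Fin n, d + 2 ≤ (i : ℕ) →
      ({j : Fin n | j < i ∧ G.Adj j i}).ncard = d + 1 ∧
        G.IsClique {j : Fin n | j < i ∧ G.Adj j i})
    {t : Fin n} (ht : d + 1 ≤ (t : ℕ)) : (Kv G t).card = d + 2 := by
  classical
  rw [Kv, Finset.card_insert_of_notMem not_mem_Sv_self, Sv_card hn hbase hstack ht]

lemma base_clique (hbase : ∀ u v : Fin n, (u : ℕ) < d + 2 → (v : ℕ) < d + 2 → (G.Adj u v ↔ u ≠ v))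
    {W : Finset (Fin n)} (hW : ∀ x ∈ W, (x : ℕ) < d + 2) : G.IsClique (↑W : Set (Fin n)) := by
  intro a ha b hb hab
  exact (hbase a b (hW a ha) (hW b hb)).2 hab

theorem comp_count (hd : 1 ≤ d) (hn : d + 2 ≤ n)
    (hbase : ∀ u v : Fin n, (u : ℕ) < d + 2 → (v : ℕ) < d + 2 → (G.Adj u v ↔ u ≠ v))
    (hstack : ∀ i : Fin n, d + 2 ≤ (i : ℕ) →
      ({j : Fin n | j < i ∧ G.Adj j i}).ncard = d + 1 ∧
        G.IsClique {j : Fin n | j < i ∧ G.Adj j i}) :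
    ∀ m : ℕ, d + 2 ≤ m → m ≤ n → ∀ W : Finset (Fin n), (∀ x ∈ W, (x : ℕ) < m) →
      Nat.card (G.induce (↑W : Set (Fin n))).ConnectedComponent
          + (univ.filter (fun t : Fin n =>
              d + 2 ≤ (t : ℕ) ∧ (t : ℕ) < m ∧ (Sv G t ∩ W).Nonempty)).card
        = (univ.filter (fun t : Fin n =>
              d + 1 ≤ (t : ℕ) ∧ (t : ℕ) < m ∧ (Kv G t ∩ W).Nonempty)).card := by
  classical
  intro m hm
  induction m, hm using Nat.le_induction with
  | base =>
    intro hmn W hW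
    have hS : (univ.filter (fun t : Fin n =>
        d + 2 ≤ (t : ℕ) ∧ (t : ℕ) < d + 2 ∧ (Sv G t ∩ W).Nonempty)) = ∅ := by
      refine Finset.filter_false_of_mem (fun t _ => ?_)
      rintro ⟨h1, h2, -⟩
      omega
    rw [hS, Finset.card_empty]
    set t₀ : Fin n := ⟨d + 1, by omega⟩ with ht₀
    have ht₀v : (t₀ : ℕ) = d + 1 := rfl
    by_cases hWne : W.Nonempty
    · have hc1 : Nat.card (G.induce (↑W : Set (Fin n))).ConnectedComponent = 1 := by
        refine ccCount_clique ?_ (base_clique hbase hW)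
        exact Finset.coe_nonempty.2 hWne
      rw [hc1]
      have hK : (univ.filter (fun t : Fin n =>
          d + 1 ≤ (t : ℕ) ∧ (t : ℕ) < d + 2 ∧ (Kv G t ∩ W).Nonempty)) = {t₀} := by
        ext t
        simp only [Finset.mem_filter, Finset.mem_univ, true_and, Finset.mem_singleton]
        constructor
        · rintro ⟨h1, h2, -⟩
          exact Fin.ext (by omega)
        · rintro rfl
          refine ⟨by omega, by omega, ?_⟩
          obtain ⟨x, hx⟩ := hWne
          refine ⟨x, Finset.mem_inter.2 ⟨?_, hx⟩⟩
          rw [mem_Kv]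
          by_cases hxt : x = t₀
          · exact Or.inl hxt
          · refine Or.inr ⟨?_, ?_⟩
            · rw [Fin.lt_def]
              have h1 := hW x hx
              have h2 : (x : ℕ) ≠ d + 1 := fun hh => hxt (Fin.ext (by rw [ht₀v]; exact hh))
              omega
            · exact (hbase x t₀ (hW x hx) (by omega)).2 hxt
      rw [hK, Finset.card_singleton]
    · have hWe : W = ∅ := Finset.not_nonempty_iff_eq_empty.1 hWne
      subst hWe
      have hc0 : Nat.card (G.induce (↑(∅ : Finset (Fin n)) : Set (Fin n))).ConnectedComponent
          = 0 := by
        rw [Finset.coe_empty]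
        exact ccCount_empty
      rw [hc0]
      have hK : (univ.filter (fun t : Fin n =>
          d + 1 ≤ (t : ℕ) ∧ (t : ℕ) < d + 2 ∧ (Kv G t ∩ (∅ : Finset (Fin n))).Nonempty)) = ∅ := by
        refine Finset.filter_false_of_mem (fun t _ => ?_)
        rintro ⟨-, -, h⟩
        simp at h
      rw [hK, Finset.card_empty]
  | succ m hm ih =>
    intro hmn W hW
    have hmn' : m ≤ n := by omega
    have hmlt : m < n := by omega
    set v : Fin n := ⟨m, hmlt⟩ with hv
    have hvval : (v : ℕ) = m := rfl
    have hKcard := card_filter_succ hmlt (fun t : Fin n => d + 1 ≤ (t : ℕ))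
      (fun t : Fin n => (Kv G t ∩ W).Nonempty)
    have hScard := card_filter_succ hmlt (fun t : Fin n => d + 2 ≤ (t : ℕ))
      (fun t : Fin n => (Sv G t ∩ W).Nonempty)
    rw [hKcard, hScard, ← hv]
    by_cases hvW : v ∈ W
    · -- main case : new vertex belongs to W
      set W' : Finset (Fin n) := W.erase v with hW'def
      have hWins : W = insert v W' := (Finset.insert_erase hvW).symm
      have hvW' : v ∉ W' := Finset.notMem_erase _ _
      have hW' : ∀ x ∈ W', (x : ℕ) < m := by
        intro x hx
        have h1 := hW x (Finset.mem_of_mem_erase hx)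
        have h2 : x ≠ v := Finset.ne_of_mem_erase hx
        have h3 : (x : ℕ) ≠ m := fun hh => h2 (Fin.ext (by rw [hvval]; exact hh))
        omega
      -- the filters below `m` only see `W'`
      have hKW : ∀ t : Fin n, (t : ℕ) < m → (Kv G t ∩ W = Kv G t ∩ W') := by
        intro t htm
        have hvK : v ∉ Kv G t := by
          rw [mem_Kv]
          rintro (rfl | ⟨hlt, -⟩)
          · simp [hv] at htm
          · have := Fin.lt_def.1 hlt
            rw [hvval] at this
            omega
        rw [hWins, Finset.inter_insert_of_notMem hvK]
      have hSW : ∀ t : Fin n, (t : ℕ) < m → (Sv G t ∩ W = Sv G t ∩ W') := by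
        intro t htm
        have hvS : v ∉ Sv G t := by
          rw [mem_Sv]
          rintro ⟨hlt, -⟩
          have := Fin.lt_def.1 hlt
          rw [hvval] at this
          omega
        rw [hWins, Finset.inter_insert_of_notMem hvS]
      have hKfilter : (univ.filter (fun t : Fin n =>
          d + 1 ≤ (t : ℕ) ∧ (t : ℕ) < m ∧ (Kv G t ∩ W).Nonempty))
          = (univ.filter (fun t : Fin n =>
          d + 1 ≤ (t : ℕ) ∧ (t : ℕ) < m ∧ (Kv G t ∩ W').Nonempty)) := by
        refine Finset.filter_congr (fun t _ => ?_)
        constructor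
        · rintro ⟨h1, h2, h3⟩
          exact ⟨h1, h2, by rwa [← hKW t h2]⟩
        · rintro ⟨h1, h2, h3⟩
          exact ⟨h1, h2, by rwa [hKW t h2]⟩
      have hSfilter : (univ.filter (fun t : Fin n =>
          d + 2 ≤ (t : ℕ) ∧ (t : ℕ) < m ∧ (Sv G t ∩ W).Nonempty))
          = (univ.filter (fun t : Fin n =>
          d + 2 ≤ (t : ℕ) ∧ (t : ℕ) < m ∧ (Sv G t ∩ W').Nonempty)) := by
        refine Finset.filter_congr (fun t _ => ?_)
        constructor
        · rintro ⟨h1, h2, h3⟩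
          exact ⟨h1, h2, by rwa [← hSW t h2]⟩
        · rintro ⟨h1, h2, h3⟩
          exact ⟨h1, h2, by rwa [hSW t h2]⟩
      rw [hKfilter, hSfilter]
      have hKv_ite : (if d + 1 ≤ (v : ℕ) ∧ (Kv G v ∩ W).Nonempty then 1 else 0) = 1 := by
        rw [if_pos]
        refine ⟨by omega, ⟨v, Finset.mem_inter.2 ⟨?_, hvW⟩⟩⟩
        rw [mem_Kv]
        exact Or.inl rfl
      have hSv_inter : Sv G v ∩ W = Sv G v ∩ W' := by
        rw [hWins, Finset.inter_insert_of_notMem not_mem_Sv_self]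
      have hvd2 : d + 2 ≤ (v : ℕ) := by omega
      -- neighbors of v inside W' are exactly Sv G v ∩ W'
      have hnbr : ∀ w : Fin n, w ∈ W' → G.Adj v w → w ∈ Sv G v ∩ W' := by
        intro w hw hadj
        refine Finset.mem_inter.2 ⟨?_, hw⟩
        rw [mem_Sv]
        have : (w : ℕ) < m := hW' w hw
        refine ⟨Fin.lt_def.2 ?_, hadj.symm⟩
        rw [hvval]
        exact this
      by_cases hSne : (Sv G v ∩ W').Nonempty
      · -- v attaches to a nonempty clique: component count is unchanged
        have hcc : Nat.card (G.induce (↑W : Set (Fin n))).ConnectedComponent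
            = Nat.card (G.induce (↑W' : Set (Fin n))).ConnectedComponent := by
          rw [hWins, Finset.coe_insert]
          obtain ⟨w₀, hw₀⟩ := hSne
          rcases Finset.mem_inter.1 hw₀ with ⟨hw₀S, hw₀W⟩
          have hadj₀ : G.Adj v w₀ := (mem_Sv.1 hw₀S).2.symm
          refine ccCount_insert_clique (by exact_mod_cast hvW') (Finset.mem_coe.2 hw₀W) hadj₀ ?_
          have hsub : {w ∈ (↑W' : Set (Fin n)) | G.Adj v w} ⊆ {j : Fin n | j < v ∧ G.Adj j v} := by
            rintro w ⟨hw, hadj⟩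
            have hmem := hnbr w (Finset.mem_coe.1 hw) hadj
            exact mem_Sv.1 (Finset.mem_inter.1 hmem).1
          exact ((hstack v hvd2).2).subset hsub
        have hSv_ite : (if d + 2 ≤ (v : ℕ) ∧ (Sv G v ∩ W).Nonempty then 1 else 0) = 1 := by
          rw [if_pos ⟨hvd2, by rwa [hSv_inter]⟩]
        rw [hKv_ite, hSv_ite, hcc]
        have := ih hmn' W' hW'
        omega
      · -- v is isolated in W : component count increases by one
        have hcc : Nat.card (G.induce (↑W : Set (Fin n))).ConnectedComponent
            = Nat.card (G.induce (↑W' : Set (Fin n))).ConnectedComponent + 1 := by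
          rw [hWins, Finset.coe_insert]
          refine ccCount_insert_isolated (by exact_mod_cast hvW') ?_
          intro w hw hadj
          exact hSne ⟨w, hnbr w (Finset.mem_coe.1 hw) hadj⟩
        have hSv_ite : (if d + 2 ≤ (v : ℕ) ∧ (Sv G v ∩ W).Nonempty then 1 else 0) = 0 := by
          rw [if_neg]
          rintro ⟨-, hne⟩
          rw [hSv_inter] at hne
          exact hSne hne
        rw [hKv_ite, hSv_ite, hcc]
        have := ih hmn' W' hW'
        omega
    · -- v ∉ W : everything is unchanged
      have hW'' : ∀ x ∈ W, (x : ℕ) < m := by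
        intro x hx
        have h1 := hW x hx
        have h2 : (x : ℕ) ≠ m := by
          intro hh
          exact hvW (by rwa [show x = v from Fin.ext (by rw [hvval]; exact hh)] at hx)
        omega
      have hinter : Kv G v ∩ W = Sv G v ∩ W := by
        rw [Kv, Finset.insert_inter_of_notMem hvW]
      have hite : (if d + 1 ≤ (v : ℕ) ∧ (Kv G v ∩ W).Nonempty then 1 else 0)
          = (if d + 2 ≤ (v : ℕ) ∧ (Sv G v ∩ W).Nonempty then 1 else 0) := by
        have h1 : d + 1 ≤ (v : ℕ) := by omega
        have h2 : d + 2 ≤ (v : ℕ) := by omega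
        rw [hinter]
        by_cases h : (Sv G v ∩ W).Nonempty
        · rw [if_pos ⟨h1, h⟩, if_pos ⟨h2, h⟩]
        · rw [if_neg (fun hh => h hh.2), if_neg (fun hh => h hh.2)]
      rw [hite]
      have := ih hmn' W hW''
      omega

end stackedCore

/-- let `G` (the graph of a stacked `d`-sphere) be a graph on `n ≥ d+2` vertices
obtained from the complete graph on the first `d+2` vertices by successively adding the
remaining `n−d−2` vertices, each joined by edges precisely to the `d+1` vertices of some
`(d+1)`-clique of the graph constructed so far (i.e. each vertex `i ≥ d+2` has exactly `d+1`
earlier neighbors and these form a clique). Then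
`τ₀(G) = (n−2d−4)/((d+2)(d+3)) + 1/(n+1)`. -/
theorem tau0_stacked_sphere (d n : ℕ) (hd : 1 ≤ d) (hn : d + 2 ≤ n)
    (G : SimpleGraph (Fin n))
    (hbase : ∀ u v : Fin n, (u : ℕ) < d + 2 → (v : ℕ) < d + 2 → (G.Adj u v ↔ u ≠ v))
    (hstack : ∀ i : Fin n, d + 2 ≤ (i : ℕ) →
      ({j : Fin n | j < i ∧ G.Adj j i}).ncard = d + 1 ∧
        G.IsClique {j : Fin n | j < i ∧ G.Adj j i}) :
    tau0 G = ((n : ℚ) - 2 * (d : ℚ) - 4) / (((d : ℚ) + 2) * ((d : ℚ) + 3))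
      + 1 / ((n : ℚ) + 1) := by
  classical
  set T1 : Finset (Fin n) := univ.filter (fun t : Fin n => d + 1 ≤ (t : ℕ)) with hT1
  set T2 : Finset (Fin n) := univ.filter (fun t : Fin n => d + 2 ≤ (t : ℕ)) with hT2
  have key : ∀ W : Finset (Fin n),
      (if W.Nonempty then
          (Nat.card (G.induce (↑W : Set (Fin n))).ConnectedComponent : ℚ) - 1 else 0)
        = (∑ t ∈ T1, if (Kv G t ∩ W).Nonempty then (1 : ℚ) else 0)
          - (∑ t ∈ T2, if (Sv G t ∩ W).Nonempty then (1 : ℚ) else 0)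
          - (if W.Nonempty then (1 : ℚ) else 0) := by
    intro W
    have hcomp := comp_count hd hn hbase hstack n (by omega) le_rfl W (fun x _ => x.2)
    have hK' : univ.filter (fun t : Fin n =>
        d + 1 ≤ (t : ℕ) ∧ (t : ℕ) < n ∧ (Kv G t ∩ W).Nonempty)
        = T1.filter (fun t => (Kv G t ∩ W).Nonempty) := by
      rw [hT1, Finset.filter_filter]
      refine Finset.filter_congr (fun t _ => ?_)
      have h2 := t.2
      tauto
    have hS' : univ.filter (fun t : Fin n =>
        d + 2 ≤ (t : ℕ) ∧ (t : ℕ) < n ∧ (Sv G t ∩ W).Nonempty)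
        = T2.filter (fun t => (Sv G t ∩ W).Nonempty) := by
      rw [hT2, Finset.filter_filter]
      refine Finset.filter_congr (fun t _ => ?_)
      have h2 := t.2
      tauto
    rw [hK', hS'] at hcomp
    rw [Finset.sum_boole, Finset.sum_boole]
    by_cases hne : W.Nonempty
    · rw [if_pos hne, if_pos hne]
      have hQ := congrArg (Nat.cast : ℕ → ℚ) hcomp
      push_cast at hQ
      linarith
    · rw [if_neg hne, if_neg hne]
      have hW0 : W = ∅ := Finset.not_nonempty_iff_eq_empty.1 hne
      subst hW0
      have h1 : T1.filter (fun t => (Kv G t ∩ (∅ : Finset (Fin n))).Nonempty) = ∅ := by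
        refine Finset.filter_false_of_mem (fun t _ => ?_)
        simp
      have h2 : T2.filter (fun t => (Sv G t ∩ (∅ : Finset (Fin n))).Nonempty) = ∅ := by
        refine Finset.filter_false_of_mem (fun t _ => ?_)
        simp
      rw [h1, h2]
      simp
  rw [tau0]
  simp only [Fintype.card_fin]
  rw [Finset.sum_congr rfl (fun W _ => by rw [key W])]
  have hsplit : ∑ W : Finset (Fin n),
      ((∑ t ∈ T1, if (Kv G t ∩ W).Nonempty then (1 : ℚ) else 0)
        - (∑ t ∈ T2, if (Sv G t ∩ W).Nonempty then (1 : ℚ) else 0)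
        - (if W.Nonempty then (1 : ℚ) else 0)) / (n.choose W.card : ℚ)
      = (∑ t ∈ T1, ∑ W : Finset (Fin n),
            (if (Kv G t ∩ W).Nonempty then (1 : ℚ) else 0) / (n.choose W.card : ℚ))
        - (∑ t ∈ T2, ∑ W : Finset (Fin n),
            (if (Sv G t ∩ W).Nonempty then (1 : ℚ) else 0) / (n.choose W.card : ℚ))
        - ∑ W : Finset (Fin n),
            (if W.Nonempty then (1 : ℚ) else 0) / (n.choose W.card : ℚ) := by
    rw [← Finset.sum_comm, ← Finset.sum_comm (t := T2)]
    rw [← Finset.sum_sub_distrib, ← Finset.sum_sub_distrib]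
    refine Finset.sum_congr rfl (fun W _ => ?_)
    rw [sub_div, sub_div, Finset.sum_div, Finset.sum_div]
  rw [hsplit]
  have hKval : ∀ t ∈ T1, ∑ W : Finset (Fin n),
      (if (Kv G t ∩ W).Nonempty then (1 : ℚ) else 0) / (n.choose W.card : ℚ)
      = ((n : ℚ) + 1) - ((n : ℚ) + 1) / ((d : ℚ) + 3) := by
    intro t ht
    rw [sum_hit (Kv G t), Kv_card hn hbase hstack (by simpa [hT1] using ht)]
    push_cast
    ring
  have hSval : ∀ t ∈ T2, ∑ W : Finset (Fin n),
      (if (Sv G t ∩ W).Nonempty then (1 : ℚ) else 0) / (n.choose W.card : ℚ)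
      = ((n : ℚ) + 1) - ((n : ℚ) + 1) / ((d : ℚ) + 2) := by
    intro t ht
    have ht' : d + 2 ≤ (t : ℕ) := by simpa [hT2] using ht
    rw [sum_hit (Sv G t), Sv_card hn hbase hstack (by omega)]
    push_cast
    ring
  have hNeval : ∑ W : Finset (Fin n),
      (if W.Nonempty then (1 : ℚ) else 0) / (n.choose W.card : ℚ) = (n : ℚ) := by
    have hpt : ∀ W : Finset (Fin n), (if W.Nonempty then (1 : ℚ) else 0)
        = (if ((univ : Finset (Fin n)) ∩ W).Nonempty then (1 : ℚ) else 0) := by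
      intro W
      rw [Finset.univ_inter]
    rw [Finset.sum_congr rfl (fun W _ => by rw [hpt W]), sum_hit (univ : Finset (Fin n)),
      Finset.card_univ, Fintype.card_fin]
    have hnpos : ((n : ℚ) + 1) ≠ 0 := by positivity
    field_simp
    ring
  rw [Finset.sum_congr rfl hKval, Finset.sum_congr rfl hSval, hNeval,
    Finset.sum_const, Finset.sum_const]
  have hcT1 : T1.card = n - (d + 1) := card_filter_le_val n (d + 1)
  have hcT2 : T2.card = n - (d + 2) := card_filter_le_val n (d + 2)
  rw [hcT1, hcT2, nsmul_eq_mul, nsmul_eq_mul]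
  have hc1 : ((n - (d + 1) : ℕ) : ℚ) = (n : ℚ) - (d : ℚ) - 1 := by
    have : d + 1 ≤ n := by omega
    push_cast [this]
    ring
  have hc2 : ((n - (d + 2) : ℕ) : ℚ) = (n : ℚ) - (d : ℚ) - 2 := by
    push_cast [hn]
    ring
  rw [hc1, hc2]
  have h1 : ((n : ℚ) + 1) ≠ 0 := by positivity
  have h2 : ((d : ℚ) + 2) ≠ 0 := by positivity
  have h3 : ((d : ℚ) + 3) ≠ 0 := by positivity
  field_simp
  ring
end

section
/- For every m ≥ 3, the cycle graph C_m on m vertices satisfies τ₀(C_m) = (m−2)(m−3)/(6(m+1)). -/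
open Finset

open SimpleGraph
open scoped Fin.NatCast Fin.IntCast Fin.CommRing

private lemma step_adj (n : ℕ) (v : Fin (n+2)) : (cycleGraph (n+2)).Adj v (v + 1) := by
  rw [cycleGraph_adj]; right; ring

private lemma reach_add (n : ℕ) (W : Finset (Fin (n+2))) (v : Fin (n+2)) :
    ∀ (t : ℕ) (h : ∀ t' ≤ t, v + ((t' : ℕ) : Fin (n+2)) ∈ W),
    ((cycleGraph (n+2)).induce (↑W : Set (Fin (n+2)))).Reachable
      ⟨v, by simpa using h 0 (Nat.zero_le _)⟩ ⟨v + ((t : ℕ) : Fin (n+2)), by simpa using h t le_rfl⟩ := by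
  intro t
  induction t with
  | zero =>
    intro h
    have he : (⟨v, by simpa using h 0 (Nat.zero_le _)⟩ : (↑W : Set (Fin (n+2))))
        = ⟨v + ((0 : ℕ) : Fin (n+2)), by simpa using h 0 le_rfl⟩ := Subtype.ext (by push_cast; ring)
    exact he ▸ Reachable.refl _
  | succ t ih =>
    intro h
    have h' : ∀ t' ≤ t, v + ((t' : ℕ) : Fin (n+2)) ∈ W := fun t' ht' => h t' (le_trans ht' (Nat.le_succ t))
    refine (ih h').trans ?_
    have hadj : ((cycleGraph (n+2)).induce (↑W : Set (Fin (n+2)))).Adj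
        ⟨v + ((t : ℕ) : Fin (n+2)), by simpa using h t (Nat.le_succ t)⟩
        ⟨v + (((t+1) : ℕ) : Fin (n+2)), by simpa using h (t+1) le_rfl⟩ := by
      simp only [SimpleGraph.induce, comap_adj, Function.Embedding.coe_subtype]
      have heq : v + (((t+1) : ℕ) : Fin (n+2)) = (v + ((t : ℕ) : Fin (n+2))) + 1 := by push_cast; ring
      rw [heq]
      exact step_adj n _
    exact hadj.reachable

private lemma comp_count_s10 (n : ℕ) (W : Finset (Fin (n+2))) (hne : W.Nonempty) (hW : W ≠ univ) :
    Nat.card ((cycleGraph (n+2)).induce (↑W : Set (Fin (n+2)))).ConnectedComponent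
      = (W.filter (fun i => i + 1 ∉ W)).card := by
  classical
  set G := (cycleGraph (n+2)).induce (↑W : Set (Fin (n+2))) with hG
  set E := W.filter (fun i => i + 1 ∉ W) with hE
  have hmemE : ∀ i, i ∈ E ↔ i ∈ W ∧ i + 1 ∉ W := by intro i; simp [hE]
  have φmem : ∀ i : {x // x ∈ E}, (i.1 : Fin (n+2)) ∈ (↑W : Set (Fin (n+2))) := by
    intro i; simpa using ((hmemE i.1).1 i.2).1
  set φ : {x // x ∈ E} → G.ConnectedComponent :=
    fun i => G.connectedComponentMk ⟨i.1, φmem i⟩ with hφ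
  have hsurj : Function.Surjective φ := by
    intro c
    obtain ⟨⟨v, hv⟩, rfl⟩ := c.exists_rep
    have hvW : v ∈ W := by simpa using hv
    obtain ⟨u, huW⟩ : ∃ u, u ∉ W := by
      by_contra hco
      push_neg at hco
      exact hW (Finset.eq_univ_iff_forall.2 hco)
    have huv : u ≠ v := fun h => huW (h ▸ hvW)
    have hex : ∃ t : ℕ, v + (((t+1) : ℕ) : Fin (n+2)) ∉ W := by
      refine ⟨(u - v).val - 1, ?_⟩
      have h1 : 1 ≤ (u - v).val := by
        rcases Nat.eq_zero_or_pos (u - v).val with h | h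
        · exfalso; apply huv
          have h0 : u - v = 0 := Fin.ext (by simpa using h)
          exact sub_eq_zero.1 h0
        · exact h
      have h2 : ((u - v).val - 1) + 1 = (u - v).val := by omega
      rw [h2, Fin.cast_val_eq_self]
      simpa using huW
    set t₀ := Nat.find hex with ht₀
    have hspec := Nat.find_spec hex
    have hseg : ∀ t' ≤ t₀, v + ((t' : ℕ) : Fin (n+2)) ∈ W := by
      intro t' ht'
      match t' with
      | 0 => simpa using hvW
      | (t''+1) =>
        have := Nat.find_min hex (show t'' < t₀ by omega)
        simpa using this
    have hiW : v + ((t₀ : ℕ) : Fin (n+2)) ∈ W := hseg t₀ le_rfl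
    have hiE : v + ((t₀ : ℕ) : Fin (n+2)) ∈ E := by
      rw [hmemE]
      refine ⟨hiW, ?_⟩
      have h3 : v + ((t₀ : ℕ) : Fin (n+2)) + 1 = v + (((t₀+1) : ℕ) : Fin (n+2)) := by push_cast; ring
      rw [h3]; exact hspec
    exact ⟨⟨_, hiE⟩, (ConnectedComponent.sound ((reach_add n W v t₀ hseg).symm))⟩
  have hinj : Function.Injective φ := by
    rintro ⟨i, hi⟩ ⟨j, hj⟩ hij
    have hiw := (hmemE i).1 hi
    have hjw := (hmemE j).1 hj
    have hreach : G.Reachable ⟨i, by simpa using hiw.1⟩ ⟨j, by simpa using hjw.1⟩ :=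
      ConnectedComponent.exact hij
    set A : Set (Fin (n+2)) := {x | ∃ s : ℕ, s < n + 2 ∧ i = x + ((s : ℕ) : Fin (n+2)) ∧
        ∀ t ≤ s, x + ((t : ℕ) : Fin (n+2)) ∈ W} with hA
    have hiA : i ∈ A := by
      refine ⟨0, by omega, by push_cast; ring, ?_⟩
      intro t ht
      have ht0 : t = 0 := by omega
      subst ht0
      simpa using hiw.1
    have hclosed : ∀ x y : Fin (n+2), y ∈ W → (cycleGraph (n+2)).Adj x y → x ∈ A → y ∈ A := by
      rintro x y hyW hadj' ⟨s, hs, hxs, hseg⟩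
      rw [cycleGraph_adj] at hadj'
      rcases hadj' with hc | hc
      · -- x - y = 1, so x = y + 1
        have hxy : x = y + 1 := by
          have h4 := sub_eq_iff_eq_add.1 hc; rw [h4]; ring
        rcases Nat.lt_or_ge (s+1) (n+2) with hlt | hge
        · refine ⟨s+1, hlt, ?_, ?_⟩
          · rw [hxs, hxy]; push_cast; ring
          · intro t ht
            match t with
            | 0 => simpa using hyW
            | (t'+1) =>
              have h5 : y + (((t'+1) : ℕ) : Fin (n+2)) = x + ((t' : ℕ) : Fin (n+2)) := by
                rw [hxy]; push_cast; ring
              rw [h5]; exact hseg t' (by omega)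
        · have hsn : s + 1 = n + 2 := by omega
          have hyi : y = i := by
            rw [hxs, hxy]
            have h6 : (((s+1) : ℕ) : Fin (n+2)) = 0 := by rw [hsn]; simp
            push_cast at h6 ⊢
            rw [add_assoc, add_comm (1 : Fin (n+2)), h6, add_zero]
          rw [hyi]; exact hiA
      · -- y - x = 1, so y = x + 1
        have hxy : y = x + 1 := by
          have h4 := sub_eq_iff_eq_add.1 hc; rw [h4]; ring
        match s, hxs, hseg with
        | 0, hxs, hseg =>
          exfalso
          have hxi : x = i := by rw [hxs]; push_cast; ring
          exact hiw.2 (by rw [← hxi, ← hxy]; exact hyW)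
        | (s'+1), hxs, hseg =>
          refine ⟨s', by omega, ?_, ?_⟩
          · rw [hxs, hxy]; push_cast; ring
          · intro t ht
            have h5 : y + ((t : ℕ) : Fin (n+2)) = x + (((t+1) : ℕ) : Fin (n+2)) := by
              rw [hxy]; push_cast; ring
            rw [h5]; exact hseg (t+1) (by omega)
    have hwalk : ∀ (a b : (↑W : Set (Fin (n+2)))), G.Walk a b → a.1 ∈ A → b.1 ∈ A := by
      intro a b w
      induction w with
      | nil => exact id
      | @cons _ c _ h p ih =>
        exact fun ha => ih (hclosed _ _ (by simpa using c.2) h ha)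
    have hjA : j ∈ A := hreach.elim fun w => hwalk _ _ w hiA
    obtain ⟨s, hs, hjs, hsegj⟩ := hjA
    match s, hjs, hsegj with
    | 0, hjs, hsegj =>
      apply Subtype.ext
      show i = j
      rw [hjs]; push_cast; ring
    | (s'+1), hjs, hsegj =>
      exfalso
      have h7 : j + (((1:ℕ)) : Fin (n+2)) ∈ W := hsegj 1 (by omega)
      push_cast at h7
      exact hjw.2 h7
  have hbij : Function.Bijective φ := ⟨hinj, hsurj⟩
  rw [← Nat.card_eq_of_bijective φ hbij, Nat.card_eq_fintype_card, Fintype.card_coe]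

private lemma comp_count_univ (n : ℕ) :
    Nat.card ((cycleGraph (n+2)).induce (↑(univ : Finset (Fin (n+2))) : Set (Fin (n+2)))).ConnectedComponent = 1 := by
  set G := (cycleGraph (n+2)).induce (↑(univ : Finset (Fin (n+2))) : Set (Fin (n+2))) with hG
  have hpre : ∀ a b : (↑(univ : Finset (Fin (n+2))) : Set (Fin (n+2))), G.Reachable a b := by
    rintro ⟨a, ha⟩ ⟨b, hb⟩
    have hr := reach_add n univ a (b - a).val (fun t' _ => Finset.mem_univ _)
    have heq : (⟨a + (((b - a).val : ℕ) : Fin (n+2)), by simp⟩ :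
        (↑(univ : Finset (Fin (n+2))) : Set (Fin (n+2)))) = ⟨b, hb⟩ := by
      apply Subtype.ext
      show a + (((b - a).val : ℕ) : Fin (n+2)) = b
      rw [Fin.cast_val_eq_self]; ring
    exact heq ▸ hr
  have hsub : Subsingleton G.ConnectedComponent :=
    ⟨fun c d => ConnectedComponent.ind₂ (fun a b => ConnectedComponent.sound (hpre a b)) c d⟩
  have hnonempty : Nonempty G.ConnectedComponent :=
    ⟨G.connectedComponentMk ⟨0, by simp⟩⟩
  exact Nat.card_eq_one_iff_unique.2 ⟨hsub, hnonempty⟩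

private lemma sum_powerset_card {α : Type*} [DecidableEq α] (s : Finset α) (g : ℕ → ℚ) :
    ∑ U ∈ s.powerset, g U.card = ∑ k ∈ Finset.range (s.card + 1), (s.card.choose k : ℚ) * g k := by
  rw [Finset.sum_powerset]
  refine Finset.sum_congr rfl fun k _ => ?_
  rw [Finset.sum_powersetCard]
  simp [nsmul_eq_mul]

private lemma aux1 (N : ℕ) : ∑ k ∈ Finset.range N, ((k:ℚ)+1) = (N:ℚ)*((N:ℚ)+1)/2 := by
  induction N with
  | zero => simp
  | succ N ih => rw [Finset.sum_range_succ, ih]; push_cast; ring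

private lemma aux2 (N : ℕ) :
    ∑ k ∈ Finset.range N, ((k:ℚ)+1)*((N:ℚ)-(k:ℚ)) = (N:ℚ)*((N:ℚ)+1)*((N:ℚ)+2)/6 := by
  induction N with
  | zero => simp
  | succ N ih =>
    have hsplit : ∀ k : ℕ, ((k:ℚ)+1)*(((N+1:ℕ):ℚ)-(k:ℚ))
        = ((k:ℚ)+1)*((N:ℚ)-(k:ℚ)) + ((k:ℚ)+1) := by intro k; push_cast; ring
    calc ∑ k ∈ Finset.range (N+1), ((k:ℚ)+1)*(((N+1:ℕ):ℚ)-(k:ℚ))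
        = ∑ k ∈ Finset.range (N+1), (((k:ℚ)+1)*((N:ℚ)-(k:ℚ)) + ((k:ℚ)+1)) :=
          Finset.sum_congr rfl fun k _ => hsplit k
      _ = (∑ k ∈ Finset.range (N+1), ((k:ℚ)+1)*((N:ℚ)-(k:ℚ)))
            + ∑ k ∈ Finset.range (N+1), ((k:ℚ)+1) := Finset.sum_add_distrib
      _ = ((∑ k ∈ Finset.range N, ((k:ℚ)+1)*((N:ℚ)-(k:ℚ))) + ((N:ℚ)+1)*((N:ℚ)-(N:ℚ)))
            + ((N+1:ℕ):ℚ)*(((N+1:ℕ):ℚ)+1)/2 := by rw [Finset.sum_range_succ, aux1]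
      _ = ((N+1:ℕ):ℚ)*(((N+1:ℕ):ℚ)+1)*(((N+1:ℕ):ℚ)+2)/6 := by rw [ih]; push_cast; ring

private lemma choose_ratio_s10 (n k : ℕ) (hk : k ≤ n) :
    ((n.choose k : ℚ)) / (((n+2).choose (k+1)) : ℚ)
      = ((k:ℚ)+1) * ((n:ℚ)+1-(k:ℚ)) / (((n:ℚ)+2) * ((n:ℚ)+1)) := by
  obtain ⟨r, rfl⟩ := Nat.exists_eq_add_of_le hk
  have h1 := Nat.add_one_mul_choose_eq (k+r) r
  have h2 := Nat.add_one_mul_choose_eq (k+r+1) k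
  have sym1 : (k+r).choose k = (k+r).choose r := Nat.choose_symm_add
  have sym2 : (k+r+1).choose (r+1) = (k+r+1).choose k := by
    have he : k + r + 1 = k + (r+1) := by ring
    rw [he]; exact (Nat.choose_symm_add).symm
  have key : (k+r+2) * ((k+r+1) * (k+r).choose k) = ((k+r+2).choose (k+1)) * ((k+1)*(r+1)) := by
    calc (k+r+2) * ((k+r+1) * (k+r).choose k)
        = (k+r+2) * ((k+r+1) * (k+r).choose r) := by rw [sym1]
      _ = (k+r+2) * ((k+r+1).choose (r+1) * (r+1)) := by rw [← h1]
      _ = (k+r+2) * ((k+r+1).choose k * (r+1)) := by rw [sym2]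
      _ = ((k+r+1+1) * (k+r+1).choose k) * (r+1) := by ring
      _ = ((k+r+1+1).choose (k+1) * (k+1)) * (r+1) := by rw [h2]
      _ = ((k+r+2).choose (k+1)) * ((k+1)*(r+1)) := by ring_nf
  have keyQ : ((k:ℚ)+(r:ℚ)+2) * (((k:ℚ)+(r:ℚ)+1) * ((k+r).choose k : ℚ))
      = (((k+r+2).choose (k+1) : ℚ)) * (((k:ℚ)+1)*((r:ℚ)+1)) := by exact_mod_cast key
  have hc1 : (((k+r+2).choose (k+1) : ℚ)) ≠ 0 := by
    have : 0 < (k+r+2).choose (k+1) := Nat.choose_pos (by omega)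
    exact_mod_cast this.ne'
  have hc2 : ((k:ℚ)+(r:ℚ)+2) * ((k:ℚ)+(r:ℚ)+1) ≠ 0 := by positivity
  rw [div_eq_div_iff hc1 (by positivity)]
  push_cast
  linear_combination keyQ

private lemma fin_succ_ne (n : ℕ) (i : Fin (n+2)) : i + 1 ≠ i := by
  intro h
  simp [Fin.ext_iff, Fin.val_add] at h

private lemma cycInnerSum (n : ℕ) (i : Fin (n+2)) :
    ∑ W : Finset (Fin (n+2)), (if i ∈ W ∧ i + 1 ∉ W then (1:ℚ) else 0) / ((n+2).choose W.card : ℚ)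
      = ((n:ℚ)+3)/6 := by
  classical
  have hne : i + 1 ≠ i := fin_succ_ne n i
  have step1 : ∀ W : Finset (Fin (n+2)),
      (if i ∈ W ∧ i + 1 ∉ W then (1:ℚ) else 0) / ((n+2).choose W.card : ℚ)
        = (if i ∈ W ∧ i + 1 ∉ W then (1:ℚ) / ((n+2).choose W.card : ℚ) else 0) := by
    intro W; split_ifs with h <;> simp
  rw [Finset.sum_congr rfl fun W _ => step1 W, ← Finset.sum_filter]
  have step2 : ∑ W ∈ univ.filter (fun W : Finset (Fin (n+2)) => i ∈ W ∧ i + 1 ∉ W),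
      (1:ℚ) / ((n+2).choose W.card : ℚ)
      = ∑ U ∈ (univ \ {i, i+1} : Finset (Fin (n+2))).powerset,
          (1:ℚ) / ((n+2).choose (U.card + 1) : ℚ) := by
    refine Finset.sum_nbij' (fun W => W.erase i) (fun U => insert i U) ?_ ?_ ?_ ?_ ?_
    · intro W hW
      simp only [Finset.mem_filter, Finset.mem_univ, true_and] at hW
      rw [Finset.mem_powerset]
      intro x hx
      simp only [Finset.mem_erase] at hx
      simp only [Finset.mem_sdiff, Finset.mem_univ, true_and, Finset.mem_insert,
        Finset.mem_singleton]
      push_neg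
      refine ⟨hx.1, ?_⟩
      intro hxe
      exact hW.2 (hxe ▸ hx.2)
    · intro U hU
      rw [Finset.mem_powerset] at hU
      simp only [Finset.mem_filter, Finset.mem_univ, true_and]
      constructor
      · exact Finset.mem_insert_self i U
      · intro hmem
        rcases Finset.mem_insert.1 hmem with h | h
        · exact hne h
        · have := hU h
          simp at this
    · intro W hW
      simp only [Finset.mem_filter, Finset.mem_univ, true_and] at hW
      exact Finset.insert_erase hW.1
    · intro U hU
      rw [Finset.mem_powerset] at hU
      apply Finset.erase_insert
      intro hiU
      have := hU hiU
      simp at this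
    · intro W hW
      simp only [Finset.mem_filter, Finset.mem_univ, true_and] at hW
      have h1 : 1 ≤ W.card := Finset.card_pos.2 ⟨i, hW.1⟩
      rw [Finset.card_erase_of_mem hW.1, Nat.sub_add_cancel h1]
  rw [step2]
  have hcards : (univ \ {i, i+1} : Finset (Fin (n+2))).card = n := by
    rw [Finset.card_sdiff_of_subset (Finset.subset_univ _), Finset.card_univ, Fintype.card_fin,
      Finset.card_pair (Ne.symm hne)]
    omega
  rw [sum_powerset_card (univ \ {i, i+1} : Finset (Fin (n+2))) (fun k => (1:ℚ) / ((n+2).choose (k+1) : ℚ)), hcards]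
  have step3 : ∀ k ∈ Finset.range (n+1),
      (n.choose k : ℚ) * ((1:ℚ) / ((n+2).choose (k+1) : ℚ))
        = ((k:ℚ)+1) * ((n:ℚ)+1-(k:ℚ)) / (((n:ℚ)+2) * ((n:ℚ)+1)) := by
    intro k hk
    rw [Finset.mem_range] at hk
    rw [mul_one_div, choose_ratio_s10 n k (by omega)]
  rw [Finset.sum_congr rfl step3]
  have step4 : ∑ k ∈ Finset.range (n+1), ((k:ℚ)+1) * ((n:ℚ)+1-(k:ℚ)) / (((n:ℚ)+2) * ((n:ℚ)+1))
      = (∑ k ∈ Finset.range (n+1), ((k:ℚ)+1) * (((n+1:ℕ):ℚ)-(k:ℚ))) / (((n:ℚ)+2) * ((n:ℚ)+1)) := by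
    rw [Finset.sum_div]
    refine Finset.sum_congr rfl fun k _ => ?_
    push_cast; ring
  rw [step4, aux2]
  have h1 : ((n:ℚ)+2) ≠ 0 := by positivity
  have h2 : ((n:ℚ)+1) ≠ 0 := by positivity
  field_simp
  push_cast
  ring

/-- for `m ≥ 3`, the cycle graph `C_m` on `m` vertices satisfies
`τ₀(C_m) = (m−2)(m−3)/(6(m+1))`. -/
theorem tau0_cycle (m : ℕ) (hm : 3 ≤ m) :
    tau0 (SimpleGraph.cycleGraph m)
      = ((m : ℚ) - 2) * ((m : ℚ) - 3) / (6 * ((m : ℚ) + 1)) := by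
  classical
  obtain ⟨n, rfl⟩ : ∃ n, m = n + 2 := ⟨m - 2, by omega⟩
  unfold tau0
  simp only [Fintype.card_fin]
  have hpoint : ∀ W : Finset (Fin (n+2)),
      (if W.Nonempty
          then (Nat.card ((cycleGraph (n+2)).induce (↑W : Set (Fin (n+2)))).ConnectedComponent : ℚ) - 1
          else 0) / ((n+2).choose W.card : ℚ)
        = ((W.filter (fun i => i + 1 ∉ W)).card : ℚ) / ((n+2).choose W.card : ℚ)
          - (if W.Nonempty then (1:ℚ) else 0) / ((n+2).choose W.card : ℚ)
          + (if W = univ then (1:ℚ) else 0) := by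
    intro W
    by_cases h1 : W.Nonempty
    · by_cases h2 : W = univ
      · subst h2
        rw [comp_count_univ n]
        have hEu : ((univ : Finset (Fin (n+2))).filter
            (fun i => i + 1 ∉ (univ : Finset (Fin (n+2))))).card = 0 := by simp
        rw [hEu]
        simp [Finset.card_univ]
      · rw [comp_count_s10 n W h1 h2, if_pos h1, if_pos h1, if_neg h2, sub_div, add_zero]
    · rw [Finset.not_nonempty_iff_eq_empty] at h1
      subst h1
      have hne : (∅ : Finset (Fin (n+2))) ≠ univ := by
        intro h
        have : (0 : Fin (n+2)) ∈ (∅ : Finset (Fin (n+2))) := h ▸ Finset.mem_univ 0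
        simp at this
      simp [hne]
  rw [Finset.sum_congr rfl fun W _ => hpoint W]
  rw [Finset.sum_add_distrib, Finset.sum_sub_distrib]
  -- third sum
  have hsum3 : ∑ W : Finset (Fin (n+2)), (if W = univ then (1:ℚ) else 0) = 1 := by
    rw [Finset.sum_ite_eq' Finset.univ (univ : Finset (Fin (n+2))) (fun _ => (1:ℚ))]
    simp
  -- second sum
  have hsum2 : ∑ W : Finset (Fin (n+2)),
      (if W.Nonempty then (1:ℚ) else 0) / ((n+2).choose W.card : ℚ) = (n:ℚ)+2 := by
    have hp : ∀ W : Finset (Fin (n+2)),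
        (if W.Nonempty then (1:ℚ) else 0) / ((n+2).choose W.card : ℚ)
          = (fun k => if k = 0 then (0:ℚ) else 1 / ((n+2).choose k : ℚ)) W.card := by
      intro W
      by_cases h : W.Nonempty
      · have : W.card ≠ 0 := by
          rw [Ne, Finset.card_eq_zero]
          exact h.ne_empty
        simp only [if_pos h, if_neg this]
      · rw [Finset.not_nonempty_iff_eq_empty] at h
        subst h
        simp
    rw [Finset.sum_congr rfl fun W _ => hp W, ← Finset.powerset_univ,
      sum_powerset_card (univ : Finset (Fin (n+2)))
        (fun k => if k = 0 then (0:ℚ) else 1 / ((n+2).choose k : ℚ)),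
      Finset.card_univ, Fintype.card_fin]
    have hterm : ∀ k ∈ Finset.range (n+2+1),
        ((n+2).choose k : ℚ) * (if k = 0 then (0:ℚ) else 1 / ((n+2).choose k : ℚ))
          = if k = 0 then (0:ℚ) else 1 := by
      intro k hk
      rw [Finset.mem_range] at hk
      by_cases h : k = 0
      · simp [h]
      · rw [if_neg h, if_neg h]
        have hpos : 0 < (n+2).choose k := Nat.choose_pos (by omega)
        have : ((n+2).choose k : ℚ) ≠ 0 := by exact_mod_cast hpos.ne'
        field_simp
    rw [Finset.sum_congr rfl hterm]
    have : ∀ k ∈ Finset.range (n+2+1), (if k = 0 then (0:ℚ) else 1) = 1 - (if k = 0 then (1:ℚ) else 0) := by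
      intro k _; split_ifs <;> ring
    rw [Finset.sum_congr rfl this, Finset.sum_sub_distrib, Finset.sum_const,
      Finset.sum_ite_eq' (Finset.range (n+2+1)) 0 (fun _ => (1:ℚ))]
    simp
  -- first sum
  have hsum1 : ∑ W : Finset (Fin (n+2)),
      ((W.filter (fun i => i + 1 ∉ W)).card : ℚ) / ((n+2).choose W.card : ℚ)
        = ((n:ℚ)+2) * (((n:ℚ)+3)/6) := by
    have hcard : ∀ W : Finset (Fin (n+2)),
        ((W.filter (fun i => i + 1 ∉ W)).card : ℚ)
          = ∑ i : Fin (n+2), (if i ∈ W ∧ i + 1 ∉ W then (1:ℚ) else 0) := by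
      intro W
      have hfe : W.filter (fun i => i + 1 ∉ W) = univ.filter (fun i => i ∈ W ∧ i + 1 ∉ W) := by
        ext x; simp
      rw [hfe, Finset.card_filter]
      push_cast
      exact Finset.sum_congr rfl fun i _ => by split_ifs <;> simp
    have swap : ∑ W : Finset (Fin (n+2)),
        ((W.filter (fun i => i + 1 ∉ W)).card : ℚ) / ((n+2).choose W.card : ℚ)
        = ∑ i : Fin (n+2), ∑ W : Finset (Fin (n+2)),
            (if i ∈ W ∧ i + 1 ∉ W then (1:ℚ) else 0) / ((n+2).choose W.card : ℚ) := by
      rw [← Finset.sum_comm]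
      refine Finset.sum_congr rfl fun W _ => ?_
      rw [hcard W, Finset.sum_div]
    rw [swap, Finset.sum_congr rfl fun i _ => cycInnerSum n i, Finset.sum_const,
      Finset.card_univ, Fintype.card_fin, nsmul_eq_mul]
    push_cast
    ring
  rw [hsum1, hsum2, hsum3]
  have h7 : ((n:ℚ)+2+1) ≠ 0 := by positivity
  push_cast
  field_simp
  ring
end
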